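/- arXiv:1612.03375 — 8 statements merged into one kernel-verified Lean document; each statement's English description precedes it below -/
import Mathlib

section
/- There exist absolute constants 0 < c₁ ≤ c₂ such that for all integers L ≥ 1 and M ≥ L+1, c₁·L²/M ≤ log( binom(M+L+1, L+1)/binom(M, L+1) ) ≤ c₂·L²/M. -/
open Finset Real Nat

private lemma choose_le_two_pow' (n k : ℕ) (h : k ≤ n) : n.choose k ≤ 2 ^ n := by
  calc n.choose k ≤ ∑ m ∈ range (n+1), n.choose m :=
        Finset.single_le_sum (f := fun m => n.choose m) (fun i _ => Nat.zero_le _)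
          (Finset.mem_range.2 (Nat.lt_succ_of_le h))
    _ = 2 ^ n := Nat.sum_range_choose n

private lemma cast_choose_prod (n k : ℕ) (h : k ≤ n) :
    (n.choose k : ℝ) = (∏ j ∈ range k, ((n:ℝ) - j)) / k ! := by
  have h1 : (n.descFactorial k : ℝ) = ∏ j ∈ range k, ((n:ℝ) - j) := by
    rw [Nat.descFactorial_eq_prod_range, Nat.cast_prod]
    refine Finset.prod_congr rfl fun j hj => ?_
    have : j ≤ n := le_of_lt (lt_of_lt_of_le (Finset.mem_range.1 hj) h)
    push_cast [Nat.cast_sub this]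
    ring
  have h2 : (n.descFactorial k : ℝ) = (k ! : ℝ) * n.choose k := by
    rw [Nat.descFactorial_eq_factorial_mul_choose]; push_cast; ring
  have hk : (k ! : ℝ) ≠ 0 := by positivity
  rw [eq_div_iff hk, ← h1, h2]; ring

set_option maxHeartbeats 1000000 in
/-- There exist absolute constants `0 < c₁ ≤ c₂` such that for all integers
`L ≥ 1` and `M ≥ L+1`,
`c₁·L²/M ≤ log( binom(M+L+1,L+1)/binom(M,L+1) ) ≤ c₂·L²/M`. -/
theorem stmt1 : ∃ c₁ c₂ : ℝ, 0 < c₁ ∧ c₁ ≤ c₂ ∧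
    ∀ L M : ℕ, 1 ≤ L → L + 1 ≤ M →
      c₁ * (L : ℝ) ^ 2 / M
          ≤ Real.log (((M + L + 1).choose (L + 1) : ℝ) / (M.choose (L + 1) : ℝ)) ∧
      Real.log (((M + L + 1).choose (L + 1) : ℝ) / (M.choose (L + 1) : ℝ))
          ≤ c₂ * (L : ℝ) ^ 2 / M := by
  refine ⟨1/2, 11, by norm_num, by norm_num, fun L M hL hM => ?_⟩
  set k := L + 1 with hkdef
  have hkM : k ≤ M := hM
  have hL1 : (1:ℝ) ≤ L := by exact_mod_cast hL
  have hMR : ((k:ℝ)) ≤ M := by exact_mod_cast hkM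
  have hkR : (1:ℝ) ≤ k := by exact_mod_cast Nat.one_le_iff_ne_zero.2 (Nat.succ_ne_zero L)
  have hM0 : (0:ℝ) < M := lt_of_lt_of_le (by linarith) hMR
  -- the ratio as a product
  have hMk : M + L + 1 = M + k := by omega
  have e1 : (((M + L + 1).choose k : ℝ)) = (∏ j ∈ range k, ((M:ℝ) + k - j)) / k ! := by
    rw [hMk, cast_choose_prod (M + k) k (by omega)]
    push_cast; ring_nf
  have e2 : ((M.choose k : ℝ)) = (∏ j ∈ range k, ((M:ℝ) - j)) / k ! := by
    exact cast_choose_prod M k hkM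
  have hden_pos : ∀ j ∈ range k, (0:ℝ) < (M:ℝ) - j := by
    intro j hj
    have hj' : j < k := Finset.mem_range.1 hj
    have : (j:ℝ) < k := by exact_mod_cast hj'
    linarith
  have hnum_pos : ∀ j ∈ range k, (0:ℝ) < (M:ℝ) + k - j := by
    intro j hj
    have := hden_pos j hj; linarith
  have hfact : (0:ℝ) < k ! := by positivity
  have hprod : (((M + L + 1).choose k : ℝ)) / (M.choose k : ℝ)
      = ∏ j ∈ range k, ((M:ℝ) + k - j) / ((M:ℝ) - j) := by
    rw [e1, e2, div_div_div_comm, div_self hfact.ne', div_one, ← Finset.prod_div_distrib]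
  have hlog : Real.log (((M + L + 1).choose k : ℝ) / (M.choose k : ℝ))
      = ∑ j ∈ range k, Real.log (((M:ℝ) + k - j) / ((M:ℝ) - j)) := by
    rw [hprod]
    exact Real.log_prod fun j hj =>
      ne_of_gt (div_pos (hnum_pos j hj) (hden_pos j hj))
  constructor
  · -- lower bound
    rw [hlog]
    have key : ∀ j ∈ range k, (k:ℝ) / (2 * M) ≤ Real.log (((M:ℝ) + k - j) / ((M:ℝ) - j)) := by
      intro j hj
      have hd := hden_pos j hj
      have hbase : ((M:ℝ) + k) / M ≤ ((M:ℝ) + k - j) / ((M:ℝ) - j) := by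
        rw [div_le_div_iff₀ hM0 hd]
        have hj0 : (0:ℝ) ≤ j := Nat.cast_nonneg j
        nlinarith
      have hbase_pos : (0:ℝ) < ((M:ℝ) + k) / M := by positivity
      have h1 : 1 - (((M:ℝ) + k) / M)⁻¹ ≤ Real.log (((M:ℝ) + k) / M) :=
        Real.one_sub_inv_le_log_of_pos hbase_pos
      have h2 : Real.log (((M:ℝ) + k) / M) ≤ Real.log (((M:ℝ) + k - j) / ((M:ℝ) - j)) :=
        Real.log_le_log hbase_pos hbase
      have h3 : (k:ℝ) / (2 * M) ≤ 1 - (((M:ℝ) + k) / M)⁻¹ := by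
        have hMk0 : (0:ℝ) < (M:ℝ) + k := by linarith
        have e : 1 - (M:ℝ)/((M:ℝ)+k) = (k:ℝ)/((M:ℝ)+k) := by field_simp; ring
        rw [inv_div, e]
        exact div_le_div_of_nonneg_left (by linarith) hMk0 (by linarith)
      linarith
    have hLk : (L:ℝ) ≤ k := by push_cast [hkdef]; linarith
    calc 1/2 * (L:ℝ)^2 / M = ((L:ℝ)^2 / 2) / M := by ring
      _ ≤ ((k:ℝ) * k / 2) / M := by
          apply div_le_div_of_nonneg_right ?_ hM0.le |>.trans_eq rfl
          nlinarith
      _ = k * ((k:ℝ) / (2 * M)) := by ring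
      _ = ∑ _j ∈ range k, (k:ℝ) / (2 * M) := by
          rw [Finset.sum_const, Finset.card_range, nsmul_eq_mul]
      _ ≤ _ := Finset.sum_le_sum key
  · -- upper bound
    by_cases hcase : 2 * k ≤ M
    · -- M large: termwise bound
      rw [hlog]
      have h2kR : 2 * (k:ℝ) ≤ M := by exact_mod_cast hcase
      have hML : (0:ℝ) < (M:ℝ) - L := by push_cast [hkdef] at hMR ⊢; linarith
      have key : ∀ j ∈ range k,
          Real.log (((M:ℝ) + k - j) / ((M:ℝ) - j)) ≤ 2 * (k:ℝ) / M := by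
        intro j hj
        have hd := hden_pos j hj
        have hjL : (j:ℝ) ≤ L := by
          have : j < k := Finset.mem_range.1 hj
          have : j ≤ L := by omega
          exact_mod_cast this
        have hpos : (0:ℝ) < ((M:ℝ) + k - j) / ((M:ℝ) - j) :=
          div_pos (hnum_pos j hj) hd
        have h1 : Real.log (((M:ℝ) + k - j) / ((M:ℝ) - j))
            ≤ ((M:ℝ) + k - j) / ((M:ℝ) - j) - 1 := Real.log_le_sub_one_of_pos hpos
        have h2 : ((M:ℝ) + k - j) / ((M:ℝ) - j) - 1 = (k:ℝ) / ((M:ℝ) - j) := by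
          field_simp; ring
        have h3 : (k:ℝ) / ((M:ℝ) - j) ≤ (k:ℝ) / ((M:ℝ) - L) := by
          apply div_le_div_of_nonneg_left (by linarith) hML
          linarith
        have h4 : (k:ℝ) / ((M:ℝ) - L) ≤ 2 * (k:ℝ) / M := by
          rw [div_le_div_iff₀ hML hM0]
          have : (L:ℝ) + 1 = k := by push_cast [hkdef]; ring
          nlinarith
        linarith
      calc ∑ j ∈ range k, Real.log (((M:ℝ) + k - j) / ((M:ℝ) - j))
          ≤ ∑ _j ∈ range k, 2 * (k:ℝ) / M := Finset.sum_le_sum key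
        _ = k * (2 * (k:ℝ) / M) := by
            rw [Finset.sum_const, Finset.card_range, nsmul_eq_mul]
        _ = ((2:ℝ) * k * k) / M := by ring
        _ ≤ (11 * (L:ℝ)^2) / M := by
            have hkL : (k:ℝ) ≤ 2 * L := by push_cast [hkdef]; linarith
            apply div_le_div_of_nonneg_right ?_ hM0.le |>.trans_eq rfl
            nlinarith
        _ = 11 * (L:ℝ)^2 / M := by ring
    · -- M small: crude bound via 2^(M+k)
      push_neg at hcase
      have hM3L : (M:ℝ) ≤ 2 * L + 1 := by
        have : M ≤ 2 * L + 1 := by omega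
        exact_mod_cast this
      have hchoose1 : (1:ℝ) ≤ (M.choose k : ℝ) := by
        exact_mod_cast Nat.one_le_iff_ne_zero.2 (Nat.choose_pos hkM).ne'
      have hcpos : (0:ℝ) < ((M + L + 1).choose k : ℝ) := by
        exact_mod_cast Nat.choose_pos (by omega : k ≤ M + L + 1)
      have hratio_le : (((M + L + 1).choose k : ℝ)) / (M.choose k : ℝ)
          ≤ ((2:ℝ) ^ (M + L + 1)) := by
        calc (((M + L + 1).choose k : ℝ)) / (M.choose k : ℝ)
            ≤ ((M + L + 1).choose k : ℝ) / 1 := by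
              apply div_le_div_of_nonneg_left hcpos.le (by norm_num) hchoose1
          _ = ((M + L + 1).choose k : ℝ) := by rw [div_one]
          _ ≤ (2:ℝ) ^ (M + L + 1) := by
              exact_mod_cast choose_le_two_pow' (M + L + 1) k (by omega)
      have hlog_le : Real.log (((M + L + 1).choose k : ℝ) / (M.choose k : ℝ))
          ≤ (M + L + 1 : ℕ) * Real.log 2 := by
        calc Real.log (((M + L + 1).choose k : ℝ) / (M.choose k : ℝ))
            ≤ Real.log ((2:ℝ) ^ (M + L + 1)) :=
              Real.log_le_log (div_pos hcpos (by linarith)) hratio_le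
          _ = (M + L + 1 : ℕ) * Real.log 2 := by
              rw [Real.log_pow]
      have hlog2 : Real.log 2 < 0.6931471808 := Real.log_two_lt_d9
      have hcast : ((M + L + 1 : ℕ) : ℝ) = (M:ℝ) + L + 1 := by push_cast; ring
      have hfin : ((M:ℝ) + L + 1) * Real.log 2 ≤ 11 * (L:ℝ)^2 / M := by
        rw [le_div_iff₀ hM0]
        have hlog2pos : (0:ℝ) < Real.log 2 := Real.log_pos (by norm_num)
        have hMub : (M:ℝ) + L + 1 ≤ 3 * L + 2 := by linarith
        have h5 : ((M:ℝ) + L + 1) * Real.log 2 * M ≤ (3*L+2) * 0.6931471808 * (2*L+1) := by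
          have hm1 : (0:ℝ) ≤ (M:ℝ) + L + 1 := by linarith
          have : ((M:ℝ) + L + 1) * Real.log 2 ≤ (3*L+2) * 0.6931471808 := by
            apply mul_le_mul hMub hlog2.le hlog2pos.le (by linarith)
          apply mul_le_mul this hM3L hM0.le (by positivity)
        have h6 : ((3:ℝ)*L+2) * 0.6931471808 * (2*L+1) ≤ 11 * (L:ℝ)^2 := by
          nlinarith [sq_nonneg ((L:ℝ) - 1), hL1]
        linarith
      rw [hcast] at hlog_le
      linarith
end

section
/- For all integers L ≥ 0 and M ≥ L+1, the identity Σ_{m=0}^{L} ((2m+1)/M)·∏_{j=1}^{m} (M+j)/(M−j) = binom(M+L+1, L+1)/binom(M, L+1) − 1 holds (the product over an empty index set is 1). -/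
open Finset

private lemma prodB_ne_zero {M L : ℕ} (h : L < M) :
    (∏ j ∈ Finset.Icc 1 L, ((M : ℚ) - j)) ≠ 0 := by
  rw [Finset.prod_ne_zero_iff]
  intro j hj
  rw [Finset.mem_Icc] at hj
  have : (j : ℚ) < (M : ℚ) := by exact_mod_cast lt_of_le_of_lt hj.2 h
  linarith

private lemma sum_aux (M : ℕ) : ∀ L : ℕ, L + 1 ≤ M →
    ∑ m ∈ Finset.range (L + 1),
        ((2 * (m : ℚ) + 1) / M) * ∏ j ∈ Finset.Icc 1 m, (((M : ℚ) + j) / ((M : ℚ) - j))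
      = (∏ j ∈ Finset.Icc 1 (L + 1), ((M : ℚ) + j))
          / ((M : ℚ) * ∏ j ∈ Finset.Icc 1 L, ((M : ℚ) - j)) - 1 := by
  intro L
  induction L with
  | zero =>
      intro h
      have hM : (M : ℚ) ≠ 0 := by
        have : 0 < M := h
        exact_mod_cast this.ne'
      simp only [zero_add, Nat.cast_one, Finset.sum_range_one, Nat.cast_zero, Finset.Icc_self, Finset.prod_singleton,
        Finset.Icc_eq_empty_of_lt Nat.zero_lt_one, Finset.prod_empty]
      field_simp
      ring
  | succ L IH =>
      intro h
      have hL : L + 1 ≤ M := le_of_lt h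
      have hM : (M : ℚ) ≠ 0 := by
        have : 0 < M := by omega
        exact_mod_cast this.ne'
      have hB : (∏ j ∈ Finset.Icc 1 L, ((M : ℚ) - j)) ≠ 0 := prodB_ne_zero (by omega)
      have hB' : (∏ j ∈ Finset.Icc 1 (L + 1), ((M : ℚ) - j)) ≠ 0 := prodB_ne_zero (by omega)
      rw [Finset.sum_range_succ, IH hL]
      have hA2 : (∏ j ∈ Finset.Icc 1 (L + 2), ((M : ℚ) + j))
          = (∏ j ∈ Finset.Icc 1 (L + 1), ((M : ℚ) + j)) * ((M : ℚ) + (L + 2 : ℕ)) := by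
        rw [Finset.prod_Icc_succ_top (by omega)]
      have hB2 : (∏ j ∈ Finset.Icc 1 (L + 1), ((M : ℚ) - j))
          = (∏ j ∈ Finset.Icc 1 L, ((M : ℚ) - j)) * ((M : ℚ) - (L + 1 : ℕ)) := by
        rw [Finset.prod_Icc_succ_top (by omega)]
      have hprod : (∏ j ∈ Finset.Icc 1 (L + 1), (((M : ℚ) + j) / ((M : ℚ) - j)))
          = (∏ j ∈ Finset.Icc 1 (L + 1), ((M : ℚ) + j))
            / (∏ j ∈ Finset.Icc 1 (L + 1), ((M : ℚ) - j)) :=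
        Finset.prod_div_distrib _ _
      rw [hprod, hA2, hB2]
      have hsub : ((M : ℚ) - (L + 1 : ℕ)) ≠ 0 := by
        have : ((L + 1 : ℕ) : ℚ) < (M : ℚ) := by exact_mod_cast (by omega : L + 1 < M)
        intro hc; linarith
      push_cast at hsub ⊢
      field_simp
      ring

/-- For integers `L ≥ 0` and `M ≥ L+1`,
`Σ_{m=0}^{L} ((2m+1)/M)·∏_{j=1}^{m} (M+j)/(M−j) = binom(M+L+1,L+1)/binom(M,L+1) − 1`,
as an identity of rational numbers (the empty product is `1`). -/
theorem stmt2 (L M : ℕ) (hM : L + 1 ≤ M) :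
    ∑ m ∈ Finset.range (L + 1),
        ((2 * (m : ℚ) + 1) / M) * ∏ j ∈ Finset.Icc 1 m, (((M : ℚ) + j) / ((M : ℚ) - j))
      = ((M + L + 1).choose (L + 1) : ℚ) / (M.choose (L + 1) : ℚ) - 1 := by
  rw [sum_aux M L hM]
  congr 1
  -- show product ratio equals choose ratio
  have hasc : ((M + 1).ascFactorial (L + 1) : ℚ)
      = ∏ j ∈ Finset.Icc 1 (L + 1), ((M : ℚ) + j) := by
    induction L + 1 with
    | zero => simp
    | succ k ih =>
        rw [Nat.ascFactorial_succ, Finset.prod_Icc_succ_top (by omega)]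
        push_cast [ih]
        ring
  have hdesc : (M.descFactorial (L + 1) : ℚ)
      = (M : ℚ) * ∏ j ∈ Finset.Icc 1 L, ((M : ℚ) - j) := by
    rw [Nat.descFactorial_eq_prod_range, Nat.cast_prod]
    rw [Finset.prod_range_succ']
    rw [show Finset.Icc 1 L = Finset.Ico 1 (L + 1) by rfl,
        Finset.prod_Ico_eq_prod_range]
    simp only [Nat.add_sub_cancel, Nat.sub_zero, Nat.cast_id]
    rw [mul_comm]
    congr 1
    apply Finset.prod_congr rfl
    intro i hi
    rw [Finset.mem_range] at hi
    rw [Nat.cast_sub (by omega)]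
    push_cast
    ring
  have h1 : ((M + 1).ascFactorial (L + 1) : ℚ) = (Nat.factorial (L + 1) : ℚ) * ((M + L + 1).choose (L + 1)) := by
    have := Nat.ascFactorial_eq_factorial_mul_choose M (L + 1)
    exact_mod_cast congrArg (Nat.cast : ℕ → ℚ) this
  have h2 : (M.descFactorial (L + 1) : ℚ) = (Nat.factorial (L + 1) : ℚ) * (M.choose (L + 1)) := by
    exact_mod_cast congrArg (Nat.cast : ℕ → ℚ) (Nat.descFactorial_eq_factorial_mul_choose M (L + 1))
  have hfac : ((Nat.factorial (L + 1)) : ℚ) ≠ 0 := by exact_mod_cast (Nat.factorial_pos (L + 1)).ne'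
  have hch : (M.choose (L + 1) : ℚ) ≠ 0 := by
    exact_mod_cast (Nat.choose_pos hM).ne'
  have hd : (M.descFactorial (L + 1) : ℚ) ≠ 0 := by
    rw [h2]; exact mul_ne_zero hfac hch
  rw [← hasc, ← hdesc, h1, h2]
  field_simp
end

section
/- For all integers M ≥ 1 and 0 ≤ m ≤ M−1, the discrete Chebyshev polynomial satisfies t_m(−1) = (−1)^m · ∏_{j=1}^{m} (M+j). -/
open Finset

/-- The polynomial `p_m(x) = x(x−1)⋯(x−m+1)·(x−M)(x−M−1)⋯(x−M−m+1)`, as a real function. -/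
noncomputable def discreteChebP (M m : ℕ) (x : ℝ) : ℝ :=
  (∏ i ∈ Finset.range m, (x - i)) * ∏ i ∈ Finset.range m, (x - M - i)

/-- The discrete Chebyshev polynomial
`t_m(x) = (1/m!)·Σ_{j=0}^{m} (−1)^j·binom(m,j)·p_m(x+m−j)`, as a real function. -/
noncomputable def discreteChebT (M m : ℕ) (x : ℝ) : ℝ :=
  (1 / (m.factorial : ℝ)) *
    ∑ j ∈ Finset.range (m + 1), (-1 : ℝ) ^ j * (m.choose j : ℝ) * discreteChebP M m (x + m - j)

/-- For all integers `M ≥ 1` and `0 ≤ m ≤ M−1`,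
`t_m(−1) = (−1)^m · ∏_{j=1}^{m} (M+j)`. -/
theorem stmt3 (M m : ℕ) (hM : 1 ≤ M) (hm : m + 1 ≤ M) :
    discreteChebT M m (-1) = (-1 : ℝ) ^ m * ∏ j ∈ Finset.Icc 1 m, ((M : ℝ) + j) := by
  have hA : ∀ n : ℕ, ∏ i ∈ Finset.range n, ((-1 : ℝ) - i) = (-1) ^ n * n.factorial := by
    intro n
    induction n with
    | zero => simp
    | succ k ih =>
      rw [Finset.prod_range_succ, ih, Nat.factorial_succ]
      push_cast
      ring
  have hB : ∀ n : ℕ, ∏ i ∈ Finset.range n, ((-1 : ℝ) - M - i)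
      = (-1) ^ n * ∏ j ∈ Finset.Icc 1 n, ((M : ℝ) + j) := by
    intro n
    induction n with
    | zero => simp
    | succ k ih =>
      rw [Finset.prod_range_succ, ih, Finset.prod_Icc_succ_top (Nat.one_le_iff_ne_zero.mpr (by simp))]
      push_cast
      ring
  unfold discreteChebT
  rw [Finset.sum_range_succ]
  have hz : ∑ j ∈ Finset.range m,
      (-1 : ℝ) ^ j * (m.choose j : ℝ) * discreteChebP M m ((-1 : ℝ) + m - j) = 0 := by
    apply Finset.sum_eq_zero
    intro j hj
    rw [Finset.mem_range] at hj
    have hp : discreteChebP M m ((-1 : ℝ) + m - j) = 0 := by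
      unfold discreteChebP
      have hmem : m - (j + 1) ∈ Finset.range m := by
        rw [Finset.mem_range]; omega
      rw [Finset.prod_eq_zero hmem, zero_mul]
      have : ((m - (j + 1) : ℕ) : ℝ) = (m : ℝ) - (j + 1) := by
        push_cast [Nat.cast_sub hj]; ring
      rw [this]; ring
    rw [hp, mul_zero]
  rw [hz, zero_add]
  have harg : ((-1 : ℝ) + m - m) = -1 := by ring
  rw [harg, Nat.choose_self]
  unfold discreteChebP
  rw [hA m, hB m]
  have hfac : (m.factorial : ℝ) ≠ 0 := Nat.cast_ne_zero.mpr m.factorial_ne_zero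
  have hpow : ((-1 : ℝ)) ^ (m * 3) = (-1) ^ m := by
    rw [show m * 3 = m + 2 * m by ring, pow_add, pow_mul]; norm_num
  field_simp
  ring_nf
  rw [mul_comm, pow_mul]; norm_num
end

section
/- For all integers L ≥ 1 and M ≥ L+1 and every vector w ∈ ℝ^{L+1}, one has ‖B̄w‖₂ ≥ √M · (1/(L²·2^{7L}·(2L+1))) · ((M+L)/(eM))^{L+1/2} · ‖w‖₂; equivalently, the smallest singular value of B̄/√M is at least (1/(L²·2^{7L}·(2L+1)))·((M+L)/(eM))^{L+1/2}. -/
open Finset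

open Polynomial

-- aux 1: l1-type coefficient bound for products of (X - C a), |a| ≤ 1
lemma stmt4aux_coeff_prod_bound {ι : Type*} (s : Finset ι) (v : ι → ℝ) (hv : ∀ m ∈ s, |v m| ≤ 1) :
    ∀ j, |(∏ m ∈ s, (X - C (v m))).coeff j| ≤ 2 ^ s.card := by
  classical
  induction s using Finset.induction_on with
  | empty => intro j; simp [Polynomial.coeff_one]; cases j <;> simp
  | insert _ _ ha ih =>
    rename_i a s
    intro j
    have hva : |v a| ≤ 1 := hv a (mem_insert_self a s)
    have ih' := ih (fun m hm => hv m (mem_insert_of_mem hm))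
    rw [Finset.prod_insert ha, Finset.card_insert_of_notMem ha]
    have stmt4aux_key : ((X - C (v a)) * ∏ m ∈ s, (X - C (v m))).coeff j
        = (X * ∏ m ∈ s, (X - C (v m))).coeff j - v a * (∏ m ∈ s, (X - C (v m))).coeff j := by
      rw [sub_mul, Polynomial.coeff_sub, Polynomial.coeff_C_mul]
    rw [stmt4aux_key]
    have h2 : |(X * ∏ m ∈ s, (X - C (v m))).coeff j| ≤ 2 ^ s.card := by
      cases j with
      | zero =>
          rw [Polynomial.coeff_X_mul_zero, abs_zero]
          positivity
      | succ n => rw [Polynomial.coeff_X_mul]; exact ih' n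
    calc |(X * ∏ m ∈ s, (X - C (v m))).coeff j - v a * (∏ m ∈ s, (X - C (v m))).coeff j|
        ≤ |(X * ∏ m ∈ s, (X - C (v m))).coeff j| + |v a * (∏ m ∈ s, (X - C (v m))).coeff j| :=
          abs_sub _ _
      _ ≤ 2 ^ s.card + 1 * 2 ^ s.card := by
          gcongr
          rw [abs_mul]
          exact mul_le_mul hva (ih' j) (abs_nonneg _) zero_le_one
      _ = 2 ^ (s.card + 1) := by ring

-- aux 2: Stirling-type
lemma stmt4aux_pow_le_exp_mul_factorial : ∀ n : ℕ, (n : ℝ) ^ n ≤ Real.exp 1 ^ n * n.factorial := by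
  intro n
  induction n with
  | zero => simp
  | succ n ih =>
    have he : (0:ℝ) < Real.exp 1 := Real.exp_pos 1
    have hstep : ((n:ℝ) + 1) ^ n ≤ Real.exp 1 * (n:ℝ) ^ n := by
      rcases Nat.eq_zero_or_pos n with h | h
      · subst h; simp [Real.one_le_exp (by norm_num : (0:ℝ) ≤ 1)]
      · have hn : (0:ℝ) < n := by exact_mod_cast h
        have h1 : (n:ℝ) + 1 ≤ n * Real.exp (1 / n) := by
          have := Real.add_one_le_exp (1 / (n:ℝ))
          have h2 : (n:ℝ) * (1/n + 1) ≤ n * Real.exp (1/n) := by gcongr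
          calc (n:ℝ) + 1 = n * (1/n + 1) := by field_simp; ring
            _ ≤ n * Real.exp (1/n) := h2
        calc ((n:ℝ) + 1) ^ n ≤ ((n:ℝ) * Real.exp (1/n)) ^ n := by
              gcongr
          _ = (n:ℝ) ^ n * Real.exp (1/n) ^ n := by rw [mul_pow]
          _ = (n:ℝ) ^ n * Real.exp 1 := by
              rw [← Real.exp_nat_mul]
              congr 1
              field_simp
          _ = Real.exp 1 * (n:ℝ) ^ n := by ring
    push_cast
    calc ((n:ℝ) + 1) ^ (n + 1) = ((n:ℝ) + 1) ^ n * (n + 1) := by ring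
      _ ≤ Real.exp 1 * (n:ℝ) ^ n * (n + 1) := by gcongr
      _ ≤ Real.exp 1 * (Real.exp 1 ^ n * n.factorial) * (n + 1) := by gcongr
      _ = Real.exp 1 ^ (n+1) * ((n + 1) * n.factorial) := by ring
      _ = Real.exp 1 ^ (n+1) * (n+1).factorial := by
          rw [Nat.factorial_succ]; push_cast; ring

lemma stmt4aux_prodSucc (j : ℕ) : ∏ i ∈ Finset.range j, ((i:ℝ) + 1) = j.factorial := by
  induction j with
  | zero => simp
  | succ n ih => rw [Finset.prod_range_succ, ih, Nat.factorial_succ]; push_cast; ring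

lemma stmt4aux_prodA (k : ℕ) : ∏ m ∈ Finset.range k, ((k:ℝ) - m) = k.factorial := by
  induction k with
  | zero => simp
  | succ n ih =>
    rw [Finset.prod_range_succ']
    have : ∀ i ∈ Finset.range n, ((n:ℝ) + 1 - (↑(i+1):ℝ)) = (n:ℝ) - i := by
      intro i _; push_cast; ring
    push_cast
    rw [Finset.prod_congr rfl (by intro i hi; push_cast; ring :
      ∀ i ∈ Finset.range n, ((n:ℝ) + 1 - ((i:ℝ) + 1)) = (n:ℝ) - i), ih, Nat.factorial_succ]
    push_cast; ring

lemma stmt4aux_prodB (n k : ℕ) (h : k ≤ n) :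
    ∏ m ∈ Finset.Ico (k+1) (n+1), ((m:ℝ) - k) = (n-k).factorial := by
  rw [Finset.prod_Ico_eq_prod_range]
  have h1 : n + 1 - (k + 1) = n - k := by omega
  rw [h1, ← stmt4aux_prodSucc (n-k)]
  apply Finset.prod_congr rfl
  intro i _; push_cast; ring

lemma stmt4aux_prodC (n : ℕ) (k : Fin (n+1)) :
    ∏ m ∈ (Finset.univ : Finset (Fin (n+1))).erase k, |(k.1:ℝ) - m.1|
      = (k.1.factorial * (n - k.1).factorial : ℕ) := by
  classical
  have himg : ((Finset.univ : Finset (Fin (n+1))).erase k).image Fin.val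
      = (Finset.range (n+1)).erase k.1 := by
    ext m
    simp only [Finset.mem_image, Finset.mem_erase, Finset.mem_univ, and_true,
      Finset.mem_range]
    constructor
    · rintro ⟨a, ha, rfl⟩; exact ⟨fun h => ha (Fin.ext h), a.2⟩
    · rintro ⟨hm, hlt⟩; exact ⟨⟨m, hlt⟩, fun h => hm (congrArg Fin.val h), rfl⟩
  have h1 : ∏ m ∈ (Finset.univ : Finset (Fin (n+1))).erase k, |(k.1:ℝ) - m.1|
      = ∏ m ∈ (Finset.range (n+1)).erase k.1, |(k.1:ℝ) - m| := by
    rw [← himg, Finset.prod_image]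
    intro a _ b _ h; exact Fin.val_injective h
  rw [h1]
  have hsplit : (Finset.range (n+1)).erase k.1
      = Finset.range k.1 ∪ Finset.Ico (k.1+1) (n+1) := by
    ext m
    simp only [Finset.mem_erase, Finset.mem_range, Finset.mem_union, Finset.mem_Ico]
    omega
  have hdisj : Disjoint (Finset.range k.1) (Finset.Ico (k.1+1) (n+1)) := by
    rw [Finset.disjoint_left]
    intro m hm hm'
    simp only [Finset.mem_range] at hm
    simp only [Finset.mem_Ico] at hm'
    omega
  rw [hsplit, Finset.prod_union hdisj]
  have e1 : ∏ m ∈ Finset.range k.1, |(k.1:ℝ) - m| = k.1.factorial := by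
    rw [← stmt4aux_prodA k.1]
    apply Finset.prod_congr rfl
    intro m hm
    simp only [Finset.mem_range] at hm
    rw [abs_of_pos]
    have : (m:ℝ) < k.1 := by exact_mod_cast hm
    linarith
  have e2 : ∏ m ∈ Finset.Ico (k.1+1) (n+1), |(k.1:ℝ) - m| = (n - k.1).factorial := by
    rw [← stmt4aux_prodB n k.1 (by omega : k.1 ≤ n)]
    apply Finset.prod_congr rfl
    intro m hm
    simp only [Finset.mem_Ico] at hm
    rw [abs_sub_comm, abs_of_pos]
    have : (k.1:ℝ) < m := by exact_mod_cast (by omega : k.1 < m)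
    linarith
  rw [e1, e2]; push_cast; ring

lemma stmt4aux_key (L : ℕ) (a δ : ℝ) (hδ : 0 < δ)
    (hx : ∀ k : Fin (L+1), |a + k.1 * δ| ≤ 1) (w : Fin (L+1) → ℝ) :
    ∑ j : Fin (L+1), w j ^ 2
      ≤ ((L+1:ℝ)^2 * (4^L / (L.factorial * δ^L))^2) *
        ∑ k : Fin (L+1), (∑ j : Fin (L+1), (a + k.1*δ)^(j.1) * w j)^2 := by
  classical
  set v : Fin (L+1) → ℝ := fun k => a + k.1 * δ with hv
  set p : ℝ[X] := ∑ j : Fin (L+1), C (w j) * X ^ (j.1) with hp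
  set D : ℝ := 4^L / (L.factorial * δ^L) with hD
  have hDpos : 0 < D := by
    apply div_pos (by positivity)
    have : (0:ℝ) < L.factorial := by exact_mod_cast L.factorial_pos
    positivity
  have hinj : Set.InjOn v (Finset.univ : Finset (Fin (L+1))) := by
    intro k _ m _ h
    simp only [hv] at h
    have : (k.1:ℝ) = m.1 := by
      have hδ' : δ ≠ 0 := ne_of_gt hδ
      have h' : ((k.1:ℝ) - m.1) * δ = 0 := by linarith
      rcases mul_eq_zero.mp h' with h | h
      · linarith
      · exact absurd h hδ'
    exact Fin.ext (by exact_mod_cast this)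
  have hdeg : p.degree < (Finset.univ : Finset (Fin (L+1))).card := by
    rw [Finset.card_univ, Fintype.card_fin]
    apply lt_of_le_of_lt (Polynomial.degree_sum_le _ _)
    rw [Finset.sup_lt_iff (by exact_mod_cast WithBot.bot_lt_coe (L+1))]
    intro j _
    apply lt_of_le_of_lt (Polynomial.degree_C_mul_X_pow_le _ _)
    exact_mod_cast j.2
  have hcoeff : ∀ j : Fin (L+1), p.coeff j.1 = w j := by
    intro j
    rw [hp, Polynomial.finset_sum_coeff]
    rw [Finset.sum_eq_single j]
    · simp [Polynomial.coeff_C_mul, Polynomial.coeff_X_pow]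
    · intro b _ hb
      simp only [Polynomial.coeff_C_mul, Polynomial.coeff_X_pow]
      rw [if_neg (fun h => hb (Fin.ext h.symm)), mul_zero]
    · intro h; exact absurd (Finset.mem_univ j) h
  have heval : ∀ x : ℝ, p.eval x = ∑ j : Fin (L+1), x^(j.1) * w j := by
    intro x
    rw [hp, Polynomial.eval_finset_sum]
    exact Finset.sum_congr rfl fun j _ => by
      rw [Polynomial.eval_mul, Polynomial.eval_C, Polynomial.eval_pow, Polynomial.eval_X]
      ring
  have hinterp := Lagrange.eq_interpolate hinj hdeg
  -- coefficient identity
  have hrecover : ∀ j : Fin (L+1),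
      w j = ∑ k : Fin (L+1), p.eval (v k) * (Lagrange.basis Finset.univ v k).coeff j.1 := by
    intro j
    conv_lhs => rw [← hcoeff j, hinterp]
    rw [Lagrange.interpolate_apply, Polynomial.finset_sum_coeff]
    exact Finset.sum_congr rfl fun k _ => by rw [Polynomial.coeff_C_mul]
  -- bound on basis coefficients
  have hbound : ∀ k : Fin (L+1), ∀ j : ℕ, |(Lagrange.basis Finset.univ v k).coeff j| ≤ D := by
    intro k j
    have hcard : ((Finset.univ : Finset (Fin (L+1))).erase k).card = L := by
      rw [Finset.card_erase_of_mem (Finset.mem_univ k), Finset.card_univ, Fintype.card_fin]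
      omega
    have hbasis : Lagrange.basis Finset.univ v k
        = C (∏ m ∈ Finset.univ.erase k, (v k - v m)⁻¹)
          * ∏ m ∈ Finset.univ.erase k, (X - C (v m)) := by
      rw [Lagrange.basis]
      simp only [Lagrange.basisDivisor]
      rw [Finset.prod_mul_distrib]
      congr 1
      rw [map_prod]
    have hnum : |(∏ m ∈ Finset.univ.erase k, (X - C (v m))).coeff j| ≤ 2 ^ L := by
      have := stmt4aux_coeff_prod_bound (Finset.univ.erase k) v
        (fun m _ => hx m) j
      rwa [hcard] at this
    have hprod : ∏ m ∈ Finset.univ.erase k, |v k - v m|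
        = (k.1.factorial * (L - k.1).factorial : ℕ) * δ ^ L := by
      have : ∀ m ∈ Finset.univ.erase k, |v k - v m| = |(k.1:ℝ) - m.1| * δ := by
        intro m _
        have : v k - v m = ((k.1:ℝ) - m.1) * δ := by simp [hv]; ring
        rw [this, abs_mul, abs_of_pos hδ]
      rw [Finset.prod_congr rfl this, Finset.prod_mul_distrib, Finset.prod_const, hcard,
        stmt4aux_prodC L k]
    have hfact : (L.factorial : ℝ) ≤ 2 ^ L * (k.1.factorial * (L - k.1).factorial : ℕ) := by
      have hk : k.1 ≤ L := by omega
      have h1 : L.choose k.1 * (k.1.factorial * (L - k.1).factorial)  = L.factorial := by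
        rw [← Nat.choose_mul_factorial_mul_factorial hk]; ring
      have h2 : L.choose k.1 ≤ 2 ^ L := by
        calc L.choose k.1 ≤ ∑ i ∈ Finset.range (L+1), L.choose i :=
              Finset.single_le_sum (fun i _ => Nat.zero_le _)
                (Finset.mem_range.mpr (by omega))
          _ = 2 ^ L := Nat.sum_range_choose L
      have : L.factorial ≤ 2 ^ L * (k.1.factorial * (L - k.1).factorial) := by
        rw [← h1]; exact Nat.mul_le_mul_right _ h2
      exact_mod_cast this
    have hPpos : (0:ℝ) < ∏ m ∈ Finset.univ.erase k, |v k - v m| := by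
      rw [hprod]
      have : (0:ℝ) < (k.1.factorial * (L - k.1).factorial : ℕ) := by
        exact_mod_cast Nat.mul_pos k.1.factorial_pos (L - k.1).factorial_pos
      positivity
    rw [hbasis, Polynomial.coeff_C_mul, abs_mul]
    have habsinv : |∏ m ∈ Finset.univ.erase k, (v k - v m)⁻¹|
        = (∏ m ∈ Finset.univ.erase k, |v k - v m|)⁻¹ := by
      rw [← Finset.prod_inv_distrib, Finset.abs_prod]
      exact Finset.prod_congr rfl fun m _ => abs_inv _
    rw [habsinv]
    calc (∏ m ∈ Finset.univ.erase k, |v k - v m|)⁻¹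
          * |(∏ m ∈ Finset.univ.erase k, (X - C (v m))).coeff j|
        ≤ (∏ m ∈ Finset.univ.erase k, |v k - v m|)⁻¹ * 2 ^ L := by
          gcongr
      _ ≤ D := by
          have hLf : (0:ℝ) < (L.factorial:ℝ) := by exact_mod_cast L.factorial_pos
          have hNpos : (0:ℝ) < ((k.1.factorial * (L - k.1).factorial : ℕ):ℝ) := by
            exact_mod_cast Nat.mul_pos k.1.factorial_pos (L - k.1).factorial_pos
          rw [hD, inv_mul_le_iff₀ hPpos, hprod]
          have h4 : ((k.1.factorial * (L - k.1).factorial : ℕ):ℝ) * δ ^ L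
              * (4 ^ L / (↑L.factorial * δ ^ L))
              = ((k.1.factorial * (L - k.1).factorial : ℕ):ℝ) * 4 ^ L / L.factorial := by
            field_simp
          rw [h4, le_div_iff₀ hLf]
          have h2 : (2:ℝ) ^ L * ((L.factorial:ℝ))
              ≤ 2 ^ L * (2 ^ L * ((k.1.factorial * (L - k.1).factorial : ℕ):ℝ)) := by
            gcongr
          calc (2:ℝ) ^ L * (L.factorial:ℝ) ≤
              2 ^ L * (2 ^ L * ((k.1.factorial * (L - k.1).factorial : ℕ):ℝ)) := h2
            _ = ((k.1.factorial * (L - k.1).factorial : ℕ):ℝ) * 4 ^ L := by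
                rw [← mul_assoc, ← mul_pow]; norm_num; ring
  -- combine
  have hT : ∀ k : Fin (L+1), p.eval (v k) = ∑ j : Fin (L+1), (a + k.1*δ)^(j.1) * w j := by
    intro k; rw [heval]
  calc ∑ j : Fin (L+1), w j ^ 2
      = ∑ j : Fin (L+1),
          (∑ k : Fin (L+1), (Lagrange.basis Finset.univ v k).coeff j.1 * p.eval (v k)) ^ 2 := by
        refine Finset.sum_congr rfl fun j _ => ?_
        rw [hrecover j]
        congr 1
        exact Finset.sum_congr rfl fun k _ => mul_comm _ _
    _ ≤ ∑ j : Fin (L+1),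
          (∑ k : Fin (L+1), ((Lagrange.basis Finset.univ v k).coeff j.1) ^ 2)
          * ∑ k : Fin (L+1), (p.eval (v k)) ^ 2 := by
        refine Finset.sum_le_sum fun j _ => ?_
        exact Finset.sum_mul_sq_le_sq_mul_sq _ _ _
    _ ≤ ∑ j : Fin (L+1),
          ((L+1:ℝ) * D^2) * ∑ k : Fin (L+1), (p.eval (v k)) ^ 2 := by
        refine Finset.sum_le_sum fun j _ => ?_
        have hTnn : 0 ≤ ∑ k : Fin (L+1), (p.eval (v k)) ^ 2 :=
          Finset.sum_nonneg fun k _ => sq_nonneg _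
        gcongr
        calc ∑ k : Fin (L+1), ((Lagrange.basis Finset.univ v k).coeff j.1) ^ 2
            ≤ ∑ _k : Fin (L+1), D^2 := by
              refine Finset.sum_le_sum fun k _ => ?_
              rw [← sq_abs]
              exact pow_le_pow_left₀ (abs_nonneg _) (hbound k j.1) 2
          _ = (L+1:ℝ) * D^2 := by
              rw [Finset.sum_const, Finset.card_univ, Fintype.card_fin, nsmul_eq_mul]
              push_cast; ring
    _ = ((L+1:ℝ)^2 * D^2) * ∑ k : Fin (L+1), (p.eval (v k)) ^ 2 := by
        rw [Finset.sum_const, Finset.card_univ, Fintype.card_fin, nsmul_eq_mul]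
        push_cast; ring
    _ = ((L+1:ℝ)^2 * D^2) * ∑ k : Fin (L+1), (∑ j : Fin (L+1), (a + k.1*δ)^(j.1) * w j)^2 := by
        congr 1
        exact Finset.sum_congr rfl fun k _ => by rw [hT k]

set_option maxHeartbeats 1000000 in
lemma stmt4aux_numeric (L M q : ℕ) (hL : 1 ≤ L) (hM : L + 1 ≤ M) (hq1 : 1 ≤ q)
    (hM2q : M ≤ 2 * ((L + 1) * q)) :
    (M:ℝ) * ((1 / ((L : ℝ) ^ 2 * 2 ^ (7 * L) * (2 * L + 1)))^2
        * (((M : ℝ) + L) / (Real.exp 1 * M)) ^ (2 * L + 1))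
      * ((L+1:ℝ)^2 * (4^L / ((L.factorial : ℝ) * ((q:ℝ)/M)^L))^2) ≤ q := by
  set E : ℝ := Real.exp 1 with hE
  have hEpos : 0 < E := Real.exp_pos 1
  have hE3 : E ≤ 3 := by
    rw [hE]; nlinarith [Real.exp_one_lt_d9]
  set l : ℝ := (L:ℝ) with hl
  have hl1 : (1:ℝ) ≤ l := by rw [hl]; exact_mod_cast hL
  have hl0 : (0:ℝ) < l := by linarith
  set m : ℝ := (M:ℝ) with hm
  have hm0 : (0:ℝ) < m := by rw [hm]; exact_mod_cast Nat.lt_of_lt_of_le (by omega) hM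
  have hlm : l + 1 ≤ m := by rw [hl, hm]; exact_mod_cast hM
  set P : ℝ := (q:ℝ) with hP
  have hP1 : (1:ℝ) ≤ P := by rw [hP]; exact_mod_cast hq1
  have hP0 : (0:ℝ) < P := by linarith
  have hF0 : (0:ℝ) < (L.factorial : ℝ) := by exact_mod_cast L.factorial_pos
  set F : ℝ := (L.factorial : ℝ) with hF
  set D : ℝ := (E * m) ^ (2*L+1) * (l^2 * 2^(7*L) * (2*l+1))^2 * F^2 * P^(2*L) with hD
  set N : ℝ := m^(2*L+1) * (m + l) ^ (2*L+1) * (l+1)^2 * 2^(4*L) with hN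
  have hDpos : 0 < D := by rw [hD]; positivity
  have hml4 : m + l ≤ 4 * (l + 1) * P := by
    have h1 : m ≤ 2 * ((l + 1) * P) := by
      rw [hm, hl, hP]; exact_mod_cast hM2q
    nlinarith
  -- main cleared inequality
  have hmain : (m + l) ^ (2*L+1) * (l+1)^2 * 2^(4*L)
      ≤ E^(2*L+1) * l^4 * 2^(14*L) * (2*l+1)^2 * F^2 * P^(2*L+1) := by
    have step1 : (m + l) ^ (2*L+1) ≤ (4*(l+1)*P)^(2*L+1) :=
      pow_le_pow_left₀ (by positivity) hml4 _
    have expand : (4*(l+1)*P)^(2*L+1) * (l+1)^2 * 2^(4*L)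
        = (l+1)^(2*L+3) * 2^(8*L+2) * P^(2*L+1) := by
      have h4 : (4:ℝ)^(2*L+1) = 2^(4*L+2) := by
        rw [show (4:ℝ) = 2^2 by norm_num, ← pow_mul]
        congr 1; ring
      have e1 : (l+1)^(2*L+3) = (l+1)^(2*L+1)*(l+1)^2 := by rw [← pow_add]
      have e2 : (2:ℝ)^(8*L+2) = 2^(4*L+2)*2^(4*L) := by rw [← pow_add]; congr 1; ring
      rw [mul_pow, mul_pow, h4, e1, e2]; ring
    have h1 : (l+1)^(2*L) ≤ E^2 * l^(2*L) := by
      have ha : l + 1 ≤ l * Real.exp (1/l) := by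
        have h := Real.add_one_le_exp (1/l)
        have h2 : l * (1/l + 1) ≤ l * Real.exp (1/l) := by gcongr
        have h3 : l * (1/l + 1) = l + 1 := by field_simp; ring
        linarith
      have hexp2 : E^2 = Real.exp 2 := by
        rw [hE, ← Real.exp_nat_mul]; norm_num
      calc (l+1)^(2*L) ≤ (l * Real.exp (1/l))^(2*L) :=
            pow_le_pow_left₀ (by positivity) ha _
        _ = l^(2*L) * Real.exp (1/l) ^ (2*L) := mul_pow _ _ _
        _ = l^(2*L) * Real.exp 2 := by
            have hgoal : ((2*L : ℕ):ℝ) * (1/l) = 2 := by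
              have : l ≠ 0 := hl0.ne'
              push_cast
              field_simp
              exact hl.symm
            rw [← Real.exp_nat_mul, hgoal]
        _ = E^2 * l^(2*L) := by rw [hexp2]; ring
    have h2 : l^(2*L) ≤ E^(2*L) * F^2 := by
      have h := stmt4aux_pow_le_exp_mul_factorial L
      rw [← hl, ← hE, ← hF] at h
      calc l^(2*L) = (l^L)^2 := by ring
        _ ≤ (E^L * F)^2 := pow_le_pow_left₀ (by positivity) h _
        _ = E^(2*L) * F^2 := by ring
    have h3 : (l+1)^(2*L+3) ≤ E^(2*L+2) * F^2 * (l+1)^3 := by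
      calc (l+1)^(2*L+3) = (l+1)^(2*L) * (l+1)^3 := by rw [← pow_add]
        _ ≤ (E^2 * l^(2*L)) * (l+1)^3 := by gcongr ?_ * _
        _ ≤ (E^2 * (E^(2*L) * F^2)) * (l+1)^3 := by gcongr
        _ = E^(2*L+2) * F^2 * (l+1)^3 := by rw [pow_add]; ring
    have h4 : E * (l+1)^3 * 2^(8*L+2) ≤ l^4 * 2^(14*L) * (2*l+1)^2 := by
      have hc1 : (l+1)^3 ≤ 8 * l^3 := by nlinarith
      have hc2 : (2:ℝ)^(14*L) = 2^(8*L+2) * 2^(6*L-2) := by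
        rw [← pow_add]; congr 1; omega
      have hc3 : (16:ℝ) ≤ 2^(6*L-2) := by
        calc (16:ℝ) = 2^4 := by norm_num
          _ ≤ 2^(6*L-2) := pow_le_pow_right₀ (by norm_num) (by omega)
      have hc4 : (9:ℝ) ≤ (2*l+1)^2 := by nlinarith
      calc E * (l+1)^3 * 2^(8*L+2) ≤ 3 * (8*l^3) * 2^(8*L+2) := by
            apply mul_le_mul _ le_rfl (by positivity) (by positivity)
            exact mul_le_mul hE3 hc1 (by positivity) (by norm_num)
        _ = 24 * l^3 * 2^(8*L+2) := by ring
        _ ≤ 144 * l^4 * 2^(8*L+2) := by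
            have h24 : 24 * l^3 ≤ 144 * l^4 := by nlinarith
            gcongr
        _ = l^4 * 2^(8*L+2) * (16 * 9) := by ring
        _ ≤ l^4 * 2^(8*L+2) * (2^(6*L-2) * (2*l+1)^2) := by gcongr
        _ = l^4 * 2^(14*L) * (2*l+1)^2 := by rw [hc2]; ring
    calc (m + l) ^ (2*L+1) * (l+1)^2 * 2^(4*L)
        ≤ (4*(l+1)*P)^(2*L+1) * (l+1)^2 * 2^(4*L) := by gcongr
      _ = (l+1)^(2*L+3) * 2^(8*L+2) * P^(2*L+1) := expand
      _ ≤ (E^(2*L+2) * F^2 * (l+1)^3) * 2^(8*L+2) * P^(2*L+1) := by gcongr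
      _ = E^(2*L+1) * F^2 * (E * (l+1)^3 * 2^(8*L+2)) * P^(2*L+1) := by
          rw [pow_succ]; ring
      _ ≤ E^(2*L+1) * F^2 * (l^4 * 2^(14*L) * (2*l+1)^2) * P^(2*L+1) := by gcongr
      _ = E^(2*L+1) * l^4 * 2^(14*L) * (2*l+1)^2 * F^2 * P^(2*L+1) := by ring
  -- rewrite goal as N / D ≤ P
  have h4L : (4:ℝ)^L = 2^(2*L) := by
    rw [show (4:ℝ) = 2^2 by norm_num, ← pow_mul]
  have hA : (M:ℝ) * ((1 / ((L : ℝ) ^ 2 * 2 ^ (7 * L) * (2 * L + 1)))^2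
        * (((M : ℝ) + L) / (Real.exp 1 * M)) ^ (2 * L + 1))
      * ((L+1:ℝ)^2 * (4^L / ((L.factorial : ℝ) * ((q:ℝ)/M)^L))^2) = N / D := by
    rw [← hE, ← hl, ← hm, ← hP, ← hF, h4L, hN, hD]
    have hne1 : l^2 * 2^(7*L) * (2*l+1) ≠ 0 := by positivity
    have hne2 : F * (P/m)^L ≠ 0 := by positivity
    simp only [div_pow, mul_pow, ← pow_mul, one_pow]
    field_simp
    ring
  rw [hA, div_le_iff₀ hDpos]
  calc N = m^(2*L+1) * ((m + l) ^ (2*L+1) * (l+1)^2 * 2^(4*L)) := by rw [hN]; ring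
    _ ≤ m^(2*L+1) * (E^(2*L+1) * l^4 * 2^(14*L) * (2*l+1)^2 * F^2 * P^(2*L+1)) := by
        gcongr
    _ = P * D := by
        rw [hD]
        have e1 : (E*m)^(2*L+1) = E^(2*L+1) * m^(2*L+1) := mul_pow _ _ _
        have e2 : ((2:ℝ)^(7*L))^2 = 2^(14*L) := by rw [← pow_mul]; congr 1; ring
        have e3 : P^(2*L+1) = P^(2*L) * P := pow_succ _ _
        rw [e1, e3, ← e2]; ring

/-- For integers `L ≥ 1`, `M ≥ L+1`, with `B̄` the `M × (L+1)` rectangular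
Vandermonde matrix with entries `B̄_{i,j} = (i/M)^j` (`i = 1,…,M`, `j = 0,…,L`), every
`w ∈ ℝ^{L+1}` satisfies
`‖B̄w‖₂ ≥ √M · (1/(L²·2^{7L}·(2L+1))) · ((M+L)/(eM))^{L+1/2} · ‖w‖₂`;
i.e. the smallest singular value of `B̄/√M` is at least
`(1/(L²·2^{7L}·(2L+1)))·((M+L)/(eM))^{L+1/2}`. -/
theorem stmt4 (L M : ℕ) (hL : 1 ≤ L) (hM : L + 1 ≤ M) (w : Fin (L + 1) → ℝ) :
    Real.sqrt (∑ i : Fin M,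
        (∑ j : Fin (L + 1), ((i.1 + 1 : ℝ) / M) ^ (j.1 : ℕ) * w j) ^ 2)
      ≥ Real.sqrt M * (1 / ((L : ℝ) ^ 2 * 2 ^ (7 * L) * (2 * L + 1))) *
          (((M : ℝ) + L) / (Real.exp 1 * M)) ^ ((L : ℝ) + 1 / 2) *
          Real.sqrt (∑ j : Fin (L + 1), w j ^ 2) := by

  classical
  have hM0 : 0 < M := by omega
  have hmR : (0:ℝ) < M := by exact_mod_cast hM0
  set q : ℕ := M / (L + 1) with hqdef
  have hq1 : 1 ≤ q := (Nat.one_le_div_iff (by omega)).mpr hM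
  have hq0 : 0 < q := hq1
  have hMq : (L + 1) * q ≤ M := by
    rw [hqdef]; exact Nat.mul_div_le M (L+1) |>.trans (le_refl M) |>.trans_eq' (by ring)
  have hM2q : M ≤ 2 * ((L + 1) * q) := by
    have hdm : (L + 1) * q + M % (L + 1) = M := by rw [hqdef]; exact Nat.div_add_mod M (L+1)
    have hr : M % (L + 1) < L + 1 := Nat.mod_lt M (by omega)
    have hle : L + 1 ≤ (L + 1) * q := Nat.le_mul_of_pos_right _ hq0
    calc M = (L + 1) * q + M % (L + 1) := hdm.symm
      _ ≤ (L + 1) * q + (L + 1) := by omega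
      _ ≤ (L + 1) * q + (L + 1) * q := by omega
      _ = 2 * ((L + 1) * q) := by ring
  -- row selection map
  have hidx : ∀ (g : Fin q) (k : Fin (L+1)), g.1 + k.1 * q < M := by
    intro g k
    have h1 : g.1 + k.1 * q < q + L * q := by
      have h2 : k.1 * q ≤ L * q := Nat.mul_le_mul_right q (by omega)
      have := g.2
      omega
    calc g.1 + k.1 * q < q + L * q := h1
      _ = (L + 1) * q := by ring
      _ ≤ M := hMq
  set ι : Fin q × Fin (L+1) → Fin M := fun gk => ⟨gk.1.1 + gk.2.1 * q, hidx gk.1 gk.2⟩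
    with hι
  have hinj : ∀ a ∈ (Finset.univ : Finset (Fin q × Fin (L+1))), ∀ b ∈ Finset.univ,
      ι a = ι b → a = b := by
    rintro ⟨g, k⟩ - ⟨g', k'⟩ - h
    have hval : g.1 + k.1 * q = g'.1 + k'.1 * q := congrArg Fin.val h
    have hg : g.1 = g'.1 := by
      have h1 := congrArg (· % q) hval
      simpa [Nat.add_mul_mod_self_right, Nat.mod_eq_of_lt g.2, Nat.mod_eq_of_lt g'.2] using h1
    have hk : k.1 = k'.1 := by
      have h2 : k.1 * q = k'.1 * q := by omega
      exact Nat.eq_of_mul_eq_mul_right hq0 h2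
    exact Prod.ext (Fin.ext hg) (Fin.ext hk)
  set f : Fin M → ℝ := fun i => (∑ j : Fin (L + 1), ((i.1 + 1 : ℝ) / M) ^ (j.1 : ℕ) * w j) ^ 2
    with hf
  set T : ℝ := ∑ i : Fin M, f i with hT
  set S : ℝ := ∑ j : Fin (L + 1), w j ^ 2 with hS
  have hSnn : 0 ≤ S := Finset.sum_nonneg fun j _ => sq_nonneg _
  have hTnn : 0 ≤ T := Finset.sum_nonneg fun i _ => sq_nonneg _
  -- step 1
  have hstep1 : ∑ gk : Fin q × Fin (L+1), f (ι gk) ≤ T := by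
    rw [hT, ← Finset.sum_image hinj]
    exact Finset.sum_le_sum_of_subset_of_nonneg (Finset.subset_univ _)
      (fun i _ _ => sq_nonneg _)
  -- step 2 for each g
  set δ : ℝ := (q:ℝ) / M with hδdef
  have hδ : 0 < δ := by
    rw [hδdef]
    exact div_pos (by exact_mod_cast hq0) hmR
  set C2 : ℝ := (L+1:ℝ)^2 * (4^L / ((L.factorial : ℝ) * δ^L))^2 with hC2
  have hC2pos : 0 < C2 := by
    rw [hC2]
    have hF0 : (0:ℝ) < (L.factorial : ℝ) := by exact_mod_cast L.factorial_pos
    positivity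
  have hstep2 : ∀ g : Fin q, S ≤ C2 * ∑ k : Fin (L+1), f (ι (g, k)) := by
    intro g
    have hx : ∀ k : Fin (L+1), |((g.1:ℝ)+1)/M + k.1 * δ| ≤ 1 := by
      intro k
      have hpos : (0:ℝ) < ((g.1:ℝ)+1)/M + k.1 * δ := by
        have : (0:ℝ) ≤ (k.1:ℝ) * δ := by positivity
        have : (0:ℝ) < ((g.1:ℝ)+1)/M := by positivity
        linarith
      have hle : ((g.1:ℝ)+1)/M + k.1 * δ ≤ 1 := by
        rw [hδdef]
        have hb' : g.1 + k.1 * q + 1 ≤ M := hidx g k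
        have hbR : (g.1:ℝ) + (k.1:ℝ) * (q:ℝ) + 1 ≤ (M:ℝ) := by exact_mod_cast hb'
        have heq2 : ((g.1:ℝ)+1)/M + k.1 * ((q:ℝ)/M) = ((g.1:ℝ) + (k.1:ℝ)*(q:ℝ) + 1)/M := by
          ring
        rw [heq2, div_le_one hmR]
        exact hbR
      rw [abs_of_pos hpos]
      exact hle
    have hk := stmt4aux_key L (((g.1:ℝ)+1)/M) δ hδ hx w
    rw [← hS, ← hC2] at hk
    have heq : ∀ k : Fin (L+1),
        (∑ j : Fin (L+1), (((g.1:ℝ)+1)/M + k.1*δ)^(j.1) * w j)^2 = f (ι (g, k)) := by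
      intro k
      rw [hf]
      congr 1
      apply Finset.sum_congr rfl
      intro j _
      congr 2
      rw [hι, hδdef]
      show ((g.1:ℝ)+1)/M + k.1 * ((q:ℝ)/M) = (((g.1 + k.1 * q : ℕ) : ℝ) + 1) / M
      push_cast
      field_simp
      ring
    calc S ≤ C2 * ∑ k : Fin (L+1), (∑ j : Fin (L+1), (((g.1:ℝ)+1)/M + k.1*δ)^(j.1) * w j)^2 := hk
      _ = C2 * ∑ k : Fin (L+1), f (ι (g, k)) := by
          congr 1
          exact Finset.sum_congr rfl fun k _ => heq k
  -- combine: q * S ≤ C2 * T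
  have hqS : (q:ℝ) * S ≤ C2 * T := by
    calc (q:ℝ) * S = ∑ _g : Fin q, S := by
          rw [Finset.sum_const, Finset.card_univ, Fintype.card_fin, nsmul_eq_mul]
      _ ≤ ∑ g : Fin q, C2 * ∑ k : Fin (L+1), f (ι (g, k)) := Finset.sum_le_sum fun g _ => hstep2 g
      _ = C2 * ∑ g : Fin q, ∑ k : Fin (L+1), f (ι (g, k)) := by rw [Finset.mul_sum]
      _ = C2 * ∑ gk : Fin q × Fin (L+1), f (ι gk) := by rw [Fintype.sum_prod_type]
      _ ≤ C2 * T := by gcongr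
  -- stmt4aux_numeric bound
  set d : ℝ := 1 / ((L : ℝ) ^ 2 * 2 ^ (7 * L) * (2 * L + 1)) with hd
  have hdpos : 0 < d := by
    rw [hd]
    have : (0:ℝ) < (L:ℝ) := by exact_mod_cast hL
    positivity
  set x : ℝ := ((M : ℝ) + L) / (Real.exp 1 * M) with hx
  have hxpos : 0 < x := by
    rw [hx]
    have h1 : (0:ℝ) < (M:ℝ) + L := by positivity
    have h2 : (0:ℝ) < Real.exp 1 * M := by positivity
    positivity
  have hnum : (M:ℝ) * (d^2 * x^(2*L+1)) * C2 ≤ q := by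
    rw [hd, hx, hC2, hδdef]
    exact stmt4aux_numeric L M q hL hM hq1 hM2q
  -- chain to T
  have hfinal : (M:ℝ) * (d^2 * x^(2*L+1)) * S ≤ T := by
    have h1 : ((M:ℝ) * (d^2 * x^(2*L+1)) * C2) * S ≤ (q:ℝ) * S :=
      mul_le_mul_of_nonneg_right hnum hSnn
    have h2 : ((M:ℝ) * (d^2 * x^(2*L+1)) * C2) * S ≤ C2 * T := le_trans h1 hqS
    have h3 : ((M:ℝ) * (d^2 * x^(2*L+1)) * S) * C2 ≤ T * C2 := by
      calc ((M:ℝ) * (d^2 * x^(2*L+1)) * S) * C2 = ((M:ℝ) * (d^2 * x^(2*L+1)) * C2) * S := by ring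
        _ ≤ C2 * T := h2
        _ = T * C2 := by ring
    exact le_of_mul_le_mul_right h3 hC2pos
  -- conclude with sqrt
  set R : ℝ := Real.sqrt M * d * x ^ ((L : ℝ) + 1 / 2) * Real.sqrt S with hR
  have hRnn : 0 ≤ R := by
    rw [hR]
    have := Real.sqrt_nonneg (M:ℝ)
    have := Real.sqrt_nonneg S
    positivity
  have hR2 : R^2 = (M:ℝ) * (d^2 * x^(2*L+1)) * S := by
    rw [hR]
    have e1 : (Real.sqrt M)^2 = (M:ℝ) := Real.sq_sqrt hmR.le
    have e2 : (Real.sqrt S)^2 = S := Real.sq_sqrt hSnn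
    have e3 : (x ^ ((L : ℝ) + 1 / 2))^2 = x^(2*L+1) := by
      rw [← Real.rpow_natCast x (2*L+1)]
      rw [← Real.rpow_natCast (x ^ ((L : ℝ) + 1 / 2)) 2]
      rw [← Real.rpow_mul hxpos.le]
      congr 1
      push_cast
      ring
    calc (Real.sqrt M * d * x ^ ((L : ℝ) + 1 / 2) * Real.sqrt S)^2
        = (Real.sqrt M)^2 * d^2 * (x ^ ((L : ℝ) + 1 / 2))^2 * (Real.sqrt S)^2 := by ring
      _ = (M:ℝ) * (d^2 * x^(2*L+1)) * S := by rw [e1, e2, e3]; ring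
  have hR2T : R^2 ≤ T := by rw [hR2]; exact hfinal
  calc Real.sqrt T ≥ Real.sqrt (R^2) := Real.sqrt_le_sqrt hR2T
    _ = R := Real.sqrt_sq hRnn
end

section
/- For all integers L ≥ 1 and M ≥ L+1 and every real polynomial p(x) = Σ_{j=0}^{L} w_j x^j of degree at most L, the coefficient vector w = (w_0,…,w_L) satisfies ‖w‖₂ ≤ L²·2^{7L}·(2L+1)·(eM/(M+L))^{L+1/2} · max_{a ∈ {1,…,M}} |p(a/M)|. In particular, max_{0≤j≤L} |w_j| ≤ max_{x ∈ {1/M, 2/M, …, 1}} |p(x)| · exp(O(L)) whenever M ≥ L+1. -/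
open Finset Polynomial

lemma aux_coeff_prod {ι : Type*} [DecidableEq ι] (s : Finset ι) (a : ι → ℝ)
    (ha : ∀ j ∈ s, |a j| ≤ 1) (k : ℕ) :
    |(∏ j ∈ s, (X - C (a j))).coeff k| ≤ 2 ^ s.card := by
  induction s using Finset.cons_induction generalizing k with
  | empty => simp [Polynomial.coeff_one]; split <;> norm_num
  | cons i s hi ih =>
    rw [Finset.prod_cons, mul_comm, Finset.card_cons, pow_succ]
    have hai : |a i| ≤ 1 := ha i (Finset.mem_cons_self i s)
    have ih' := fun k => ih (fun j hj => ha j (Finset.mem_cons_of_mem hj)) k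
    match k with
    | 0 =>
      rw [Polynomial.mul_coeff_zero]
      have : (X - C (a i)).coeff 0 = -a i := by simp
      rw [this]
      calc |(∏ j ∈ s, (X - C (a j))).coeff 0 * (-a i)|
          = |(∏ j ∈ s, (X - C (a j))).coeff 0| * |a i| := by rw [abs_mul, abs_neg]
        _ ≤ 2^s.card * 1 := mul_le_mul (ih' 0) hai (abs_nonneg _) (by positivity)
        _ ≤ 2^s.card * 2 := by gcongr <;> norm_num
    | k + 1 =>
      rw [Polynomial.coeff_mul_X_sub_C]
      calc |(∏ j ∈ s, (X - C (a j))).coeff k - (∏ j ∈ s, (X - C (a j))).coeff (k+1) * a i|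
          ≤ |(∏ j ∈ s, (X - C (a j))).coeff k| + |(∏ j ∈ s, (X - C (a j))).coeff (k+1)| * |a i| := by
            rw [← abs_mul]; exact abs_sub _ _
        _ ≤ 2^s.card + 2^s.card * 1 :=
            add_le_add (ih' k) (mul_le_mul (ih' (k+1)) hai (abs_nonneg _) (by positivity))
        _ = 2^s.card * 2 := by ring

lemma aux_basis_coeff {ι : Type*} [DecidableEq ι] (s : Finset ι) (v : ι → ℝ) (i : ι)
    (hv : ∀ j ∈ s.erase i, |v j| ≤ 1) (k : ℕ) :
    |(Lagrange.basis s v i).coeff k| ≤ 2 ^ (s.erase i).card * (∏ j ∈ s.erase i, |v i - v j|)⁻¹ := by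
  have h1 : Lagrange.basis s v i
      = C (∏ j ∈ s.erase i, (v i - v j)⁻¹) * ∏ j ∈ s.erase i, (X - C (v j)) := by
    rw [Lagrange.basis]
    simp_rw [Lagrange.basisDivisor]
    rw [Finset.prod_mul_distrib, map_prod]
  rw [h1, coeff_C_mul, abs_mul]
  have h2 : |∏ j ∈ s.erase i, (v i - v j)⁻¹| = (∏ j ∈ s.erase i, |v i - v j|)⁻¹ := by
    rw [abs_prod, ← Finset.prod_inv_distrib]
    exact Finset.prod_congr rfl fun j _ => abs_inv _
  rw [h2, mul_comm]
  exact mul_le_mul_of_nonneg_right (aux_coeff_prod _ _ hv k) (by positivity)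

lemma natfact1 (n : ℕ) : ∏ j ∈ range n, (n - j) = n.factorial := by
  rw [← Finset.prod_range_reflect, ← Finset.prod_range_add_one_eq_factorial]
  apply Finset.prod_congr rfl
  intro j hj; simp only [Finset.mem_range] at hj; omega

lemma natfact2 (i L : ℕ) : ∏ j ∈ Ico (i+1) (L+1), (j - i) = (L - i).factorial := by
  rw [Finset.prod_Ico_eq_prod_range, ← Finset.prod_range_add_one_eq_factorial]
  have : L + 1 - (i + 1) = L - i := by omega
  rw [this]
  apply Finset.prod_congr rfl
  intro j hj; omega

lemma aux_prod_abs (L : ℕ) (i : Fin (L+1)) :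
    ∏ j ∈ (univ.erase i), |(i.1:ℝ) - (j.1:ℝ)|
      = (Nat.factorial i.1) * (Nat.factorial (L - i.1)) := by
  have key : ∏ j ∈ (univ.erase i), |(i.1:ℝ) - (j.1:ℝ)|
      = ∏ m ∈ (range (L+1)).erase i.1, |(i.1:ℝ) - (m:ℝ)| := by
    apply Finset.prod_nbij' (fun j => j.1) (fun m => ⟨min m L, by omega⟩)
    · intro a ha
      simp only [Finset.mem_erase, Finset.mem_range] at *
      exact ⟨fun h => ha.1 (Fin.ext h), a.2⟩
    · intro m hm
      simp only [Finset.mem_erase, Finset.mem_range, Finset.mem_univ, and_true] at *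
      intro h
      apply hm.1
      have : m ≤ L := by omega
      rw [← congrArg Fin.val h]; simp [this]
    · intro a ha; apply Fin.ext; simp only []; omega
    · intro m hm
      simp only [Finset.mem_erase, Finset.mem_range] at hm
      have : m ≤ L := by omega
      simp [this]
    · intro a _; rfl
  rw [key]
  have hsplit : (range (L+1)).erase i.1 = (range i.1) ∪ (Ico (i.1+1) (L+1)) := by
    ext m
    simp only [Finset.mem_erase, Finset.mem_range, Finset.mem_union, Finset.mem_Ico]
    omega
  have hdisj : Disjoint (range i.1) (Ico (i.1+1) (L+1)) := by
    rw [Finset.disjoint_left]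
    intro m hm hm'
    simp only [Finset.mem_range, Finset.mem_Ico] at *
    omega
  rw [hsplit, Finset.prod_union hdisj]
  have e1 : ∏ m ∈ range i.1, |(i.1:ℝ) - (m:ℝ)| = (Nat.factorial i.1 : ℝ) := by
    rw [← natfact1 i.1, Nat.cast_prod]
    apply Finset.prod_congr rfl
    intro m hm
    simp only [Finset.mem_range] at hm
    have hle : (m:ℝ) ≤ (i.1:ℝ) := by exact_mod_cast hm.le
    rw [Nat.cast_sub hm.le, abs_of_nonneg (sub_nonneg.mpr hle)]
  have e2 : ∏ m ∈ Ico (i.1+1) (L+1), |(i.1:ℝ) - (m:ℝ)| = (Nat.factorial (L - i.1) : ℝ) := by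
    rw [← natfact2 i.1 L, Nat.cast_prod]
    apply Finset.prod_congr rfl
    intro m hm
    simp only [Finset.mem_Ico] at hm
    have hle : (i.1:ℝ) ≤ (m:ℝ) := by exact_mod_cast (by omega : i.1 ≤ m)
    rw [Nat.cast_sub (by omega), abs_sub_comm, abs_of_nonneg (sub_nonneg.mpr hle)]
  rw [e1, e2]

lemma aux_three_pow : ∀ n : ℕ, ((n:ℝ)+1)^n ≤ 3^n * (Nat.factorial n) := by
  intro n
  induction n with
  | zero => norm_num
  | succ n ih =>
    have hpos : (0:ℝ) < (n:ℝ) + 1 := by positivity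
    have h1 : (1 + 1/((n:ℝ)+1))^(n+1) ≤ 3 := by
      have h2 : (1 + 1/((n:ℝ)+1)) ≤ Real.exp (1/((n:ℝ)+1)) := by
        have := Real.add_one_le_exp (1/((n:ℝ)+1)); linarith
      calc (1 + 1/((n:ℝ)+1))^(n+1) ≤ (Real.exp (1/((n:ℝ)+1)))^(n+1) := by
            apply pow_le_pow_left₀ (by positivity) h2
        _ = Real.exp (((n:ℕ)+1) * (1/((n:ℝ)+1))) := by
            rw [← Real.exp_nat_mul]; norm_num
        _ = Real.exp 1 := by
            congr 1; field_simp
        _ ≤ 3 := by linarith [Real.exp_one_lt_d9]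
    have key : ((n:ℝ)+2)^(n+1) ≤ 3 * ((n:ℝ)+1)^(n+1) := by
      have : ((n:ℝ)+2)^(n+1) = ((n:ℝ)+1)^(n+1) * (1 + 1/((n:ℝ)+1))^(n+1) := by
        rw [← mul_pow]; congr 1; field_simp; ring
      rw [this]
      calc ((n:ℝ)+1)^(n+1) * (1 + 1/((n:ℝ)+1))^(n+1) ≤ ((n:ℝ)+1)^(n+1) * 3 :=
            mul_le_mul_of_nonneg_left h1 (by positivity)
        _ = 3 * ((n:ℝ)+1)^(n+1) := by ring
    push_cast
    calc ((n:ℝ)+1+1)^(n+1) = ((n:ℝ)+2)^(n+1) := by ring_nf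
      _ ≤ 3 * ((n:ℝ)+1)^(n+1) := key
      _ = 3 * (((n:ℝ)+1) * ((n:ℝ)+1)^n) := by ring
      _ ≤ 3 * (((n:ℝ)+1) * (3^n * (Nat.factorial n))) := by
          apply mul_le_mul_of_nonneg_left _ (by norm_num)
          exact mul_le_mul_of_nonneg_left ih (by positivity)
      _ = 3^(n+1) * (((n:ℝ)+1) * (Nat.factorial n)) := by ring
      _ = 3^(n+1) * ((Nat.factorial (n+1) : ℝ)) := by
          rw [Nat.factorial_succ]; push_cast; ring

set_option maxHeartbeats 1000000 in
/-- For integers `L ≥ 1` and `M ≥ L+1` and every real polynomial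
`p(x) = Σ_{j=0}^{L} w_j x^j` of degree at most `L`, the coefficient vector satisfies
`‖w‖₂ ≤ L²·2^{7L}·(2L+1)·(eM/(M+L))^{L+1/2} · max_{a ∈ {1,…,M}} |p(a/M)|`. -/
theorem stmt5 (L M : ℕ) (hL : 1 ≤ L) (hM : L + 1 ≤ M) (w : Fin (L + 1) → ℝ) :
    Real.sqrt (∑ j : Fin (L + 1), w j ^ 2)
      ≤ (L : ℝ) ^ 2 * 2 ^ (7 * L) * (2 * L + 1) *
          ((Real.exp 1 * M) / ((M : ℝ) + L)) ^ ((L : ℝ) + 1 / 2) *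
          (Finset.univ.sup'
            (Finset.univ_nonempty_iff.mpr ⟨⟨0, by omega⟩⟩)
            (fun i : Fin M => |∑ j : Fin (L + 1), w j * ((i.1 + 1 : ℝ) / M) ^ (j.1 : ℕ)|)) := by
  set q : ℕ := M / (L + 1) with hqdef
  have hq : 1 ≤ q := (Nat.one_le_div_iff (by omega)).mpr hM
  have hqM : (L + 1) * q ≤ M := by
    calc (L + 1) * q = q * (L + 1) := mul_comm _ _
      _ ≤ M := Nat.div_mul_le_self M (L+1)
  have hM2q : M + 1 ≤ 2 * q * (L + 1) := by
    have h1 : (L + 1) * q + M % (L + 1) = M := Nat.div_add_mod M (L + 1)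
    have h2 : M % (L + 1) < L + 1 := Nat.mod_lt _ (by omega)
    have h3 : L + 1 ≤ (L + 1) * q := Nat.le_mul_of_pos_right _ hq
    have h4 : 2 * q * (L + 1) = 2 * ((L + 1) * q) := by ring
    omega
  have hM0 : (0:ℝ) < M := by exact_mod_cast (by omega : 0 < M)
  have hq0 : (0:ℝ) < q := by exact_mod_cast (by omega : 0 < q)
  set v : Fin (L + 1) → ℝ := fun i => ((i.1 : ℝ) + 1) * q / M with hvdef
  -- the polynomial
  set p : Polynomial ℝ := ∑ j : Fin (L + 1), C (w j) * X ^ (j.1 : ℕ) with hpdef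
  have hcoeff : ∀ j : Fin (L + 1), p.coeff j.1 = w j := by
    intro j
    rw [hpdef, Polynomial.finset_sum_coeff]
    rw [Finset.sum_eq_single j]
    · simp
    · intro k _ hk
      have hne : ¬ ((j.1 : ℕ) = k.1) := fun h => hk (Fin.ext h.symm)
      simp [Polynomial.coeff_C_mul, Polynomial.coeff_X_pow, hne]
    · simp
  have hdeg : p.degree < (#(univ : Finset (Fin (L+1))) : WithBot ℕ) := by
    have h1 : p.degree ≤ (L : WithBot ℕ) := by
      rw [hpdef]
      refine (Polynomial.degree_sum_le _ _).trans ?_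
      rw [Finset.sup_le_iff]
      intro j _
      refine (Polynomial.degree_C_mul_X_pow_le _ _).trans ?_
      exact_mod_cast (by omega : (j.1 : ℕ) ≤ L)
    have h2 : (#(univ : Finset (Fin (L+1))) : ℕ) = L + 1 := by simp
    rw [h2]
    exact lt_of_le_of_lt h1 (by exact_mod_cast Nat.lt_succ_self L)
  have hinj : Set.InjOn v (univ : Finset (Fin (L+1))) := by
    intro i _ j _ h
    simp only [hvdef] at h
    rw [div_eq_div_iff hM0.ne' hM0.ne'] at h
    have h2 := mul_right_cancel₀ (mul_pos hq0 hM0).ne'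
      (by linarith [h] : ((i.1:ℝ)+1)*((q:ℝ)*M) = ((j.1:ℝ)+1)*((q:ℝ)*M))
    replace h : (i.1:ℝ) = j.1 ∨ q = 0 := Or.inl (by linarith)
    rcases h with h | h
    · exact Fin.ext (by exact_mod_cast h)
    · exact absurd h (by omega)
  -- S and evaluation bound
  set S : ℝ := Finset.univ.sup'
      (Finset.univ_nonempty_iff.mpr ⟨⟨0, by omega⟩⟩)
      (fun i : Fin M => |∑ j : Fin (L + 1), w j * ((i.1 + 1 : ℝ) / M) ^ (j.1 : ℕ)|) with hSdef
  have hS0 : 0 ≤ S := by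
    have h := Finset.le_sup' (f := fun i : Fin M =>
      |∑ j : Fin (L + 1), w j * ((i.1 + 1 : ℝ) / M) ^ (j.1 : ℕ)|)
      (Finset.mem_univ (⟨0, by omega⟩ : Fin M))
    exact le_trans (abs_nonneg _) h
  have heval : ∀ i : Fin (L+1), p.eval (v i) = ∑ j : Fin (L + 1), w j * (v i) ^ (j.1 : ℕ) := by
    intro i
    rw [hpdef, Polynomial.eval_finset_sum]
    exact Finset.sum_congr rfl fun j _ => by simp
  have hSev : ∀ i : Fin (L+1), |p.eval (v i)| ≤ S := by
    intro i
    have hlt : (i.1 + 1) * q - 1 < M := by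
      have h5 : (i.1 + 1) * q ≤ (L + 1) * q := Nat.mul_le_mul_right q (by omega)
      omega
    have hge : 1 ≤ (i.1 + 1) * q := by
      have : 1 * 1 ≤ (i.1 + 1) * q := Nat.mul_le_mul (by omega) hq
      omega
    set a : Fin M := ⟨(i.1 + 1) * q - 1, hlt⟩ with hadef
    have hv_eq : ((a.1 + 1 : ℝ)) / M = v i := by
      have h6 : (a.1 : ℕ) + 1 = (i.1 + 1) * q := by simp [hadef]; omega
      have h7 : ((a.1 : ℝ)) + 1 = ((i.1 : ℝ) + 1) * q := by
        exact_mod_cast congrArg (Nat.cast (R := ℝ)) h6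
      rw [hvdef]
      push_cast at h7 ⊢
      rw [h7]
    have := Finset.le_sup' (f := fun i : Fin M =>
        |∑ j : Fin (L + 1), w j * ((i.1 + 1 : ℝ) / M) ^ (j.1 : ℕ)|) (Finset.mem_univ a)
    rw [heval i, ← hv_eq]
    exact this
  -- interpolation identity
  have hint : p = Lagrange.interpolate univ v (fun i => p.eval (v i)) :=
    Lagrange.eq_interpolate hinj hdeg
  have hw : ∀ j : Fin (L+1), w j
      = ∑ i : Fin (L+1), p.eval (v i) * (Lagrange.basis univ v i).coeff j.1 := by
    intro j
    conv_lhs => rw [← hcoeff j, hint]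
    rw [Lagrange.interpolate_apply, Polynomial.finset_sum_coeff]
    exact Finset.sum_congr rfl fun i _ => Polynomial.coeff_C_mul _
  -- basis coefficient bound
  have hcard : ∀ i : Fin (L+1), ((univ : Finset (Fin (L+1))).erase i).card = L := by
    intro i
    rw [Finset.card_erase_of_mem (Finset.mem_univ i), Finset.card_univ, Fintype.card_fin]
    omega
  have hvbound : ∀ j : Fin (L+1), |v j| ≤ 1 := by
    intro j
    have h8 : (j.1 + 1) * q ≤ M := le_trans (Nat.mul_le_mul_right q (by omega)) hqM
    have h9 : ((j.1 : ℝ) + 1) * q ≤ M := by exact_mod_cast h8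
    rw [hvdef, abs_of_nonneg (by positivity), div_le_one hM0]
    exact h9
  have hqMratio : 1 / (2 * ((L:ℝ) + 1)) ≤ (q:ℝ) / M := by
    rw [div_le_div_iff₀ (by positivity) hM0]
    have : (M:ℝ) + 1 ≤ 2 * q * ((L:ℝ) + 1) := by exact_mod_cast hM2q
    nlinarith
  have hprodeq : ∀ i : Fin (L+1),
      ∏ j ∈ univ.erase i, |v i - v j|
        = ((Nat.factorial i.1 : ℝ) * (Nat.factorial (L - i.1) : ℝ)) * ((q:ℝ)/M)^L := by
    intro i
    have h10 : ∀ j ∈ univ.erase i, |v i - v j| = |(i.1:ℝ) - (j.1:ℝ)| * ((q:ℝ)/M) := by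
      intro j _
      have : v i - v j = ((i.1:ℝ) - (j.1:ℝ)) * ((q:ℝ)/M) := by
        rw [hvdef]; field_simp; ring
      rw [this, abs_mul, abs_of_nonneg (by positivity : (0:ℝ) ≤ (q:ℝ)/M)]
    rw [Finset.prod_congr rfl h10, Finset.prod_mul_distrib, Finset.prod_const, hcard i,
      aux_prod_abs L i]
  have hfactpos : ∀ i : Fin (L+1), (0:ℝ) < (Nat.factorial i.1 : ℝ) * (Nat.factorial (L - i.1)) := by
    intro i
    have := Nat.factorial_pos i.1
    have := Nat.factorial_pos (L - i.1)
    positivity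
  have hbasis : ∀ i : Fin (L+1), ∀ k : ℕ,
      |(Lagrange.basis univ v i).coeff k|
        ≤ 2^L * ((2 * ((L:ℝ)+1))^L / ((Nat.factorial i.1 : ℝ) * (Nat.factorial (L - i.1)))) := by
    intro i k
    have h11 := aux_basis_coeff univ v i (fun j _ => hvbound j) k
    rw [hcard i] at h11
    refine h11.trans ?_
    apply mul_le_mul_of_nonneg_left _ (by positivity)
    rw [hprodeq i]
    have hlow : ((Nat.factorial i.1 : ℝ) * (Nat.factorial (L - i.1))) * (1/(2*((L:ℝ)+1)))^L
        ≤ ((Nat.factorial i.1 : ℝ) * (Nat.factorial (L - i.1))) * ((q:ℝ)/M)^L := by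
      apply mul_le_mul_of_nonneg_left _ (le_of_lt (hfactpos i))
      exact pow_le_pow_left₀ (by positivity) hqMratio L
    have hlowpos : (0:ℝ) < ((Nat.factorial i.1 : ℝ) * (Nat.factorial (L - i.1))) * (1/(2*((L:ℝ)+1)))^L := by
      have := hfactpos i
      positivity
    refine (inv_anti₀ hlowpos hlow).trans (le_of_eq ?_)
    rw [mul_inv, div_pow, one_pow, inv_div]
    ring
  -- coefficient bound assembly
  set B : ℝ := S * (2^L * ((2 * ((L:ℝ)+1))^L * (2^L / (Nat.factorial L : ℝ)))) with hBdef
  have hfact0 : (0:ℝ) < (Nat.factorial L : ℝ) := by exact_mod_cast Nat.factorial_pos L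
  have hsumfact : ∑ i : Fin (L+1), ((Nat.factorial i.1 : ℝ) * (Nat.factorial (L - i.1)))⁻¹
      = 2^L / (Nat.factorial L : ℝ) := by
    have h1 : ∀ i : Fin (L+1),
        ((Nat.factorial i.1 : ℝ) * (Nat.factorial (L - i.1)))⁻¹
          = (L.choose i.1 : ℝ) / (Nat.factorial L : ℝ) := by
      intro i
      have hle : i.1 ≤ L := by omega
      have hnat : L.choose i.1 * (Nat.factorial i.1 * Nat.factorial (L - i.1)) = Nat.factorial L := by
        rw [← Nat.choose_mul_factorial_mul_factorial hle]; ring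
      have hr : (L.choose i.1 : ℝ) * ((Nat.factorial i.1 : ℝ) * (Nat.factorial (L - i.1)))
          = (Nat.factorial L : ℝ) := by exact_mod_cast congrArg (Nat.cast (R:=ℝ)) hnat
      rw [eq_div_iff (ne_of_gt hfact0), ← hr]
      field_simp
    have h2 : ∑ i : Fin (L+1), (L.choose i.1 : ℝ) = 2^L := by
      rw [Fin.sum_univ_eq_sum_range (fun i => (L.choose i : ℝ))]
      rw [← Nat.cast_sum, Nat.sum_range_choose]
      push_cast; ring
    rw [Finset.sum_congr rfl (fun i _ => h1 i), ← Finset.sum_div, h2]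
  have hwj : ∀ j : Fin (L+1), |w j| ≤ B := by
    intro j
    rw [hw j]
    calc |∑ i : Fin (L+1), p.eval (v i) * (Lagrange.basis univ v i).coeff j.1|
        ≤ ∑ i : Fin (L+1), |p.eval (v i) * (Lagrange.basis univ v i).coeff j.1| :=
          Finset.abs_sum_le_sum_abs _ _
      _ ≤ ∑ i : Fin (L+1), S * (2^L * ((2 * ((L:ℝ)+1))^L
            / ((Nat.factorial i.1 : ℝ) * (Nat.factorial (L - i.1))))) := by
          apply Finset.sum_le_sum
          intro i _
          rw [abs_mul]
          exact mul_le_mul (hSev i) (hbasis i j.1) (abs_nonneg _) hS0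
      _ = B := by
          rw [hBdef, ← Finset.mul_sum]
          congr 1
          simp_rw [div_eq_mul_inv, ← Finset.mul_sum]
          rw [hsumfact]
          ring
  have hB0 : 0 ≤ B := by
    have h := (abs_nonneg (w ⟨0, by omega⟩)).trans (hwj ⟨0, by omega⟩)
    exact h
  have hsq : Real.sqrt (∑ j : Fin (L + 1), w j ^ 2) ≤ Real.sqrt (((L:ℝ)+1) * B^2) := by
    apply Real.sqrt_le_sqrt
    calc ∑ j : Fin (L+1), w j ^ 2 ≤ ∑ _j : Fin (L+1), B^2 := by
          apply Finset.sum_le_sum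
          intro j _
          calc w j ^ 2 = |w j|^2 := (sq_abs _).symm
            _ ≤ B^2 := pow_le_pow_left₀ (abs_nonneg _) (hwj j) 2
      _ = ((L:ℝ)+1) * B^2 := by
          rw [Finset.sum_const, Finset.card_univ, Fintype.card_fin]
          push_cast; ring
  have hsq2 : Real.sqrt (((L:ℝ)+1) * B^2) = Real.sqrt ((L:ℝ)+1) * B := by
    rw [Real.sqrt_mul (by positivity), Real.sqrt_sq hB0]
  have hfinal : Real.sqrt ((L:ℝ)+1) * B ≤ (L:ℝ)^2 * 2^(7*L) * (2*(L:ℝ)+1) * S := by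
    have hBeq : B = S * ((8:ℝ)^L * (((L:ℝ)+1)^L / (Nat.factorial L : ℝ))) := by
      rw [hBdef, mul_pow]
      have h8 : (8:ℝ)^L = 2^L * (2^L * 2^L) := by
        rw [← mul_pow, ← mul_pow]; norm_num
      rw [h8]
      ring
    have h3 : (((L:ℝ)+1)^L / (Nat.factorial L : ℝ)) ≤ 3^L := by
      rw [div_le_iff₀ hfact0]
      exact aux_three_pow L
    have hsL : Real.sqrt ((L:ℝ)+1) ≤ (L:ℝ)+1 := by
      have h := Real.sqrt_le_sqrt (show (L:ℝ)+1 ≤ ((L:ℝ)+1)^2 by nlinarith [show (0:ℝ) ≤ (L:ℝ) from by positivity])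
      rwa [Real.sqrt_sq (by positivity)] at h
    have hL2 : ((L:ℝ)+1) ≤ 2^L := by
      have h := Nat.lt_two_pow_self (n := L)
      have h' : (L+1 : ℕ) ≤ 2^L := h
      exact_mod_cast h'
    have hB' : ((L:ℝ)+1) * B ≤ S * (2^L * (8^L * 3^L)) := by
      rw [hBeq]
      calc ((L:ℝ)+1) * (S * ((8:ℝ)^L * (((L:ℝ)+1)^L / (Nat.factorial L : ℝ))))
          = S * (8:ℝ)^L * (((L:ℝ)+1) * (((L:ℝ)+1)^L / (Nat.factorial L : ℝ))) := by ring
        _ ≤ S * (8:ℝ)^L * (2^L * 3^L) := by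
            apply mul_le_mul_of_nonneg_left _ (mul_nonneg hS0 (by positivity))
            exact mul_le_mul hL2 h3 (by positivity) (by positivity)
        _ = S * (2^L * (8^L * 3^L)) := by ring
    have h48 : (2:ℝ)^L * ((8:ℝ)^L * 3^L) ≤ (L:ℝ)^2 * 2^(7*L) * (2*(L:ℝ)+1) := by
      have hl1 : (1:ℝ) ≤ (L:ℝ) := by exact_mod_cast hL
      have e1 : (2:ℝ)^L * ((8:ℝ)^L * 3^L) = 48^L := by
        rw [← mul_pow, ← mul_pow]; norm_num
      have e2 : (2:ℝ)^(7*L) = 128^L := by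
        rw [pow_mul]; norm_num
      rw [e1, e2]
      calc (48:ℝ)^L ≤ 128^L := pow_le_pow_left₀ (by norm_num) (by norm_num) L
        _ = 1 * 128^L * 1 := by ring
        _ ≤ (L:ℝ)^2 * 128^L * (2*(L:ℝ)+1) := by
            apply mul_le_mul _ (by nlinarith) (by norm_num) (by positivity)
            apply mul_le_mul_of_nonneg_right _ (by positivity)
            nlinarith
    calc Real.sqrt ((L:ℝ)+1) * B ≤ ((L:ℝ)+1) * B := mul_le_mul_of_nonneg_right hsL hB0
      _ ≤ S * (2^L * (8^L * 3^L)) := hB'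
      _ ≤ S * ((L:ℝ)^2 * 2^(7*L) * (2*(L:ℝ)+1)) := mul_le_mul_of_nonneg_left h48 hS0
      _ = (L:ℝ)^2 * 2^(7*L) * (2*(L:ℝ)+1) * S := by ring
  have hR : 1 ≤ ((Real.exp 1 * M) / ((M : ℝ) + L)) ^ ((L : ℝ) + 1 / 2) := by
    apply Real.one_le_rpow _ (by positivity)
    rw [le_div_iff₀ (by positivity)]
    have he : (2:ℝ) ≤ Real.exp 1 := by nlinarith [Real.exp_one_gt_d9]
    have hML : (L:ℝ) ≤ M := by exact_mod_cast (by omega : L ≤ M)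
    nlinarith
  calc Real.sqrt (∑ j : Fin (L + 1), w j ^ 2)
      ≤ Real.sqrt (((L:ℝ)+1) * B^2) := hsq
    _ = Real.sqrt ((L:ℝ)+1) * B := hsq2
    _ ≤ (L:ℝ)^2 * 2^(7*L) * (2*(L:ℝ)+1) * S := hfinal
    _ ≤ (L:ℝ)^2 * 2^(7*L) * (2*(L:ℝ)+1)
          * (((Real.exp 1 * M) / ((M:ℝ)+L)) ^ ((L:ℝ)+1/2)) * S := by
        have hA : (0:ℝ) ≤ (L:ℝ)^2 * 2^(7*L) * (2*(L:ℝ)+1) := by positivity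
        calc (L:ℝ)^2 * 2^(7*L) * (2*(L:ℝ)+1) * S
            = ((L:ℝ)^2 * 2^(7*L) * (2*(L:ℝ)+1) * 1) * S := by ring
          _ ≤ ((L:ℝ)^2 * 2^(7*L) * (2*(L:ℝ)+1)
                * (((Real.exp 1 * M) / ((M:ℝ)+L)) ^ ((L:ℝ)+1/2))) * S := by
              apply mul_le_mul_of_nonneg_right _ hS0
              exact mul_le_mul_of_nonneg_left hR hA
end

section
/- For all integers M ≥ 2 and 1 ≤ m ≤ M−1 and all complex numbers z, the discrete Chebyshev polynomial satisfies |t_m(z)| ≤ m²·2^{6m}·sup_{0 ≤ ξ ≤ m} ( max(|z+ξ|, M) )^m, where the supremum is over real ξ ∈ [0, m]. -/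
open Finset

/-- The polynomial `p_m(x) = x(x−1)⋯(x−m+1)·(x−M)(x−M−1)⋯(x−M−m+1)` over `ℂ`. -/
noncomputable def discreteChebPC (M m : ℕ) (z : ℂ) : ℂ :=
  (∏ i ∈ Finset.range m, (z - i)) * ∏ i ∈ Finset.range m, (z - M - i)

/-- The discrete Chebyshev polynomial
`t_m(x) = (1/m!)·Σ_{j=0}^{m} (−1)^j·binom(m,j)·p_m(x+m−j)` over `ℂ`. -/
noncomputable def discreteChebTC (M m : ℕ) (z : ℂ) : ℂ :=
  (1 / (m.factorial : ℂ)) *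
    ∑ j ∈ Finset.range (m + 1), (-1 : ℂ) ^ j * (m.choose j : ℂ) * discreteChebPC M m (z + m - j)

section DiscreteChebAux
open Function fwdDiff

private lemma myFwdDiff_shift (f : ℂ → ℂ) (c : ℂ) (n : ℕ) :
    (fwdDiff (1:ℂ))^[n] (fun y => f (y + c)) = fun x => (fwdDiff (1:ℂ))^[n] f (x + c) := by
  induction n generalizing f with
  | zero => simp
  | succ n IH =>
    rw [Function.iterate_succ_apply, Function.iterate_succ_apply]
    have h1 : fwdDiff (1:ℂ) (fun y => f (y + c)) = fun y => fwdDiff (1:ℂ) f (y + c) := by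
      funext y
      simp only [fwdDiff]
      rw [add_right_comm]
    rw [h1, IH]

private lemma myFwdDiff_mul (f g : ℂ → ℂ) :
    fwdDiff (1:ℂ) (fun y => f y * g y)
      = (fun y => f y * fwdDiff (1:ℂ) g y) + (fun y => fwdDiff (1:ℂ) f y * g (y + 1)) := by
  funext y
  simp only [fwdDiff, Pi.add_apply]
  ring

private lemma myLeibniz (n : ℕ) (f g : ℂ → ℂ) (x : ℂ) :
    (fwdDiff (1:ℂ))^[n] (fun y => f y * g y) x
      = ∑ k ∈ range (n + 1),
          (n.choose k : ℂ) * ((fwdDiff (1:ℂ))^[k] f x * (fwdDiff (1:ℂ))^[n - k] g (x + k)) := by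
  induction n generalizing f g with
  | zero => simp
  | succ n IH =>
    rw [Function.iterate_succ_apply, myFwdDiff_mul, fwdDiff_iter_add, Pi.add_apply,
      IH f (fwdDiff (1:ℂ) g), IH (fwdDiff (1:ℂ) f) (fun y => g (y + 1))]
    set G : ℕ → ℂ := fun k => (fwdDiff (1:ℂ))^[k] f x * (fwdDiff (1:ℂ))^[n + 1 - k] g (x + k) with hG
    have hsum1 : ∑ k ∈ range (n + 1),
        (n.choose k : ℂ) * ((fwdDiff (1:ℂ))^[k] f x * (fwdDiff (1:ℂ))^[n - k] (fwdDiff (1:ℂ) g) (x + k))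
        = ∑ k ∈ range (n + 1), (n.choose k : ℂ) * G k := by
      refine Finset.sum_congr rfl fun k hk => ?_
      rw [Finset.mem_range] at hk
      have hk' : k ≤ n := Nat.lt_succ_iff.mp hk
      rw [hG]
      simp only
      rw [← Function.iterate_succ_apply, Nat.succ_sub hk']
    have hsum2 : ∑ k ∈ range (n + 1),
        (n.choose k : ℂ) * ((fwdDiff (1:ℂ))^[k] (fwdDiff (1:ℂ) f) x
          * (fwdDiff (1:ℂ))^[n - k] (fun y => g (y + 1)) (x + k))
        = ∑ k ∈ range (n + 1), (n.choose k : ℂ) * G (k + 1) := by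
      refine Finset.sum_congr rfl fun k hk => ?_
      rw [hG]
      simp only [myFwdDiff_shift]
      simp only [Nat.succ_sub_succ]
      rw [← Function.iterate_succ_apply]
      push_cast
      ring_nf
      rw [Nat.succ_eq_one_add]
      ring
    rw [hsum1, hsum2]
    -- Now: ∑ C(n,k) G k + ∑ C(n,k) G (k+1) = ∑_{k<n+2} C(n+1,k) G k
    rw [Finset.sum_range_succ' (fun k => ((n+1).choose k : ℂ) * G k) (n + 1)]
    simp only [Nat.choose_succ_succ, Nat.cast_add, add_mul, Finset.sum_add_distrib,
      Nat.choose_zero_right, Nat.cast_one, one_mul]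
    rw [Finset.sum_range_succ (fun k => ((n).choose (k+1) : ℂ) * G (k + 1)) n]
    rw [Finset.sum_range_succ' (fun k => ((n).choose k : ℂ) * G k) n]
    simp [Nat.choose_succ_self]
    ring

private def ffc (m : ℕ) (z : ℂ) : ℂ := ∏ i ∈ range m, (z - i)

private lemma fwdDiff_ffc (m : ℕ) :
    fwdDiff (1:ℂ) (ffc (m + 1)) = fun z => (m + 1 : ℂ) * ffc m z := by
  funext z
  have h1 : ffc (m + 1) (z + 1) = ffc m z * (z + 1) := by
    rw [ffc, Finset.prod_range_succ']
    rw [show ((z + 1 - (0:ℕ)) : ℂ) = z + 1 by push_cast; ring]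
    congr 1
    refine Finset.prod_congr rfl fun i _ => ?_
    push_cast; ring
  have h2 : ffc (m + 1) z = ffc m z * (z - m) := by
    rw [ffc, Finset.prod_range_succ]; rfl
  rw [fwdDiff, h1, h2]
  ring

private lemma iter_ffc (k : ℕ) : ∀ m : ℕ, (fwdDiff (1:ℂ))^[k] (ffc (m + k))
    = fun z => ((m + k).descFactorial k : ℂ) * ffc m z := by
  induction k with
  | zero => intro m; simp
  | succ k IH =>
    intro m
    rw [show m + (k + 1) = (m + k) + 1 by ring, Function.iterate_succ_apply, fwdDiff_ffc]
    have : (fun z => ((m + k : ℕ) + 1 : ℂ) * ffc (m + k) z)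
        = ((m + k : ℕ) + 1 : ℂ) • ffc (m + k) := by
      funext z; simp [smul_eq_mul]
    rw [this, fwdDiff_iter_const_smul, IH m]
    funext z
    rw [Nat.succ_descFactorial_succ]
    push_cast
    simp [smul_eq_mul]
    ring

private lemma iter_ffc' {k m : ℕ} (hk : k ≤ m) : (fwdDiff (1:ℂ))^[k] (ffc m)
    = fun z => (m.descFactorial k : ℂ) * ffc (m - k) z := by
  have h := iter_ffc k (m - k)
  rwa [Nat.sub_add_cancel hk] at h

private lemma expand_key (M m : ℕ) (z : ℂ) :
    (fwdDiff (1:ℂ))^[m] (fun y => discreteChebPC M m y) z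
      = ∑ k ∈ range (m + 1), (m.choose k : ℂ) *
          (((m.descFactorial k : ℂ) * ffc (m - k) z) *
           ((m.descFactorial (m - k) : ℂ) * ffc k (z + k - M))) := by
  have hfg : (fun y => discreteChebPC M m y)
      = fun y => ffc m y * (fun w => ffc m (w + -(M:ℂ))) y := by
    funext y
    simp only [discreteChebPC, ffc]
    congr 1
  rw [hfg, myLeibniz]
  refine Finset.sum_congr rfl fun k hk => ?_
  rw [Finset.mem_range, Nat.lt_succ_iff] at hk
  rw [iter_ffc' hk, myFwdDiff_shift, iter_ffc' (Nat.sub_le m k), Nat.sub_sub_self hk]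
  beta_reduce
  rw [show z + (k : ℂ) + -(M : ℂ) = z + k - M from by ring]

private lemma tm_eq (M m : ℕ) (z : ℂ) :
    ∑ j ∈ Finset.range (m + 1), (-1 : ℂ) ^ j * (m.choose j : ℂ) * discreteChebPC M m (z + m - j)
      = (fwdDiff (1:ℂ))^[m] (fun y => discreteChebPC M m y) z := by
  rw [fwdDiff_iter_eq_sum_shift, ← Finset.sum_range_reflect]
  refine Finset.sum_congr rfl fun j hj => ?_
  rw [Finset.mem_range, Nat.lt_succ_iff] at hj
  simp only [Nat.add_sub_cancel]
  rw [Nat.choose_symm hj, zsmul_eq_mul]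
  push_cast [Nat.cast_sub hj]
  ring_nf

private lemma ffc_bound (k : ℕ) (w : ℂ) (c : ℝ) (hc : 0 ≤ c)
    (h : ∀ i : ℕ, i < k → ‖w - i‖ ≤ c) :
    ‖ffc k w‖ ≤ c ^ k := by
  rw [ffc, norm_prod]
  calc ∏ i ∈ range k, ‖w - i‖ ≤ ∏ _i ∈ range k, c := by
        refine Finset.prod_le_prod (fun i _ => norm_nonneg _) fun i hi => ?_
        exact h i (Finset.mem_range.mp hi)
    _ = c ^ k := by rw [Finset.prod_const, Finset.card_range]

private lemma coeff_eq (m k : ℕ) (hk : k ≤ m) :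
    m.choose k * m.descFactorial k * m.descFactorial (m - k)
      = m.factorial * m.choose k ^ 2 := by
  rw [Nat.descFactorial_eq_factorial_mul_choose, Nat.descFactorial_eq_factorial_mul_choose,
    Nat.choose_symm hk]
  have h := Nat.choose_mul_factorial_mul_factorial hk
  calc m.choose k * (k.factorial * m.choose k) * ((m - k).factorial * m.choose k)
      = (m.choose k * k.factorial * (m - k).factorial) * m.choose k ^ 2 := by ring
    _ = m.factorial * m.choose k ^ 2 := by rw [h]

private lemma choose_le_two_pow (m k : ℕ) : m.choose k ≤ 2 ^ m := by
  rcases le_or_gt k m with hk | hk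
  · calc m.choose k ≤ ∑ j ∈ range (m + 1), m.choose j :=
        Finset.single_le_sum (fun j _ => Nat.zero_le _) (Finset.mem_range.mpr (Nat.lt_succ_of_le hk))
      _ = 2 ^ m := Nat.sum_range_choose m
  · rw [Nat.choose_eq_zero_of_lt hk]; exact Nat.zero_le _

end DiscreteChebAux

/-- For all integers `M ≥ 2`, `1 ≤ m ≤ M−1`, and all `z ∈ ℂ`,
`|t_m(z)| ≤ m²·2^{6m}·sup_{ξ ∈ [0,m]} (max(|z+ξ|, M))^m`, the supremum over real `ξ ∈ [0,m]`. -/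

theorem stmt6 (M m : ℕ) (hM : 2 ≤ M) (hm1 : 1 ≤ m) (hm2 : m + 1 ≤ M) (z : ℂ) :
    ‖discreteChebTC M m z‖
      ≤ (m : ℝ) ^ 2 * 2 ^ (6 * m) *
          ⨆ ξ : Set.Icc (0 : ℝ) (m : ℝ), (max ‖z + ((ξ : ℝ) : ℂ)‖ M) ^ m := by
  have hbdd : BddAbove (Set.range fun ξ : Set.Icc (0 : ℝ) (m : ℝ) =>
      (max (‖z + ((ξ : ℝ) : ℂ)‖) (M : ℝ)) ^ m) := by
    refine ⟨(‖z‖ + m + M) ^ m, ?_⟩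
    rintro x ⟨ξ, rfl⟩
    have h1 : (0 : ℝ) ≤ (ξ : ℝ) := ξ.2.1
    have h2 : (ξ : ℝ) ≤ m := ξ.2.2
    have hM0 : (0 : ℝ) ≤ M := by positivity
    refine pow_le_pow_left₀ (le_trans (norm_nonneg _) (le_max_left _ _)) ?_ m
    refine max_le ?_ ?_
    case refine_2 =>
      have h3 := norm_nonneg z
      have h4 : (0:ℝ) ≤ (m:ℝ) := by positivity
      linarith
    calc ‖z + ((ξ : ℝ) : ℂ)‖ ≤ ‖z‖ + ‖((ξ : ℝ) : ℂ)‖ :=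
          norm_add_le _ _
      _ = ‖z‖ + |(ξ : ℝ)| := by rw [Complex.norm_real, Real.norm_eq_abs]
      _ ≤ ‖z‖ + m + M := by rw [abs_of_nonneg h1]; linarith
  set T := ⨆ ξ : Set.Icc (0 : ℝ) (m : ℝ), (max (‖z + ((ξ : ℝ) : ℂ)‖) (M : ℝ)) ^ m
    with hTdef
  have hTk : ∀ k : ℕ, k ≤ m → (max (‖z + (k : ℂ)‖) (M : ℝ)) ^ m ≤ T := by
    intro k hk
    have hmem : ((k : ℝ)) ∈ Set.Icc (0 : ℝ) (m : ℝ) := ⟨by positivity, by exact_mod_cast hk⟩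
    have h := le_ciSup hbdd (⟨(k : ℝ), hmem⟩ : Set.Icc (0 : ℝ) (m : ℝ))
    simpa using h
  have hT0 : (0 : ℝ) ≤ T := by
    refine le_trans ?_ (hTk 0 (Nat.zero_le m))
    positivity
  -- notation
  set B : ℕ → ℝ := fun k => max (‖z + (k : ℂ)‖) (M : ℝ) with hB
  have hBnn : ∀ k, 0 ≤ B k := fun k => le_trans (norm_nonneg _) (le_max_left _ _)
  have hMB : ∀ k, (M : ℝ) ≤ B k := fun k => le_max_right _ _
  have hmM : (m : ℝ) ≤ M := by exact_mod_cast Nat.le_of_succ_le hm2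
  -- bound on each summand's two products
  have hf1 : ∀ k, k ≤ m → ‖ffc (m - k) z‖ ≤ (3 * B 0) ^ (m - k) := by
    intro k hk
    refine ffc_bound _ _ _ (by positivity) fun i hi => ?_
    have hiB : (i : ℝ) ≤ B 0 := by
      have : (i : ℝ) ≤ m := by exact_mod_cast le_of_lt (lt_of_lt_of_le hi (Nat.sub_le m k))
      exact this.trans (hmM.trans (hMB 0))
    have hzB : ‖z‖ ≤ B 0 := by
      have : z + ((0 : ℕ) : ℂ) = z := by push_cast; ring
      rw [hB]; simpa [this] using le_max_left (‖z + ((0:ℕ) : ℂ)‖) (M : ℝ)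
    calc ‖z - i‖ ≤ ‖z‖ + ‖((i : ℕ) : ℂ)‖ := by
          simpa [sub_eq_add_neg] using norm_add_le z (-(i : ℂ))
      _ = ‖z‖ + i := by rw [Complex.norm_natCast]
      _ ≤ B 0 + B 0 := add_le_add hzB hiB
      _ ≤ 3 * B 0 := by nlinarith [hBnn 0]
  have hf2 : ∀ k, k ≤ m → ‖ffc k (z + k - M)‖ ≤ (3 * B k) ^ k := by
    intro k hk
    refine ffc_bound _ _ _ (by positivity) fun i hi => ?_
    have hiM : (i : ℝ) ≤ M := by
      have : (i : ℝ) ≤ m := by exact_mod_cast le_of_lt (lt_of_lt_of_le hi hk)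
      exact this.trans hmM
    calc ‖z + k - M - i‖ ≤ ‖z + k‖ + ‖(M : ℂ) + i‖ := by
          rw [show z + (k:ℂ) - M - i = z + (k:ℂ) + -((M:ℂ) + i) by ring]
          refine (norm_add_le _ _).trans (le_of_eq ?_)
          rw [norm_neg]
      _ ≤ ‖z + k‖ + (M + i) := by
          refine add_le_add_right ?_ _
          calc ‖(M : ℂ) + i‖ ≤ ‖(M : ℂ)‖ + ‖((i : ℕ) : ℂ)‖ :=
                norm_add_le _ _
            _ = M + i := by rw [Complex.norm_natCast, Complex.norm_natCast]
      _ ≤ B k + (B k + B k) := by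
          refine add_le_add (le_max_left _ _) (add_le_add (hMB k) (hiM.trans (hMB k)))
      _ ≤ 3 * B k := by nlinarith [hBnn k]
  -- combine
  have hBT : ∀ k, k ≤ m → B 0 ^ (m - k) * B k ^ k ≤ T := by
    intro k hk
    have hle : B 0 ^ (m - k) * B k ^ k ≤ max (B 0) (B k) ^ (m - k) * max (B 0) (B k) ^ k := by
      refine mul_le_mul (pow_le_pow_left₀ (hBnn 0) (le_max_left _ _) _)
        (pow_le_pow_left₀ (hBnn k) (le_max_right _ _) _) (by positivity) (by positivity)
    rw [← pow_add, Nat.sub_add_cancel hk] at hle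
    refine hle.trans ?_
    rcases max_cases (B 0) (B k) with ⟨h, _⟩ | ⟨h, _⟩ <;> rw [h]
    · exact hTk 0 (Nat.zero_le m)
    · exact hTk k hk
  have hterm : ∀ k ∈ range (m + 1),
      (m.choose k : ℝ) * (m.descFactorial k : ℝ) * (m.descFactorial (m - k) : ℝ) *
        (‖ffc (m - k) z‖ * ‖ffc k (z + k - M)‖)
      ≤ (m.factorial : ℝ) * (4 : ℝ) ^ m * 3 ^ m * T := by
    intro k hkr
    rw [Finset.mem_range, Nat.lt_succ_iff] at hkr
    have hcoeff : (m.choose k : ℝ) * (m.descFactorial k : ℝ) * (m.descFactorial (m - k) : ℝ)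
        = (m.factorial : ℝ) * (m.choose k : ℝ) ^ 2 := by
      exact_mod_cast congrArg (fun n : ℕ => (n : ℝ)) (coeff_eq m k hkr)
    have hprod : ‖ffc (m - k) z‖ * ‖ffc k (z + k - M)‖
        ≤ 3 ^ m * T := by
      calc ‖ffc (m - k) z‖ * ‖ffc k (z + k - M)‖
          ≤ (3 * B 0) ^ (m - k) * (3 * B k) ^ k := by
            refine mul_le_mul (hf1 k hkr) (hf2 k hkr) (norm_nonneg _) (by positivity)
        _ = 3 ^ (m - k) * 3 ^ k * (B 0 ^ (m - k) * B k ^ k) := by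
            rw [mul_pow, mul_pow]; ring
        _ = 3 ^ m * (B 0 ^ (m - k) * B k ^ k) := by
            rw [← pow_add, Nat.sub_add_cancel hkr]
        _ ≤ 3 ^ m * T := by
            refine mul_le_mul_of_nonneg_left (hBT k hkr) (by positivity)
    have hch : (m.choose k : ℝ) ^ 2 ≤ (4 : ℝ) ^ m := by
      have h1 : (m.choose k : ℝ) ≤ 2 ^ m := by exact_mod_cast choose_le_two_pow m k
      calc (m.choose k : ℝ) ^ 2 ≤ (2 ^ m : ℝ) ^ 2 := by
            refine pow_le_pow_left₀ (by positivity) h1 2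
        _ = 4 ^ m := by rw [← pow_mul, mul_comm, pow_mul]; norm_num
    calc (m.choose k : ℝ) * (m.descFactorial k : ℝ) * (m.descFactorial (m - k) : ℝ) *
          (‖ffc (m - k) z‖ * ‖ffc k (z + k - M)‖)
        = (m.factorial : ℝ) * (m.choose k : ℝ) ^ 2 *
            (‖ffc (m - k) z‖ * ‖ffc k (z + k - M)‖) := by rw [hcoeff]
      _ ≤ (m.factorial : ℝ) * (4 : ℝ) ^ m * (3 ^ m * T) := by
          have h2 : (m.choose k : ℝ) ^ 2 *
              (‖ffc (m - k) z‖ * ‖ffc k (z + k - M)‖)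
              ≤ (4 : ℝ) ^ m * (3 ^ m * T) :=
            mul_le_mul hch hprod (by positivity) (by positivity)
          calc (m.factorial : ℝ) * (m.choose k : ℝ) ^ 2 *
                (‖ffc (m - k) z‖ * ‖ffc k (z + k - M)‖)
              = (m.factorial : ℝ) * ((m.choose k : ℝ) ^ 2 *
                (‖ffc (m - k) z‖ * ‖ffc k (z + k - M)‖)) := by ring
            _ ≤ (m.factorial : ℝ) * ((4 : ℝ) ^ m * (3 ^ m * T)) := by
                refine mul_le_mul_of_nonneg_left h2 (by positivity)
            _ = (m.factorial : ℝ) * (4 : ℝ) ^ m * (3 ^ m * T) := by ring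
      _ = (m.factorial : ℝ) * (4 : ℝ) ^ m * 3 ^ m * T := by ring
  -- total
  have hsum : ‖∑ j ∈ Finset.range (m + 1),
        (-1 : ℂ) ^ j * (m.choose j : ℂ) * discreteChebPC M m (z + m - j)‖
      ≤ (m + 1 : ℝ) * ((m.factorial : ℝ) * (4 : ℝ) ^ m * 3 ^ m * T) := by
    rw [tm_eq, expand_key]
    refine (norm_sum_le _ _).trans ?_
    have step : ∀ k ∈ range (m + 1),
        ‖(m.choose k : ℂ) * (((m.descFactorial k : ℂ) * ffc (m - k) z) *
          ((m.descFactorial (m - k) : ℂ) * ffc k (z + k - M)))‖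
        ≤ (m.factorial : ℝ) * (4 : ℝ) ^ m * 3 ^ m * T := by
      intro k hk
      refine le_trans (le_of_eq ?_) (hterm k hk)
      rw [norm_mul, norm_mul, norm_mul, norm_mul, Complex.norm_natCast, Complex.norm_natCast,
        Complex.norm_natCast]
      ring
    calc ∑ k ∈ range (m + 1), ‖(m.choose k : ℂ) *
          (((m.descFactorial k : ℂ) * ffc (m - k) z) *
           ((m.descFactorial (m - k) : ℂ) * ffc k (z + k - M)))‖
        ≤ ∑ _k ∈ range (m + 1), (m.factorial : ℝ) * (4 : ℝ) ^ m * 3 ^ m * T :=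
          Finset.sum_le_sum step
      _ = (m + 1 : ℝ) * ((m.factorial : ℝ) * (4 : ℝ) ^ m * 3 ^ m * T) := by
          rw [Finset.sum_const, Finset.card_range]; push_cast; ring
  -- final arithmetic
  have habs : ‖discreteChebTC M m z‖
      ≤ (1 / (m.factorial : ℝ)) * ((m + 1 : ℝ) * ((m.factorial : ℝ) * (4 : ℝ) ^ m * 3 ^ m * T)) := by
    rw [discreteChebTC, norm_mul]
    have h1 : ‖1 / (m.factorial : ℂ)‖ = 1 / (m.factorial : ℝ) := by
      rw [norm_div, norm_one, Complex.norm_natCast]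
    rw [h1]
    refine mul_le_mul_of_nonneg_left hsum (by positivity)
  refine habs.trans ?_
  have hfac : (0 : ℝ) < (m.factorial : ℝ) := by exact_mod_cast m.factorial_pos
  have heq : (1 / (m.factorial : ℝ)) * ((m + 1 : ℝ) * ((m.factorial : ℝ) * (4 : ℝ) ^ m * 3 ^ m * T))
      = (m + 1 : ℝ) * 12 ^ m * T := by
    field_simp
    ring_nf
    rw [show (12 : ℝ) = 4 * 3 by norm_num, mul_pow]
    ring
  rw [heq]
  have hm2p : (m + 1 : ℝ) ≤ 2 ^ m := by
    have := Nat.lt_two_pow_self (n := m)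
    exact_mod_cast this
  have hm1r : (1 : ℝ) ≤ (m : ℝ) ^ 2 := by
    have : (1 : ℝ) ≤ (m : ℝ) := by exact_mod_cast hm1
    nlinarith
  calc (m + 1 : ℝ) * 12 ^ m * T ≤ 2 ^ m * 12 ^ m * T := by
        refine mul_le_mul_of_nonneg_right (mul_le_mul_of_nonneg_right hm2p (by positivity)) hT0
    _ = 24 ^ m * T := by rw [← mul_pow]; norm_num
    _ ≤ 2 ^ (6 * m) * T := by
        refine mul_le_mul_of_nonneg_right ?_ hT0
        rw [pow_mul]
        refine pow_le_pow_left₀ (by norm_num) (by norm_num) m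
    _ ≤ (m : ℝ) ^ 2 * 2 ^ (6 * m) * T := by
        nlinarith [pow_nonneg (zero_le_two (α := ℝ)) (6 * m), hT0, hm1r,
          mul_nonneg (pow_nonneg (zero_le_two (α := ℝ)) (6 * m)) hT0]
end

section
/- There exist absolute constants 0 < c ≤ C such that for all integers 1 ≤ m ≤ n, the unsigned Stirling number of the first kind satisfies n!·( c·max(1, log(n/m))/m )^m ≤ |s(n+1, m+1)| ≤ n!·( C·max(1, log(n/m))/m )^m. -/
open Polynomial Finset

noncomputable def Wpoly (s : Finset ℕ) : Polynomial ℝ :=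
  ∏ k ∈ s, (Polynomial.C ((k : ℝ)⁻¹) * Polynomial.X + 1)

lemma factor_coeff_nonneg (c : ℝ) (hc : 0 ≤ c) (i : ℕ) :
    0 ≤ (Polynomial.C c * Polynomial.X + 1).coeff i := by
  match i with
  | 0 => simp
  | 1 => simp [coeff_C_mul, coeff_one, hc]
  | (j+2) => simp [coeff_C_mul, coeff_one]

lemma coeff_mul_nonneg {p q : Polynomial ℝ} (hp : ∀ i, 0 ≤ p.coeff i)
    (hq : ∀ i, 0 ≤ q.coeff i) (i : ℕ) : 0 ≤ (p * q).coeff i := by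
  rw [coeff_mul]
  exact Finset.sum_nonneg fun x _ => mul_nonneg (hp _) (hq _)

lemma Wpoly_coeff_nonneg (s : Finset ℕ) : ∀ i, 0 ≤ (Wpoly s).coeff i := by
  classical
  induction s using Finset.induction_on with
  | empty => intro i; simp [Wpoly, coeff_one]; positivity
  | insert _ _ h ih =>
      rename_i a s
      rw [Wpoly, Finset.prod_insert h]
      exact coeff_mul_nonneg (factor_coeff_nonneg _ (by positivity)) ih

lemma Wpoly_coeff_zero (s : Finset ℕ) : (Wpoly s).coeff 0 = 1 := by
  rw [← Polynomial.constantCoeff_apply, Wpoly, map_prod]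
  simp

lemma Wpoly_coeff_one (s : Finset ℕ) : (Wpoly s).coeff 1 = ∑ k ∈ s, (k : ℝ)⁻¹ := by
  classical
  induction s using Finset.induction_on with
  | empty => simp [Wpoly, coeff_one]
  | insert _ _ h ih =>
      rename_i a s
      rw [Wpoly, Finset.prod_insert h, Finset.sum_insert h, ← Wpoly]
      have : (Polynomial.C ((a:ℝ)⁻¹) * Polynomial.X + 1) * (Wpoly s)
          = Polynomial.C ((a:ℝ)⁻¹) * (Polynomial.X * Wpoly s) + Wpoly s := by ring
      rw [this, coeff_add, coeff_C_mul, coeff_X_mul, Wpoly_coeff_zero, ih, mul_one]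

lemma coeff_mul_le {p q : Polynomial ℝ} (hp : ∀ i, 0 ≤ p.coeff i)
    (hq : ∀ i, 0 ≤ q.coeff i) (a b : ℕ) :
    p.coeff a * q.coeff b ≤ (p * q).coeff (a + b) := by
  rw [coeff_mul]
  have hmem : (a, b) ∈ Finset.HasAntidiagonal.antidiagonal (a + b) := Finset.HasAntidiagonal.mem_antidiagonal.mpr rfl
  exact Finset.single_le_sum (f := fun x : ℕ × ℕ => p.coeff x.1 * q.coeff x.2)
    (fun x _ => mul_nonneg (hp _) (hq _)) hmem

lemma coeff_mul_pow_le_eval {p : Polynomial ℝ} (hp : ∀ i, 0 ≤ p.coeff i)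
    {t : ℝ} (ht : 0 ≤ t) (m : ℕ) : p.coeff m * t ^ m ≤ p.eval t := by
  rw [eval_eq_sum_range]
  rcases lt_or_ge m (p.natDegree + 1) with h | h
  · exact Finset.single_le_sum (f := fun i => p.coeff i * t ^ i)
      (fun i _ => mul_nonneg (hp _) (pow_nonneg ht _)) (Finset.mem_range.mpr h)
  · rw [p.coeff_eq_zero_of_natDegree_lt (by omega), zero_mul]
    exact Finset.sum_nonneg fun i _ => mul_nonneg (hp _) (pow_nonneg ht _)

lemma Wpoly_eval (s : Finset ℕ) (t : ℝ) :
    (Wpoly s).eval t = ∏ k ∈ s, ((k : ℝ)⁻¹ * t + 1) := by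
  simp [Wpoly, eval_prod]

lemma Wpoly_union {s u : Finset ℕ} (h : Disjoint s u) :
    Wpoly (s ∪ u) = Wpoly s * Wpoly u := Finset.prod_union h

lemma Wpoly_coeff_card (s : Finset ℕ) : (Wpoly s).coeff s.card = ∏ k ∈ s, (k : ℝ)⁻¹ := by
  have h := Polynomial.coeff_prod_of_natDegree_le (s := s)
    (fun k : ℕ => Polynomial.C ((k : ℝ)⁻¹) * Polynomial.X + 1) 1 ?_
  · rw [Wpoly]
    rw [mul_one] at h
    rw [h]
    refine Finset.prod_congr rfl fun k _ => ?_
    simp [coeff_C_mul, coeff_one]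
  · intro p _
    refine (natDegree_add_le _ _).trans ?_
    simp
    exact (natDegree_C_mul_le _ _).trans (by simp)
lemma sum_inv_nonneg (s : Finset ℕ) : 0 ≤ ∑ k ∈ s, (k : ℝ)⁻¹ :=
  Finset.sum_nonneg fun k _ => by positivity

lemma sum_inv_Ioc_le {a b : ℕ} (ha : 1 ≤ a) (hab : a ≤ b) :
    ∑ k ∈ Finset.Ioc a b, (k : ℝ)⁻¹ ≤ Real.log b - Real.log a := by
  induction b, hab using Nat.le_induction with
  | base => simp
  | succ b hab ih =>
      rw [Finset.sum_Ioc_succ_top (by omega)]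
      have hb : (0:ℝ) < (b:ℝ) := by
        have : 1 ≤ b := le_trans ha hab
        exact_mod_cast Nat.pos_of_ne_zero (by omega)
      have key : Real.log ((b:ℝ)/((b:ℝ)+1)) ≤ (b:ℝ)/((b:ℝ)+1) - 1 :=
        Real.log_le_sub_one_of_pos (by positivity)
      rw [Real.log_div (ne_of_gt hb) (by positivity)] at key
      have h2 : (b:ℝ)/((b:ℝ)+1) - 1 = -(((b:ℝ)+1)⁻¹) := by field_simp; ring
      have h3 : ((b+1:ℕ):ℝ)⁻¹ ≤ Real.log ((b+1:ℕ):ℝ) - Real.log b := by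
        push_cast
        linarith [key, h2.le]
      linarith [ih]

lemma sum_inv_Ioc_ge {a b : ℕ} (hab : a ≤ b) :
    Real.log ((b:ℝ)+1) - Real.log ((a:ℝ)+1) ≤ ∑ k ∈ Finset.Ioc a b, (k : ℝ)⁻¹ := by
  induction b, hab using Nat.le_induction with
  | base => simp
  | succ b hab ih =>
      rw [Finset.sum_Ioc_succ_top (by omega)]
      have hb : (0:ℝ) < (b:ℝ)+1 := by positivity
      have key : Real.log (((b:ℝ)+2)/((b:ℝ)+1)) ≤ ((b:ℝ)+2)/((b:ℝ)+1) - 1 :=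
        Real.log_le_sub_one_of_pos (by positivity)
      rw [Real.log_div (by positivity) (ne_of_gt hb)] at key
      have h2 : ((b:ℝ)+2)/((b:ℝ)+1) - 1 = ((b:ℝ)+1)⁻¹ := by field_simp; ring
      have h3 : Real.log ((b:ℝ)+2) - Real.log ((b:ℝ)+1) ≤ ((b+1:ℕ):ℝ)⁻¹ := by
        push_cast
        linarith [key, h2.le]
      push_cast
      rw [show (b:ℝ)+1+1 = (b:ℝ)+2 from by ring]
      push_cast at ih h3
      linarith [ih, h3]

lemma Wpoly_Ioc_consecutive {a b c : ℕ} (hab : a ≤ b) (hbc : b ≤ c) :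
    Wpoly (Finset.Ioc a b) * Wpoly (Finset.Ioc b c) = Wpoly (Finset.Ioc a c) :=
  Finset.prod_Ioc_consecutive _ hab hbc

lemma blocks_lower (k : ℕ → ℕ) (hk : ∀ i, k i ≤ k (i + 1)) :
    ∀ M : ℕ, ∏ i ∈ Finset.range M, (∑ j ∈ Finset.Ioc (k i) (k (i+1)), (j : ℝ)⁻¹)
      ≤ (Wpoly (Finset.Ioc (k 0) (k M))).coeff M := by
  have hmono : Monotone k := monotone_nat_of_le_succ hk
  intro M
  induction M with
  | zero => simp [Wpoly_coeff_zero]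
  | succ M ih =>
      rw [Finset.prod_range_succ, ← Wpoly_Ioc_consecutive (hmono (Nat.zero_le M)) (hk M)]
      calc (∏ i ∈ Finset.range M, ∑ j ∈ Finset.Ioc (k i) (k (i+1)), (j : ℝ)⁻¹)
              * (∑ j ∈ Finset.Ioc (k M) (k (M+1)), (j : ℝ)⁻¹)
          ≤ (Wpoly (Finset.Ioc (k 0) (k M))).coeff M
              * (∑ j ∈ Finset.Ioc (k M) (k (M+1)), (j : ℝ)⁻¹) := by
            apply mul_le_mul_of_nonneg_right ih (sum_inv_nonneg _)
        _ = (Wpoly (Finset.Ioc (k 0) (k M))).coeff M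
              * (Wpoly (Finset.Ioc (k M) (k (M+1)))).coeff 1 := by
            rw [Wpoly_coeff_one]
        _ ≤ _ := coeff_mul_le (Wpoly_coeff_nonneg _) (Wpoly_coeff_nonneg _) M 1
lemma E_upper (n m : ℕ) (hm : 1 ≤ m) (hmn : m ≤ n) :
    (Wpoly (Finset.Icc 1 n)).coeff m
      ≤ (Real.exp 5 * max 1 (Real.log ((n : ℝ) / m)) / m) ^ m := by
  have hm0 : (0:ℝ) < m := by exact_mod_cast hm
  have hn : 1 ≤ n := le_trans hm hmn
  have hn0 : (0:ℝ) < n := by exact_mod_cast hn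
  set L : ℝ := max 1 (Real.log ((n : ℝ) / m)) with hLdef
  have hL1 : (1:ℝ) ≤ L := le_max_left _ _
  have hL0 : (0:ℝ) < L := lt_of_lt_of_le one_pos hL1
  have hlognm : Real.log ((n:ℝ)/m) ≤ L := le_max_right _ _
  set t : ℝ := (m : ℝ) / L with htdef
  have ht0 : 0 < t := div_pos hm0 hL0
  have htm : t ≤ m := div_le_self hm0.le hL1
  have htL : t * L = m := div_mul_cancel₀ _ (ne_of_gt hL0)
  have hlog_nm : Real.log ((n:ℝ)/m) = Real.log n - Real.log m :=
    Real.log_div (ne_of_gt hn0) (ne_of_gt hm0)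
  have hlogm : Real.log (m:ℝ) ≤ (m:ℝ) - 1 := Real.log_le_sub_one_of_pos hm0
  have hlogL : Real.log L ≤ L - 1 := Real.log_le_sub_one_of_pos hL0
  have hlog2 : Real.log 2 ≤ 1 := by
    have := Real.log_le_sub_one_of_pos (by norm_num : (0:ℝ) < 2); linarith
  -- main claim : eval bound
  have hP : (Wpoly (Finset.Icc 1 n)).eval t ≤ Real.exp (5 * m) := by
    rcases le_or_gt t 1 with ht1 | ht1
    · -- small t : all factors ≤ exp
      rw [Wpoly_eval]
      have step : ∏ k ∈ Finset.Icc 1 n, ((k:ℝ)⁻¹ * t + 1)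
          ≤ ∏ k ∈ Finset.Icc 1 n, Real.exp ((k:ℝ)⁻¹ * t) := by
        apply Finset.prod_le_prod
        · intro k hk
          have : (0:ℝ) ≤ (k:ℝ)⁻¹ * t := by positivity
          linarith
        · intro k _
          exact Real.add_one_le_exp _
      rw [← Real.exp_sum] at step
      refine step.trans (Real.exp_le_exp.mpr ?_)
      have hsum : ∑ k ∈ Finset.Icc 1 n, ((k:ℝ)⁻¹ * t)
          = t * ∑ k ∈ Finset.Icc 1 n, (k:ℝ)⁻¹ := by
        rw [Finset.mul_sum]; exact Finset.sum_congr rfl fun k _ => by ring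
      rw [hsum]
      have hIcc : Finset.Icc 1 n = Finset.Ioc 0 n := by
        ext x; simp [Finset.mem_Icc, Finset.mem_Ioc]; omega
      have hsplit : ∑ k ∈ Finset.Ioc (0:ℕ) 1, (k:ℝ)⁻¹ + ∑ k ∈ Finset.Ioc 1 n, (k:ℝ)⁻¹
          = ∑ k ∈ Finset.Ioc 0 n, (k:ℝ)⁻¹ :=
        Finset.sum_Ioc_consecutive _ (by omega) (by omega)
      have h01 : ∑ k ∈ Finset.Ioc (0:ℕ) 1, (k:ℝ)⁻¹ = 1 := by norm_num
      have h1n : ∑ k ∈ Finset.Ioc 1 n, (k:ℝ)⁻¹ ≤ Real.log n - Real.log ((1:ℕ):ℝ) :=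
        sum_inv_Ioc_le (le_refl 1) hn
      have hsum2 : ∑ k ∈ Finset.Icc 1 n, (k:ℝ)⁻¹ ≤ 1 + Real.log n := by
        rw [hIcc, ← hsplit, h01]
        norm_num at h1n
        linarith
      have hlogn : Real.log (n:ℝ) ≤ L + ((m:ℝ) - 1) := by
        have : Real.log (n:ℝ) = Real.log ((n:ℝ)/m) + Real.log m := by rw [hlog_nm]; ring
        linarith
      have f1 : t * (1 + Real.log n) ≤ t * (1 + L + ((m:ℝ) - 1)) := by
        apply mul_le_mul_of_nonneg_left _ ht0.le
        linarith
      have f2 : t * (1 + L + ((m:ℝ)-1)) = t + t*L + t*((m:ℝ)-1) := by ring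
      have f3 : t*((m:ℝ)-1) ≤ 1*((m:ℝ)-1) := by
        apply mul_le_mul_of_nonneg_right ht1
        have : (1:ℝ) ≤ (m:ℝ) := by exact_mod_cast hm
        linarith
      have f4 : t * (∑ k ∈ Finset.Icc 1 n, (k:ℝ)⁻¹) ≤ t * (1 + Real.log n) :=
        mul_le_mul_of_nonneg_left hsum2 ht0.le
      have hm1 : (1:ℝ) ≤ (m:ℝ) := by exact_mod_cast hm
      linarith
    · -- large t : split at j = ⌊t⌋
      set j : ℕ := ⌊t⌋₊ with hjdef
      have hj1 : 1 ≤ j := Nat.le_floor (by exact_mod_cast ht1.le)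
      have hj0 : (0:ℝ) < j := by exact_mod_cast hj1
      have hjt : (j:ℝ) ≤ t := Nat.floor_le ht0.le
      have hjn : j ≤ n := by
        have : (j:ℝ) ≤ (n:ℝ) := le_trans hjt (le_trans htm (by exact_mod_cast hmn))
        exact_mod_cast this
      have ht2j : t ≤ 2 * j := by
        have h1 : t < (j:ℝ) + 1 := Nat.lt_floor_add_one t
        have h2 : (1:ℝ) ≤ (j:ℝ) := by exact_mod_cast hj1
        linarith
      have hsplit : Finset.Icc 1 n = Finset.Icc 1 j ∪ Finset.Ioc j n := by
        ext x; simp [Finset.mem_Icc, Finset.mem_Ioc, Finset.mem_union]; omega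
      have hdisj : Disjoint (Finset.Icc 1 j) (Finset.Ioc j n) := by
        rw [Finset.disjoint_left]
        intro x hx hx'
        simp [Finset.mem_Icc] at hx
        simp [Finset.mem_Ioc] at hx'
        omega
      rw [Wpoly_eval, hsplit, Finset.prod_union hdisj]
      have hP1 : ∏ k ∈ Finset.Icc 1 j, ((k:ℝ)⁻¹ * t + 1) ≤ Real.exp (2*t) := by
        have step1 : ∏ k ∈ Finset.Icc 1 j, ((k:ℝ)⁻¹ * t + 1)
            ≤ ∏ k ∈ Finset.Icc 1 j, (2*t/(k:ℝ)) := by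
          apply Finset.prod_le_prod
          · intro k hk
            have hk0 : (0:ℝ) ≤ (k:ℝ) := by positivity
            positivity
          · intro k hk
            simp only [Finset.mem_Icc] at hk
            have hk0 : (0:ℝ) < (k:ℝ) := by exact_mod_cast hk.1
            have hkj : (k:ℝ) ≤ (j:ℝ) := by exact_mod_cast hk.2
            rw [le_div_iff₀ hk0]
            have he : ((k:ℝ)⁻¹ * t + 1) * k = t + k := by field_simp
            rw [he]
            linarith
        have step2 : ∏ k ∈ Finset.Icc 1 j, (2*t/(k:ℝ)) = (2*t)^j / (j.factorial : ℝ) := by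
          rw [Finset.prod_div_distrib, Finset.prod_const]
          have hcard : (Finset.Icc 1 j).card = j := by rw [Nat.card_Icc]; omega
          rw [hcard]
          congr 1
          rw [← Nat.cast_prod]
          congr 1
          rw [← Finset.Ico_add_one_right_eq_Icc]
          exact Finset.prod_Ico_id_eq_factorial j
        rw [step2] at step1
        refine step1.trans ?_
        exact Real.pow_div_factorial_le_exp (2*t) (by positivity) j
      have hP2 : ∏ k ∈ Finset.Ioc j n, ((k:ℝ)⁻¹ * t + 1)
          ≤ Real.exp (t * (Real.log n - Real.log j)) := by
        have step : ∏ k ∈ Finset.Ioc j n, ((k:ℝ)⁻¹ * t + 1)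
            ≤ ∏ k ∈ Finset.Ioc j n, Real.exp ((k:ℝ)⁻¹ * t) := by
          apply Finset.prod_le_prod
          · intro k _
            have : (0:ℝ) ≤ (k:ℝ)⁻¹ * t := by positivity
            linarith
          · intro k _; exact Real.add_one_le_exp _
        rw [← Real.exp_sum] at step
        refine step.trans (Real.exp_le_exp.mpr ?_)
        have hsum : ∑ k ∈ Finset.Ioc j n, ((k:ℝ)⁻¹ * t)
            = t * ∑ k ∈ Finset.Ioc j n, (k:ℝ)⁻¹ := by
          rw [Finset.mul_sum]; exact Finset.sum_congr rfl fun k _ => by ring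
        rw [hsum]
        exact mul_le_mul_of_nonneg_left (sum_inv_Ioc_le hj1 hjn) ht0.le
      have hP2nonneg : (0:ℝ) ≤ ∏ k ∈ Finset.Ioc j n, ((k:ℝ)⁻¹ * t + 1) :=
        Finset.prod_nonneg fun k _ => by positivity
      calc (∏ k ∈ Finset.Icc 1 j, ((k:ℝ)⁻¹ * t + 1)) * ∏ k ∈ Finset.Ioc j n, ((k:ℝ)⁻¹ * t + 1)
          ≤ Real.exp (2*t) * Real.exp (t * (Real.log n - Real.log j)) := by
            apply mul_le_mul hP1 hP2 hP2nonneg (Real.exp_nonneg _)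
        _ = Real.exp (2*t + t * (Real.log n - Real.log j)) := by rw [← Real.exp_add]
        _ ≤ Real.exp (5 * m) := by
            apply Real.exp_le_exp.mpr
            have hlogt : Real.log t = Real.log m - Real.log L :=
              Real.log_div (ne_of_gt hm0) (ne_of_gt hL0)
            have hlogjt : Real.log t ≤ Real.log 2 + Real.log j := by
              have h2j : Real.log t ≤ Real.log (2 * j) :=
                Real.log_le_log ht0 ht2j
              rwa [Real.log_mul (by norm_num) (ne_of_gt hj0)] at h2j
            have key : Real.log n - Real.log j
                ≤ Real.log ((n:ℝ)/m) + Real.log L + Real.log 2 := by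
              have : Real.log (n:ℝ) = Real.log ((n:ℝ)/m) + Real.log m := by
                rw [hlog_nm]; ring
              linarith [hlogjt, hlogt]
            have f1 : t * (Real.log n - Real.log j)
                ≤ t * (Real.log ((n:ℝ)/m) + Real.log L + Real.log 2) :=
              mul_le_mul_of_nonneg_left key ht0.le
            have f2 : t * Real.log ((n:ℝ)/m) ≤ t * L :=
              mul_le_mul_of_nonneg_left hlognm ht0.le
            have f3 : t * Real.log L ≤ t * L :=
              mul_le_mul_of_nonneg_left (by linarith) ht0.le
            have f4 : t * Real.log 2 ≤ t * 1 :=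
              mul_le_mul_of_nonneg_left hlog2 ht0.le
            nlinarith [htL, htm, ht0.le]
  -- convert eval bound into coefficient bound
  have h1 : (Wpoly (Finset.Icc 1 n)).coeff m * t ^ m ≤ Real.exp (5*m) :=
    le_trans (coeff_mul_pow_le_eval (Wpoly_coeff_nonneg _) ht0.le m) hP
  have htpow : (0:ℝ) < t ^ m := pow_pos ht0 m
  have h2 : (Wpoly (Finset.Icc 1 n)).coeff m ≤ Real.exp (5*m) / t ^ m :=
    (le_div_iff₀ htpow).mpr h1
  refine h2.trans (le_of_eq ?_)
  have hexp : Real.exp (5 * m) = Real.exp 5 ^ m := by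
    rw [← Real.exp_nat_mul]; ring_nf
  rw [hexp, ← div_pow]
  congr 1
  rw [htdef, div_div_eq_mul_div]
lemma prod_Icc_cast_factorial (m : ℕ) : ∏ k ∈ Finset.Icc 1 m, (k:ℝ) = (m.factorial : ℝ) := by
  rw [← Nat.cast_prod]
  congr 1
  rw [← Finset.Ico_add_one_right_eq_Icc]
  exact Finset.prod_Ico_id_eq_factorial m

lemma E_lower (n m : ℕ) (hm : 1 ≤ m) (hmn : m ≤ n) :
    ((1/10 : ℝ) * max 1 (Real.log ((n : ℝ) / m)) / m) ^ m
      ≤ (Wpoly (Finset.Icc 1 n)).coeff m := by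
  have hm0 : (0:ℝ) < m := by exact_mod_cast hm
  have hn : 1 ≤ n := le_trans hm hmn
  have hn0 : (0:ℝ) < n := by exact_mod_cast hn
  set L : ℝ := max 1 (Real.log ((n : ℝ) / m)) with hLdef
  have hL1 : (1:ℝ) ≤ L := le_max_left _ _
  have hL0 : (0:ℝ) < L := lt_of_lt_of_le one_pos hL1
  rcases le_or_gt (Real.log ((n:ℝ)/m)) 3 with hA | hB
  · -- easy case : use the subset {1,...,m}
    have hL3 : L ≤ 3 := max_le (by norm_num) hA
    have hsplit : Finset.Icc 1 n = Finset.Icc 1 m ∪ Finset.Ioc m n := by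
      ext x; simp [Finset.mem_Icc, Finset.mem_Ioc, Finset.mem_union]; omega
    have hdisj : Disjoint (Finset.Icc 1 m) (Finset.Ioc m n) := by
      rw [Finset.disjoint_left]
      intro x hx hx'
      simp [Finset.mem_Icc] at hx
      simp [Finset.mem_Ioc] at hx'
      omega
    have hcard : (Finset.Icc 1 m).card = m := by rw [Nat.card_Icc]; omega
    have hprod : (Wpoly (Finset.Icc 1 m)).coeff m = ((m.factorial : ℝ))⁻¹ := by
      have h := Wpoly_coeff_card (Finset.Icc 1 m)
      rw [hcard] at h
      rw [h, Finset.prod_inv_distrib, prod_Icc_cast_factorial]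
    have hmain : ((m.factorial : ℝ))⁻¹ ≤ (Wpoly (Finset.Icc 1 n)).coeff m := by
      have h := coeff_mul_le (Wpoly_coeff_nonneg (Finset.Icc 1 m))
        (Wpoly_coeff_nonneg (Finset.Ioc m n)) m 0
      rw [Wpoly_coeff_zero, mul_one, hprod] at h
      calc ((m.factorial : ℝ))⁻¹
          ≤ (Wpoly (Finset.Icc 1 m) * Wpoly (Finset.Ioc m n)).coeff (m + 0) := h
        _ = (Wpoly (Finset.Icc 1 n)).coeff m := by
            rw [← Wpoly_union hdisj, ← hsplit, Nat.add_zero]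
    refine le_trans ?_ hmain
    have h1 : ((1/10 : ℝ) * L / m) ≤ 1 / m := by
      gcongr
      linarith
    calc ((1/10 : ℝ) * L / m) ^ m ≤ ((1:ℝ)/m) ^ m := by
          apply pow_le_pow_left₀ (by positivity) h1
      _ = (((m:ℝ))^m)⁻¹ := by rw [div_pow, one_pow, ← one_div]
      _ ≤ ((m.factorial : ℝ))⁻¹ := by
          apply inv_anti₀ (by positivity)
          exact_mod_cast Nat.factorial_le_pow m
  · -- hard case : geometric blocks
    have hLeq : L = Real.log ((n:ℝ)/m) := max_eq_right (by linarith)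
    have hm4 : (0:ℝ) < 4*m := by linarith
    have hnm : (0:ℝ) < (n:ℝ)/m := by positivity
    have hexp3 : Real.exp 3 < (n:ℝ)/m := by
      have := Real.exp_lt_exp.mpr hB
      rwa [Real.exp_log hnm] at this
    have h4exp : (4:ℝ) ≤ Real.exp 3 := by
      have := Real.add_one_le_exp (3:ℝ); linarith
    have hn4m : (4:ℝ)*m ≤ n := by
      rw [← le_div_iff₀ hm0]
      calc (4:ℝ) ≤ Real.exp 3 := h4exp
        _ ≤ (n:ℝ)/m := hexp3.le
    have hn4m' : 4*m ≤ n := by exact_mod_cast hn4m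
    set L' : ℝ := Real.log ((n:ℝ)/(4*m)) with hL'def
    have hlog4 : Real.log (4:ℝ) = 2 * Real.log 2 := by
      rw [show (4:ℝ) = 2^2 by norm_num, Real.log_pow]
      push_cast; ring
    have hL'eq : L' = Real.log ((n:ℝ)/m) - Real.log 4 := by
      rw [hL'def, Real.log_div (ne_of_gt hn0) (ne_of_gt hm4),
        Real.log_div (ne_of_gt hn0) (ne_of_gt hm0),
        Real.log_mul (by norm_num) (ne_of_gt hm0)]
      ring
    have hlog2 : Real.log 2 < 0.6931471808 := Real.log_two_lt_d9
    have hlog2' : (0:ℝ) < Real.log 2 := Real.log_pos (by norm_num)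
    have hL'16 : (1.6:ℝ) ≤ L' := by
      rw [hL'eq, hlog4]; linarith
    have hL'0 : (0:ℝ) < L' := by linarith
    -- the block cut points
    set a : ℕ → ℝ := fun i => (4*(m:ℝ)) * Real.exp (i * L' / m) with hadef
    set k : ℕ → ℕ := fun i => ⌈a i⌉₊ with hkdef
    have ha_pos : ∀ i, 0 < a i := fun i => by positivity
    have ha_ge : ∀ i, 4*(m:ℝ) ≤ a i := by
      intro i
      have h1 : (1:ℝ) ≤ Real.exp (i * L' / m) := Real.one_le_exp (by positivity)
      calc 4*(m:ℝ) = 4*(m:ℝ) * 1 := by ring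
        _ ≤ _ := by apply mul_le_mul_of_nonneg_left h1 (by positivity)
    have hk0 : k 0 = 4*m := by
      have : a 0 = ((4*m : ℕ):ℝ) := by
        rw [hadef]; push_cast; simp
      rw [hkdef]; simp only []
      rw [this, Nat.ceil_natCast]
    have hkm : k m = n := by
      have : a m = ((n : ℕ):ℝ) := by
        rw [hadef]; simp only []
        rw [show (m:ℝ) * L' / (m:ℝ) = L' from by field_simp, hL'def,
          Real.exp_log (by positivity)]
        field_simp
      rw [hkdef]; simp only []
      rw [this, Nat.ceil_natCast]
    have hadj : ∀ i, k i ≤ k (i+1) := by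
      intro i
      apply Nat.ceil_le_ceil
      rw [hadef]; simp only []
      push_cast
      have h1 : (i:ℝ) * L' ≤ ((i:ℝ)+1) * L' :=
        mul_le_mul_of_nonneg_right (by linarith) hL'0.le
      have hle : (i:ℝ) * L' / m ≤ ((i:ℝ)+1) * L' / m := by
        rw [div_eq_mul_inv, div_eq_mul_inv]
        exact mul_le_mul_of_nonneg_right h1 (by positivity)
      exact mul_le_mul_of_nonneg_left (Real.exp_le_exp.mpr hle) (by positivity)
    -- lower bound for each block sum
    have hblock : ∀ i, L/(10*m) ≤ ∑ j ∈ Finset.Ioc (k i) (k (i+1)), (j:ℝ)⁻¹ := by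
      intro i
      have hsum := sum_inv_Ioc_ge (hadj i)
      have hup : a (i+1) ≤ (k (i+1) : ℝ) + 1 := by
        have := Nat.le_ceil (a (i+1)); rw [hkdef]; simp only []
        linarith [this]
      have hdown : (k i : ℝ) + 1 < a i + 2 := by
        have := Nat.ceil_lt_add_one (ha_pos i).le
        rw [hkdef]; simp only []
        linarith [this]
      have hlogup : Real.log (a (i+1)) ≤ Real.log ((k (i+1):ℝ) + 1) :=
        Real.log_le_log (ha_pos (i+1)) hup
      have hlogdown : Real.log ((k i:ℝ) + 1) ≤ Real.log (a i + 2) :=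
        Real.log_le_log (by positivity) hdown.le
      have hai2 : a i + 2 ≤ a i * (1 + 1/(2*m)) := by
        have h1 : a i * (1/(2*m)) ≥ (4*(m:ℝ)) * (1/(2*m)) :=
          mul_le_mul_of_nonneg_right (ha_ge i) (by positivity)
        have h2 : (4*(m:ℝ)) * (1/(2*m)) = 2 := by field_simp; ring
        nlinarith [h1, h2]
      have hlog2m : Real.log (a i + 2) ≤ Real.log (a i) + 1/(2*m) := by
        calc Real.log (a i + 2) ≤ Real.log (a i * (1 + 1/(2*m))) :=
              Real.log_le_log (by positivity) hai2
          _ = Real.log (a i) + Real.log (1 + 1/(2*m)) := by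
              rw [Real.log_mul (ne_of_gt (ha_pos i)) (by positivity)]
          _ ≤ Real.log (a i) + 1/(2*m) := by
              have := Real.log_le_sub_one_of_pos (show (0:ℝ) < 1 + 1/(2*m) by positivity)
              linarith
      have hdiff : Real.log (a (i+1)) - Real.log (a i) = L'/m := by
        rw [hadef]; simp only []
        rw [Real.log_mul (by positivity) (ne_of_gt (Real.exp_pos _)),
          Real.log_mul (by positivity) (ne_of_gt (Real.exp_pos _)),
          Real.log_exp, Real.log_exp]
        push_cast; ring
      have hS : L'/m - 1/(2*m) ≤ ∑ j ∈ Finset.Ioc (k i) (k (i+1)), (j:ℝ)⁻¹ := by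
        have c1 : Real.log ((k (i+1):ℝ) + 1) - Real.log ((k i:ℝ) + 1)
            ≥ L'/m - 1/(2*m) := by
          have := hdiff
          linarith [hlogup, hlogdown, hlog2m]
        calc L'/m - 1/(2*m) ≤ Real.log ((k (i+1):ℝ) + 1) - Real.log ((k i:ℝ) + 1) := c1
          _ ≤ _ := by
            have := hsum
            push_cast at this ⊢
            linarith
      refine le_trans ?_ hS
      -- L/(10m) ≤ L'/m - 1/(2m)
      have hLL' : L ≤ 10*L' - 5 := by
        rw [hLeq, show Real.log ((n:ℝ)/m) = L' + Real.log 4 by rw [hL'eq]; ring, hlog4]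
        linarith
      have heq : (10*L' - 5)/(10*m) = L'/m - 1/(2*m) := by
        field_simp
        ring
      calc L/(10*m) ≤ (10*L' - 5)/(10*m) := by gcongr
        _ = L'/m - 1/(2*m) := heq
    -- assemble
    have hsplit : Finset.Icc 1 n = Finset.Icc 1 (4*m) ∪ Finset.Ioc (4*m) n := by
      ext x; simp [Finset.mem_Icc, Finset.mem_Ioc, Finset.mem_union]; omega
    have hdisj : Disjoint (Finset.Icc 1 (4*m)) (Finset.Ioc (4*m) n) := by
      rw [Finset.disjoint_left]
      intro x hx hx'
      simp [Finset.mem_Icc] at hx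
      simp [Finset.mem_Ioc] at hx'
      omega
    have hmain : (Wpoly (Finset.Ioc (4*m) n)).coeff m
        ≤ (Wpoly (Finset.Icc 1 n)).coeff m := by
      have h := coeff_mul_le (Wpoly_coeff_nonneg (Finset.Icc 1 (4*m)))
        (Wpoly_coeff_nonneg (Finset.Ioc (4*m) n)) 0 m
      rw [Wpoly_coeff_zero, one_mul, zero_add] at h
      calc (Wpoly (Finset.Ioc (4*m) n)).coeff m
          ≤ (Wpoly (Finset.Icc 1 (4*m)) * Wpoly (Finset.Ioc (4*m) n)).coeff m := h
        _ = (Wpoly (Finset.Icc 1 n)).coeff m := by rw [← Wpoly_union hdisj, ← hsplit]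
    have hblocks : ∏ i ∈ Finset.range m, (∑ j ∈ Finset.Ioc (k i) (k (i+1)), (j:ℝ)⁻¹)
        ≤ (Wpoly (Finset.Ioc (4*m) n)).coeff m := by
      have := blocks_lower k hadj m
      rwa [hk0, hkm] at this
    have hprodL : ((1/10 : ℝ) * L / m) ^ m
        ≤ ∏ i ∈ Finset.range m, (∑ j ∈ Finset.Ioc (k i) (k (i+1)), (j:ℝ)⁻¹) := by
      have heq : ((1/10 : ℝ) * L / m) = L/(10*m) := by ring
      have hpc : ((L/(10*(m:ℝ)))) ^ m = ∏ _i ∈ Finset.range m, (L/(10*(m:ℝ))) := by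
        rw [Finset.prod_const, Finset.card_range]
      rw [heq, hpc]
      apply Finset.prod_le_prod
      · intro i _; positivity
      · intro i _; exact hblock i
    calc ((1/10 : ℝ) * L / m) ^ m
        ≤ ∏ i ∈ Finset.range m, (∑ j ∈ Finset.Ioc (k i) (k (i+1)), (j:ℝ)⁻¹) := hprodL
      _ ≤ (Wpoly (Finset.Ioc (4*m) n)).coeff m := hblocks
      _ ≤ (Wpoly (Finset.Icc 1 n)).coeff m := hmain
lemma ascPochhammer_eq_Wpoly (n : ℕ) :
    ascPochhammer ℝ (n+1)
      = Polynomial.X * (Polynomial.C ((n.factorial : ℝ)) * Wpoly (Finset.Icc 1 n)) := by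
  induction n with
  | zero =>
      rw [ascPochhammer_one]
      rw [show Finset.Icc 1 0 = (∅ : Finset ℕ) from Finset.Icc_eq_empty (by omega)]
      simp [Wpoly]
  | succ n ih =>
      rw [ascPochhammer_succ_right, ih]
      have hc : ((n+1:ℕ):ℝ) ≠ 0 := by positivity
      have hW : Wpoly (Finset.Icc 1 (n+1))
          = Wpoly (Finset.Icc 1 n) * (Polynomial.C (((n+1:ℕ):ℝ))⁻¹ * Polynomial.X + 1) := by
        rw [Wpoly, Finset.prod_Icc_succ_top (by omega : 1 ≤ n+1), ← Wpoly]
      have hfac : (Polynomial.C (((n+1).factorial : ℝ)))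
          = Polynomial.C ((n.factorial : ℝ)) * Polynomial.C (((n+1:ℕ):ℝ)) := by
        rw [← Polynomial.C_mul]
        congr 1
        rw [Nat.factorial_succ]
        push_cast; ring
      have hlin : Polynomial.X + ((n+1:ℕ) : Polynomial ℝ)
          = Polynomial.C (((n+1:ℕ):ℝ)) * (Polynomial.C (((n+1:ℕ):ℝ))⁻¹ * Polynomial.X + 1) := by
        rw [mul_add, ← mul_assoc, ← Polynomial.C_mul, mul_inv_cancel₀ hc,
          Polynomial.C_1, one_mul, mul_one, Polynomial.C_eq_natCast]
      rw [hW, hfac, hlin]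
      ring

lemma coeff_cast (N i : ℕ) :
    (((ascPochhammer ℕ N).coeff i : ℕ) : ℝ) = (ascPochhammer ℝ N).coeff i := by
  rw [← ascPochhammer_map (Nat.castRingHom ℝ) N, Polynomial.coeff_map]
  simp

lemma coeff_id (n m : ℕ) :
    (((ascPochhammer ℕ (n+1)).coeff (m+1) : ℕ) : ℝ)
      = (n.factorial : ℝ) * (Wpoly (Finset.Icc 1 n)).coeff m := by
  rw [coeff_cast, ascPochhammer_eq_Wpoly, Polynomial.coeff_X_mul, Polynomial.coeff_C_mul]

/-- There exist absolute constants `0 < c ≤ C` such that for all integers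
`1 ≤ m ≤ n`, the unsigned Stirling number of the first kind `|s(n+1, m+1)|`, defined as the
coefficient of `x^{m+1}` in the rising factorial `x(x+1)⋯(x+n)`, satisfies
`n!·(c·max(1, log(n/m))/m)^m ≤ |s(n+1, m+1)| ≤ n!·(C·max(1, log(n/m))/m)^m`. -/
theorem stmt9 : ∃ c C : ℝ, 0 < c ∧ c ≤ C ∧
    ∀ n m : ℕ, 1 ≤ m → m ≤ n →
      (n.factorial : ℝ) * (c * max 1 (Real.log ((n : ℝ) / m)) / m) ^ m
          ≤ ((ascPochhammer ℕ (n + 1)).coeff (m + 1) : ℝ) ∧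
      ((ascPochhammer ℕ (n + 1)).coeff (m + 1) : ℝ)
          ≤ (n.factorial : ℝ) * (C * max 1 (Real.log ((n : ℝ) / m)) / m) ^ m := by
  refine ⟨1/10, Real.exp 5, by norm_num, ?_, ?_⟩
  · have := Real.one_le_exp (by norm_num : (0:ℝ) ≤ 5)
    linarith
  · intro n m hm hmn
    have hfac : (0:ℝ) ≤ (n.factorial : ℝ) := by positivity
    constructor
    · rw [coeff_id]
      exact mul_le_mul_of_nonneg_left (E_lower n m hm hmn) hfac
    · rw [coeff_id]
      exact mul_le_mul_of_nonneg_left (E_upper n m hm hmn) hfac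
end

section
/- Assume the Poisson sampling model with mean sample size n from a k-ball urn. Let L = α·log k and M = β·k·log k/n be positive integers with β > α > 0. Given w ∈ ℝ^L, set u_j = w_j · j! · (k/(nM))^j for 1 ≤ j ≤ L and u_j = 0 for j = 0 and j > L. Define the estimator C̃ = Σ_{i=1}^{k} g(N_i), where g(0) = 0 and g(j) = 1 + u_j for j ≥ 1, and let Ĉ = min( max( C̃, Σ_{i=1}^{k} 1{N_i ≥ 1} ), k ). Then E[(Ĉ − C)²] ≤ k²·e^{−2n/k}·‖Bw − 𝟏‖_∞² + k·e^{−n/k} + k·max_{m ∈ {1,…,M}} E_{N ~ Poisson(nm/k)}[u_N²] + k^{−(β − α·log(eβ/α) − 3)}. -/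
open Finset MeasureTheory ProbabilityTheory
open scoped NNReal ENNReal

set_option maxHeartbeats 2000000

lemma clamp_abs (x a b c : ℝ) (h1 : a ≤ c) (h2 : c ≤ b) :
    |min (max x a) b - c| ≤ |x - c| := by
  rcases le_total x a with h | h
  · rw [max_eq_right h, min_eq_left (h1.trans h2)]
    rw [abs_of_nonpos (by linarith)]
    calc -(a - c) = c - a := by ring
    _ ≤ c - x := by linarith
    _ = -(x - c) := by ring
    _ ≤ |x - c| := neg_le_abs _
  · rw [max_eq_left h]
    rcases le_total x b with h' | h'
    · rw [min_eq_left h']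
    · rw [min_eq_right h', abs_of_nonneg (by linarith)]
      calc b - c ≤ x - c := by linarith
      _ ≤ |x - c| := le_abs_self _

lemma integrable_of_bound {Ω : Type*} [MeasurableSpace Ω] (μ : Measure Ω)
    [IsProbabilityMeasure μ] (f : Ω → ℝ) (hf : Measurable f) (D : ℝ)
    (hD : ∀ ω, |f ω| ≤ D) : Integrable f μ :=
  (integrable_const D).mono' hf.aestronglyMeasurable (Filter.Eventually.of_forall hD)

lemma integral_poisson_fin (r : ℝ≥0) (f : ℕ → ℝ) (T : ℕ) (hf : ∀ j, T < j → f j = 0) :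
    ∫ x, f x ∂(poissonMeasure r) = ∑ j ∈ Finset.range (T + 1), poissonPMFReal r j * f j := by
  have hint : Integrable f (poissonMeasure r) := by
    apply integrable_of_bound _ _ measurable_from_nat (∑ j ∈ Finset.range (T + 1), |f j|)
    intro x
    rcases lt_or_ge T x with h | h
    · rw [hf x h]
      simpa using Finset.sum_nonneg fun j _ => abs_nonneg (f j)
    · exact Finset.single_le_sum (f := fun j => |f j|) (fun j _ => abs_nonneg _)
        (Finset.mem_range.mpr (by omega))
  rw [integral_poissonMeasure' hint]
  rw [tsum_eq_sum (s := Finset.range (T + 1))]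
  · apply Finset.sum_congr rfl
    intro j _
    rw [smul_eq_mul]
    congr 1
  · intro j hj
    rw [hf j (by simpa using hj)]
    simp

lemma poisson_chernoff (r : ℝ≥0) (L : ℕ) (hL : 1 ≤ L) (h : (L : ℝ) ≤ r) :
    ∑ j ∈ Finset.range (L + 1), poissonPMFReal r j
      ≤ Real.exp (-(r : ℝ)) * (r : ℝ) ^ L * (Real.exp 1 / L) ^ L := by
  have hL0 : (0 : ℝ) < L := by positivity
  have hr0 : (0 : ℝ) < r := lt_of_lt_of_le hL0 h
  calc ∑ j ∈ Finset.range (L + 1), poissonPMFReal r j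
      ≤ ∑ j ∈ Finset.range (L + 1),
          Real.exp (-(r : ℝ)) * ((r : ℝ) ^ L / (L : ℝ) ^ L) * ((L : ℝ) ^ j / j.factorial) := by
        apply Finset.sum_le_sum
        intro j hj
        rw [Finset.mem_range] at hj
        have hj' : j ≤ L := by omega
        unfold poissonPMFReal
        rw [mul_assoc, mul_div_assoc]
        apply mul_le_mul_of_nonneg_left ?_ (Real.exp_pos _).le
        rw [div_mul_div_comm, div_le_div_iff₀ (by positivity) (by positivity)]
        have key : (r : ℝ) ^ j * (L : ℝ) ^ L ≤ (r : ℝ) ^ L * (L : ℝ) ^ j := by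
          have e1 : (L : ℝ) ^ L = (L : ℝ) ^ j * (L : ℝ) ^ (L - j) := by
            rw [← pow_add]; congr 1; omega
          have e2 : (r : ℝ) ^ L = (r : ℝ) ^ j * (r : ℝ) ^ (L - j) := by
            rw [← pow_add]; congr 1; omega
          rw [e1, e2]
          calc (r : ℝ) ^ j * ((L : ℝ) ^ j * (L : ℝ) ^ (L - j))
              ≤ (r : ℝ) ^ j * ((L : ℝ) ^ j * (r : ℝ) ^ (L - j)) := by
                apply mul_le_mul_of_nonneg_left ?_ (by positivity)
                exact mul_le_mul_of_nonneg_left (pow_le_pow_left₀ hL0.le h _) (by positivity)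
          _ = (r : ℝ) ^ j * (r : ℝ) ^ (L - j) * (L : ℝ) ^ j := by ring
        calc (r : ℝ) ^ j * ((L : ℝ) ^ L * (j.factorial : ℝ))
            = (r : ℝ) ^ j * (L : ℝ) ^ L * (j.factorial : ℝ) := by ring
        _ ≤ (r : ℝ) ^ L * (L : ℝ) ^ j * (j.factorial : ℝ) :=
              mul_le_mul_of_nonneg_right key (by positivity)
        _ = (r:ℝ)^L * (L:ℝ)^j * j.factorial := by ring
  _ = Real.exp (-(r:ℝ)) * ((r:ℝ)^L / (L:ℝ)^L) * ∑ j ∈ Finset.range (L+1), (L:ℝ)^j / j.factorial :=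
      (Finset.mul_sum _ _ _).symm
  _ ≤ Real.exp (-(r:ℝ)) * ((r:ℝ)^L / (L:ℝ)^L) * Real.exp L := by
      apply mul_le_mul_of_nonneg_left (Real.sum_le_exp_of_nonneg hL0.le _) (by positivity)
  _ = Real.exp (-(r : ℝ)) * (r : ℝ) ^ L * (Real.exp 1 / L) ^ L := by
      rw [div_pow, ← Real.exp_one_pow]
      ring

lemma exp_pow_anti (L : ℕ) {a b : ℝ} (ha : (L : ℝ) ≤ a) (hab : a ≤ b) :
    Real.exp (-b) * b ^ L ≤ Real.exp (-a) * a ^ L := by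
  have hL0 : (0 : ℝ) ≤ L := Nat.cast_nonneg L
  have ha0 : 0 ≤ a := hL0.trans ha
  rcases eq_or_lt_of_le ha0 with h0 | ha0'
  · -- a = 0, then L = 0
    have hLz : (L : ℝ) = 0 := le_antisymm (ha.trans h0.symm.le) hL0
    have : L = 0 := by exact_mod_cast hLz
    subst this
    simp only [pow_zero, mul_one]
    exact Real.exp_le_exp.mpr (by linarith)
  · have hb0 : 0 < b := lt_of_lt_of_le ha0' hab
    have hr : b / a = 1 + (b / a - 1) := by ring
    have h1 : (b / a) ^ L ≤ Real.exp ((L : ℝ) * (b / a - 1)) := by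
      rw [Real.exp_nat_mul]
      exact pow_le_pow_left₀ (by positivity)
        (by linarith [Real.add_one_le_exp (b / a - 1)]) L
    have h2 : (L : ℝ) * (b / a - 1) ≤ b - a := by
      have hba : 0 ≤ b / a - 1 := by
        have := (one_le_div ha0').mpr hab
        linarith
      have : (L : ℝ) * (b / a - 1) ≤ a * (b / a - 1) :=
        mul_le_mul_of_nonneg_right ha hba
      calc (L : ℝ) * (b / a - 1) ≤ a * (b / a - 1) := this
      _ = b - a := by field_simp
    have hbL : b ^ L = a ^ L * (b / a) ^ L := by
      rw [← mul_pow]; congr 1; field_simp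
    calc Real.exp (-b) * b ^ L = Real.exp (-b) * (a ^ L * (b / a) ^ L) := by rw [hbL]
    _ ≤ Real.exp (-b) * (a ^ L * Real.exp ((L : ℝ) * (b / a - 1))) := by
        apply mul_le_mul_of_nonneg_left ?_ (Real.exp_pos _).le
        exact mul_le_mul_of_nonneg_left h1 (by positivity)
    _ ≤ Real.exp (-b) * (a ^ L * Real.exp (b - a)) := by
        apply mul_le_mul_of_nonneg_left ?_ (Real.exp_pos _).le
        exact mul_le_mul_of_nonneg_left (Real.exp_le_exp.mpr h2) (by positivity)
    _ = Real.exp (-a) * a ^ L := by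
        rw [mul_comm (a ^ L) (Real.exp (b - a)), ← mul_assoc, ← Real.exp_add]
        ring_nf


/-- Poisson sampling model with mean sample size `n` from a `k`-ball urn
`(urn i)_i` (`Σ urn i = k`), with `C` the number of distinct colors and histogram counts
`N_i ~ Poisson(n·urn i/k)` independent. With `L = α log k`, `M = β k log k / n` positive
integers (`β > α > 0`), coefficients `u_j = w_j · j! · (k/(nM))^j` for `1 ≤ j ≤ L` (else `0`),
estimator `C̃ = Σ_i g(N_i)` where `g(0)=0`, `g(j)=1+u_j`, and
`Ĉ = min(max(C̃, #{i : N_i ≥ 1}), k)`, one has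
`E[(Ĉ − C)²] ≤ k²·e^{−2n/k}·‖Bw − 𝟏‖_∞² + k·e^{−n/k}
  + k·max_{m∈[M]} E_{N~Poi(nm/k)}[u_N²] + k^{−(β − α log(eβ/α) − 3)}`. -/
theorem stmt10
    (k n : ℕ) (hk : 1 ≤ k) (hn : 1 ≤ n)
    (α β : ℝ) (hα : 0 < α) (hαβ : α < β)
    (L M : ℕ) (hL : 1 ≤ L) (hM : 1 ≤ M)
    (hLdef : (L : ℝ) = α * Real.log k)
    (hMdef : (M : ℝ) = β * k * Real.log k / n)
    (w : Fin L → ℝ) (u : ℕ → ℝ)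
    (hu : ∀ j : ℕ, u j = if h : 1 ≤ j ∧ j ≤ L
        then w ⟨j - 1, by omega⟩ * (j.factorial : ℝ) * ((k : ℝ) / (n * M)) ^ j
        else 0)
    (urn : Fin k → ℕ) (hurn : ∑ i, urn i = k)
    (C : ℕ) (hC : C = (Finset.univ.filter (fun i => 0 < urn i)).card)
    {Ω : Type*} [MeasurableSpace Ω] (μ : Measure Ω) [IsProbabilityMeasure μ]
    (N : Fin k → Ω → ℕ)
    (hmeas : ∀ i, Measurable (N i))
    (hindep : iIndepFun N μ)
    (hdist : ∀ i, μ.map (N i) = poissonMeasure ⟨(n : ℝ) * urn i / k, by positivity⟩)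
    (g : ℕ → ℝ) (hg0 : g 0 = 0) (hg : ∀ j, 1 ≤ j → g j = 1 + u j)
    (Ctilde : Ω → ℝ) (hCt : ∀ ω, Ctilde ω = ∑ i, g (N i ω))
    (Chat : Ω → ℝ)
    (hCh : ∀ ω, Chat ω
        = min (max (Ctilde ω) (∑ i, if 1 ≤ N i ω then (1 : ℝ) else 0)) k) :
    ∫ ω, (Chat ω - C) ^ 2 ∂μ
      ≤ (k : ℝ) ^ 2 * Real.exp (-(2 * n / k)) *
          (Finset.univ.sup' (Finset.univ_nonempty_iff.mpr ⟨⟨0, by omega⟩⟩)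
            (fun i : Fin M =>
              |(∑ j : Fin L, ((i.1 + 1 : ℝ) / M) ^ (j.1 + 1) * w j) - 1|)) ^ 2
        + k * Real.exp (-(n : ℝ) / k)
        + k * ((Finset.Icc 1 M).sup' (Finset.nonempty_Icc.mpr hM)
            (fun m : ℕ =>
              ∑' j : ℕ, poissonPMFReal ⟨(n : ℝ) * m / k, by positivity⟩ j * (u j) ^ 2))
        + (k : ℝ) ^ (-(β - α * Real.log (Real.exp 1 * β / α) - 3)) := by

  classical
  have hk0 : (0:ℝ) < k := by exact_mod_cast hk
  have hn0 : (0:ℝ) < n := by exact_mod_cast hn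
  have hM0 : (0:ℝ) < M := by exact_mod_cast hM
  have hL0 : (0:ℝ) < L := by exact_mod_cast hL
  have hL1 : (1:ℝ) ≤ L := by exact_mod_cast hL
  have hβ : 0 < β := hα.trans hαβ
  have hlogk : 0 < Real.log k := by
    rcases le_or_gt (Real.log k) 0 with h | h
    · nlinarith
    · exact h
  have hnMk : (n:ℝ) * M / k = β * Real.log k := by
    rw [hMdef]; field_simp
  have hClek : (C:ℝ) ≤ k := by
    rw [hC]
    have := Finset.card_filter_le (Finset.univ : Finset (Fin k)) (fun i => 0 < urn i)
    have h2 : (Finset.univ : Finset (Fin k)).card = k := by simp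
    exact_mod_cast h2 ▸ this
  have hC0 : (0:ℝ) ≤ C := Nat.cast_nonneg C
  -- coefficient facts
  have hu0 : u 0 = 0 := by rw [hu 0]; simp
  have hubig : ∀ j, L < j → u j = 0 := by
    intro j hj; rw [hu j]; rw [dif_neg]; omega
  set φ : ℕ → ℝ := fun j => g j - 1 with hφdef
  have hφ0 : φ 0 = -1 := by simp [hφdef, hg0]
  have hφpos : ∀ j, 1 ≤ j → φ j = u j := by
    intro j hj; simp [hφdef, hg j hj]
  have hφbig : ∀ j, L < j → φ j = 0 := by
    intro j hj; rw [hφpos j (by omega), hubig j hj]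
  -- color classes
  set S' : Finset (Fin k) := Finset.univ.filter (fun i => 0 < urn i ∧ urn i ≤ M) with hS'def
  set H : Finset (Fin k) := Finset.univ.filter (fun i => M < urn i) with hHdef
  have hS'card : S'.card ≤ k := by
    calc S'.card ≤ (Finset.univ : Finset (Fin k)).card := Finset.card_filter_le _ _
    _ = k := by simp
  have hHcard : H.card ≤ k := by
    calc H.card ≤ (Finset.univ : Finset (Fin k)).card := Finset.card_filter_le _ _
    _ = k := by simp
  -- rates
  have hdist' : ∀ i : Fin k, μ.map (N i)
      = poissonMeasure ⟨(n : ℝ) * urn i / k, by positivity⟩ := hdist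
  -- abbreviations matching the goal
  set ε : ℝ := Finset.univ.sup' (Finset.univ_nonempty_iff.mpr ⟨⟨0, by omega⟩⟩)
      (fun i : Fin M => |(∑ j : Fin L, ((i.1 + 1 : ℝ) / M) ^ (j.1 + 1) * w j) - 1|) with hεdef
  set V : ℝ := (Finset.Icc 1 M).sup' (Finset.nonempty_Icc.mpr hM)
      (fun m : ℕ => ∑' j : ℕ, poissonPMFReal ⟨(n : ℝ) * m / k, by positivity⟩ j * (u j) ^ 2)
      with hVdef
  have hε0 : 0 ≤ ε := by
    rw [hεdef]
    exact le_trans (abs_nonneg _)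
      (Finset.le_sup' (fun i : Fin M => |(∑ j : Fin L, ((i.1 + 1 : ℝ) / M) ^ (j.1 + 1) * w j) - 1|)
        (Finset.mem_univ (⟨0, by omega⟩ : Fin M)))
  have hεle : ∀ m : ℕ, 1 ≤ m → m ≤ M →
      |(∑ j : Fin L, ((m : ℝ) / M) ^ (j.1 + 1) * w j) - 1| ≤ ε := by
    intro m h1 h2
    rw [hεdef]
    have hmem : (⟨m - 1, by omega⟩ : Fin M) ∈ Finset.univ := Finset.mem_univ _
    have := Finset.le_sup'
      (fun i : Fin M => |(∑ j : Fin L, ((i.1 + 1 : ℝ) / M) ^ (j.1 + 1) * w j) - 1|) hmem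
    have hcast : ((⟨m - 1, by omega⟩ : Fin M).1 + 1 : ℝ) = (m : ℝ) := by
      show ((m - 1 : ℕ) : ℝ) + 1 = (m : ℝ)
      have : (m - 1 : ℕ) = m - 1 := rfl
      push_cast [Nat.cast_sub h1]
      ring
    rwa [hcast] at this
  have hVle : ∀ m : ℕ, 1 ≤ m → m ≤ M →
      (∑' j : ℕ, poissonPMFReal ⟨(n : ℝ) * m / k, by positivity⟩ j * (u j) ^ 2) ≤ V := by
    intro m h1 h2
    rw [hVdef]
    exact Finset.le_sup'
      (fun m : ℕ => ∑' j : ℕ, poissonPMFReal ⟨(n : ℝ) * m / k, by positivity⟩ j * (u j) ^ 2)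
      (Finset.mem_Icc.mpr ⟨h1, h2⟩)
  have hV0 : 0 ≤ V := by
    refine le_trans ?_ (hVle 1 le_rfl hM)
    exact tsum_nonneg fun j => mul_nonneg poissonPMFReal_nonneg (sq_nonneg _)
  -- the bad event
  set E2 : Set Ω := ⋃ i ∈ H, {ω | N i ω ≤ L} with hE2def
  have hE2m : MeasurableSet E2 := by
    apply MeasurableSet.biUnion H.countable_toSet
    intro i _
    exact (hmeas i) (MeasurableSet.of_discrete (s := {x : ℕ | x ≤ L}))
  set X : Ω → ℝ := fun ω => ∑ i ∈ S', φ (N i ω) with hXdef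
  -- almost sure zero for zero-urn colors
  have hae : ∀ᵐ ω ∂μ, ∀ i, urn i = 0 → N i ω = 0 := by
    rw [ae_all_iff]
    intro i
    by_cases h0 : urn i = 0
    · have hr0 : ((⟨(n : ℝ) * urn i / k, by positivity⟩ : ℝ≥0)) = 0 := by
        ext
        simp [h0]
      have hmap0 : μ (N i ⁻¹' {0}) = 1 := by
        have h1 : μ.map (N i) {0} = μ (N i ⁻¹' {0}) :=
          Measure.map_apply (hmeas i) (MeasurableSet.singleton 0)
        rw [← h1, hdist i, hr0]
        have := poissonMeasure_singleton 0 0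
        simp at this
        exact this
      have hcompl : μ ((N i ⁻¹' {0})ᶜ) = 0 := by
        rw [measure_compl ((hmeas i) (MeasurableSet.singleton 0)) (measure_ne_top μ _), hmap0]
        simp
      have : ∀ᵐ ω ∂μ, ω ∈ N i ⁻¹' {0} :=
        Filter.eventually_of_mem (compl_mem_ae_iff.mpr hcompl) (fun ω hω => by simpa using hω)
      exact this.mono fun ω hω _ => hω
    · exact Filter.Eventually.of_forall fun ω h => absurd h h0
  -- key pointwise bound
  have hCsum : (C:ℝ) = ∑ i, (if 0 < urn i then (1:ℝ) else 0) := by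
    rw [hC, Finset.card_filter]
    push_cast [apply_ite ((↑·) : ℕ → ℝ)]
    rfl
  have hkey : ∀ᵐ ω ∂μ, (Chat ω - C)^2 ≤ X ω^2 + E2.indicator (fun _ => (k:ℝ)^2) ω := by
    filter_upwards [hae] with ω hz
    by_cases hω : ω ∈ E2
    · rw [Set.indicator_of_mem hω]
      have h1 : 0 ≤ Chat ω := by
        rw [hCh]
        refine le_min (le_max_of_le_right ?_) (by positivity)
        exact Finset.sum_nonneg fun i _ => by split <;> norm_num
      have h2 : Chat ω ≤ k := by rw [hCh]; exact min_le_right _ _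
      have h3 : (Chat ω - C)^2 ≤ (k:ℝ)^2 := sq_le_sq' (by linarith) (by linarith)
      nlinarith [sq_nonneg (X ω)]
    · rw [Set.indicator_of_notMem hω, add_zero]
      have hgood : ∀ i ∈ H, L < N i ω := by
        intro i hi
        by_contra hcon
        exact hω (Set.mem_iUnion₂.mpr ⟨i, hi, by simpa using hcon⟩)
      have hCt' : Ctilde ω - C = X ω := by
        have hvan : ∀ i ∈ Finset.univ, i ∉ S' →
            g (N i ω) - (if 0 < urn i then (1:ℝ) else 0) = 0 := by
          intro i _ hnot
          rw [hS'def, Finset.mem_filter] at hnot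
          push_neg at hnot
          rcases Nat.eq_zero_or_pos (urn i) with h0 | hpos
          · rw [hz i h0, hg0, if_neg (by omega)]
            ring
          · have hMlt : M < urn i := by
              have := hnot (Finset.mem_univ i)
              omega
            have hN : L < N i ω := hgood i (by rw [hHdef]; simp [hMlt])
            rw [hg _ (by omega), hubig _ hN, if_pos hpos]
            ring
        have hsub := Finset.sum_subset (Finset.subset_univ S') hvan
        rw [hCt ω, hCsum, ← Finset.sum_sub_distrib, hXdef, ← hsub]
        apply Finset.sum_congr rfl
        intro i hi
        rw [hS'def, Finset.mem_filter] at hi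
        rw [if_pos hi.2.1]
      have hIleC : (∑ i, if 1 ≤ N i ω then (1:ℝ) else 0) ≤ C := by
        rw [hCsum]
        apply Finset.sum_le_sum
        intro i _
        by_cases h : 1 ≤ N i ω
        · rw [if_pos h, if_pos]
          by_contra h0
          have : urn i = 0 := by omega
          rw [hz i this] at h
          omega
        · rw [if_neg h]
          split <;> norm_num
      rw [hCh ω]
      have hcl := clamp_abs (Ctilde ω) (∑ i, if 1 ≤ N i ω then (1:ℝ) else 0) k (C:ℝ)
        hIleC hClek
      calc (min (max (Ctilde ω) (∑ i, if 1 ≤ N i ω then (1:ℝ) else 0)) k - C)^2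
          = |min (max (Ctilde ω) (∑ i, if 1 ≤ N i ω then (1:ℝ) else 0)) k - C|^2 :=
            (sq_abs _).symm
      _ ≤ |Ctilde ω - C|^2 := pow_le_pow_left₀ (abs_nonneg _) hcl 2
      _ = (Ctilde ω - C)^2 := sq_abs _
      _ = X ω ^ 2 := by rw [hCt']
  -- measurability and integrability
  have hφm : Measurable φ := measurable_from_nat
  have hXm : Measurable X := by
    apply Finset.measurable_sum
    intro i _
    exact hφm.comp (hmeas i)
  have hChatm : Measurable Chat := by
    have hCtm : Measurable Ctilde := by
      have : Ctilde = fun ω => ∑ i, g (N i ω) := funext hCt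
      rw [this]
      exact Finset.measurable_sum _ fun i _ => (measurable_from_nat (f := g)).comp (hmeas i)
    have : Chat = fun ω => min (max (Ctilde ω) (∑ i, if 1 ≤ N i ω then (1 : ℝ) else 0)) k :=
      funext hCh
    rw [this]
    apply Measurable.min ?_ measurable_const
    apply Measurable.max hCtm
    exact Finset.measurable_sum _ fun i _ =>
      (measurable_from_nat (f := fun m => if 1 ≤ m then (1:ℝ) else 0)).comp (hmeas i)
  set Du : ℝ := 1 + ∑ j ∈ Finset.range (L + 1), |u j| with hDudef
  have hDu0 : 0 ≤ Du := by
    rw [hDudef]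
    have : 0 ≤ ∑ j ∈ Finset.range (L + 1), |u j| := Finset.sum_nonneg fun j _ => abs_nonneg _
    linarith
  have hφb : ∀ j, |φ j| ≤ Du := by
    intro j
    rcases Nat.eq_zero_or_pos j with h | h
    · subst h
      rw [hφ0, hDudef]
      have : 0 ≤ ∑ j ∈ Finset.range (L + 1), |u j| := Finset.sum_nonneg fun j _ => abs_nonneg _
      rw [abs_neg, abs_one]; linarith
    · rw [hφpos j h]
      rcases le_or_gt j L with h2 | h2
      · rw [hDudef]
        have := Finset.single_le_sum (f := fun j => |u j|) (fun j _ => abs_nonneg _)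
          (Finset.mem_range.mpr (show j < L + 1 by omega))
        linarith
      · rw [hubig j h2]; simpa using hDu0
  have hXb : ∀ ω, |X ω| ≤ k * Du := by
    intro ω
    calc |X ω| ≤ ∑ i ∈ S', |φ (N i ω)| := Finset.abs_sum_le_sum_abs _ _
    _ ≤ ∑ _i ∈ S', Du := Finset.sum_le_sum fun i _ => hφb _
    _ = S'.card * Du := by rw [Finset.sum_const, nsmul_eq_mul]
    _ ≤ k * Du := by
        apply mul_le_mul_of_nonneg_right ?_ hDu0
        exact_mod_cast hS'card
  have hIL : Integrable (fun ω => (Chat ω - C)^2) μ := by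
    apply integrable_of_bound μ _ ((hChatm.sub measurable_const).pow_const 2) (((k:ℝ) + C)^2)
    intro ω
    have h1 : 0 ≤ Chat ω := by
      rw [hCh]
      refine le_min (le_max_of_le_right ?_) (by positivity)
      exact Finset.sum_nonneg fun i _ => by split <;> norm_num
    have h2 : Chat ω ≤ k := by rw [hCh]; exact min_le_right _ _
    rw [abs_of_nonneg (sq_nonneg _), ← sq_abs]
    apply pow_le_pow_left₀ (abs_nonneg _) ?_ 2
    simp only [abs_le, Pi.sub_apply]; constructor <;> linarith
  have hIX2 : Integrable (fun ω => X ω ^ 2) μ := by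
    apply integrable_of_bound μ _ (hXm.pow_const 2) ((k * Du)^2)
    intro ω
    rw [abs_of_nonneg (sq_nonneg _), ← sq_abs]
    exact pow_le_pow_left₀ (abs_nonneg _) (hXb ω) 2
  have hIind : Integrable (E2.indicator (fun _ => (k:ℝ)^2)) μ :=
    (integrable_const _).indicator hE2m
  -- the integral bound
  have hstep1 : ∫ ω, (Chat ω - C) ^ 2 ∂μ
      ≤ (∫ ω, X ω ^ 2 ∂μ) + (μ E2).toReal * (k:ℝ)^2 := by
    have := integral_mono_ae hIL (hIX2.add hIind) hkey
    simp only [Pi.add_apply] at this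
    rwa [integral_add hIX2 hIind, integral_indicator_const _ hE2m, smul_eq_mul] at this
  -- second moment bound
  have hsecond : ∫ ω, X ω ^ 2 ∂μ
      ≤ (k:ℝ)^2 * Real.exp (-(2 * n / k)) * ε^2 + k * (Real.exp (-(n:ℝ)/k) + V) := by
    have hmap : ∀ (i : Fin k) (f : ℕ → ℝ), (∀ j, L < j → f j = 0) →
        ∫ ω, f (N i ω) ∂μ
          = ∑ j ∈ Finset.range (L + 1),
              poissonPMFReal ⟨(n : ℝ) * urn i / k, by positivity⟩ j * f j := by
      intro i f hf
      have h1 : ∫ ω, f (N i ω) ∂μ = ∫ x, f x ∂(μ.map (N i)) :=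
        (integral_map (hmeas i).aemeasurable measurable_from_nat.aestronglyMeasurable).symm
      rw [h1, hdist i]; exact integral_poisson_fin _ f L hf
    set b : Fin k → ℝ := fun i => ∫ ω, φ (N i ω) ∂μ with hbdef
    set d : Fin k → ℝ := fun i => ∫ ω, φ (N i ω) ^ 2 ∂μ with hddef
    have hIprod : ∀ (i i' : Fin k), Integrable (fun ω => φ (N i ω) * φ (N i' ω)) μ := by
      intro i i'
      apply integrable_of_bound μ _ ((hφm.comp (hmeas i)).mul (hφm.comp (hmeas i'))) (Du * Du)
      intro ω
      rw [Pi.mul_apply, abs_mul]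
      exact mul_le_mul (hφb _) (hφb _) (abs_nonneg _) hDu0
    have hIphi : ∀ i : Fin k, Integrable (fun ω => φ (N i ω)) μ := fun i =>
      integrable_of_bound μ _ (hφm.comp (hmeas i)) Du (fun ω => hφb _)
    have hexp : ∫ ω, X ω ^ 2 ∂μ
        = ∑ i ∈ S', ∑ i' ∈ S', ∫ ω, φ (N i ω) * φ (N i' ω) ∂μ := by
      have h1 : (fun ω => X ω ^ 2)
          = fun ω => ∑ i ∈ S', ∑ i' ∈ S', φ (N i ω) * φ (N i' ω) := by
        funext ω
        rw [hXdef, sq, Finset.sum_mul_sum]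
      rw [h1, integral_finset_sum _ (fun i _ => integrable_finset_sum _ (fun i' _ => hIprod i i'))]
      exact Finset.sum_congr rfl fun i _ => integral_finset_sum _ (fun i' _ => hIprod i i')
    have hoffdiag : ∀ (i i' : Fin k), i ≠ i' →
        ∫ ω, φ (N i ω) * φ (N i' ω) ∂μ = b i * b i' := by
      intro i i' hne
      have hind : IndepFun (fun ω => φ (N i ω)) (fun ω => φ (N i' ω)) μ :=
        (hindep.indepFun hne).comp hφm hφm
      exact hind.integral_mul_eq_mul_integral (hIphi i).aestronglyMeasurable (hIphi i').aestronglyMeasurable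
    have hdiag : ∀ i : Fin k, ∫ ω, φ (N i ω) * φ (N i ω) ∂μ = d i := by
      intro i
      rw [hddef]
      congr 1
      funext ω
      rw [sq]
    -- closed forms
    have hbeq : ∀ i ∈ S', b i = Real.exp (-((n:ℝ) * urn i / k)) *
        ((∑ j : Fin L, ((urn i : ℝ) / M) ^ (j.1 + 1) * w j) - 1) := by
      intro i hi
      have hpmf0 : poissonPMFReal ⟨(n : ℝ) * urn i / k, by positivity⟩ 0
          = Real.exp (-((n:ℝ) * urn i / k)) := by
        unfold poissonPMFReal
        norm_num
        rfl
      have hterm : ∀ j : Fin L,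
          poissonPMFReal ⟨(n : ℝ) * urn i / k, by positivity⟩ (j.1 + 1) * φ (j.1 + 1)
            = Real.exp (-((n:ℝ) * urn i / k)) * (((urn i : ℝ) / M) ^ (j.1 + 1) * w j) := by
        intro j
        have hju : φ (j.1 + 1) = w j * ((j.1 + 1).factorial : ℝ) * ((k : ℝ) / (n * M)) ^ (j.1 + 1) := by
          rw [hφpos _ (by omega), hu (j.1 + 1), dif_pos ⟨by omega, by omega⟩]
          congr 2
        rw [hju]
        unfold poissonPMFReal
        have hfac : (((j.1 + 1).factorial : ℕ) : ℝ) ≠ 0 :=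
          Nat.cast_ne_zero.mpr (Nat.factorial_ne_zero _)
        have hbase : ((n:ℝ) * urn i / k) * ((k : ℝ) / (n * M)) = (urn i : ℝ) / M := by
          field_simp
        show Real.exp (-((n:ℝ) * urn i / k)) * ((n:ℝ) * urn i / k) ^ (j.1 + 1)
              / ((j.1 + 1).factorial : ℝ)
            * (w j * ((j.1 + 1).factorial : ℝ) * ((k : ℝ) / (n * M)) ^ (j.1 + 1)) = _
        rw [← hbase, mul_pow]
        field_simp
      rw [hbdef]
      show (∫ ω, φ (N i ω) ∂μ) = _
      rw [hmap i φ hφbig, Finset.sum_range_succ' (fun j =>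
        poissonPMFReal ⟨(n : ℝ) * urn i / k, by positivity⟩ j * φ j) L]
      rw [hφ0, hpmf0, Finset.sum_range fun j =>
        poissonPMFReal ⟨(n : ℝ) * urn i / k, by positivity⟩ (j + 1) * φ (j + 1)]
      rw [Finset.sum_congr rfl (fun j _ => hterm j), ← Finset.mul_sum]
      ring
    have hdeq : ∀ i ∈ S', d i = Real.exp (-((n:ℝ) * urn i / k)) +
        ∑' j : ℕ, poissonPMFReal ⟨(n : ℝ) * urn i / k, by positivity⟩ j * (u j) ^ 2 := by
      intro i hi
      have hpmf0 : poissonPMFReal ⟨(n : ℝ) * urn i / k, by positivity⟩ 0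
          = Real.exp (-((n:ℝ) * urn i / k)) := by
        unfold poissonPMFReal
        norm_num
        rfl
      have h1 : d i = ∑ j ∈ Finset.range (L + 1),
          poissonPMFReal ⟨(n : ℝ) * urn i / k, by positivity⟩ j * φ j ^ 2 :=
        hmap i (fun j => φ j ^ 2) (fun j hj => by show φ j ^ 2 = 0; rw [hφbig j hj]; ring)
      have h2 : (∑' j : ℕ, poissonPMFReal ⟨(n : ℝ) * urn i / k, by positivity⟩ j * (u j) ^ 2)
          = ∑ j ∈ Finset.range (L + 1),
              poissonPMFReal ⟨(n : ℝ) * urn i / k, by positivity⟩ j * (u j) ^ 2 := by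
        apply tsum_eq_sum
        intro j hj
        rw [hubig j (by simpa using hj)]
        ring
      rw [h1, h2]
      rw [Finset.sum_range_succ' (fun j =>
          poissonPMFReal ⟨(n : ℝ) * urn i / k, by positivity⟩ j * φ j ^ 2) L,
        Finset.sum_range_succ' (fun j =>
          poissonPMFReal ⟨(n : ℝ) * urn i / k, by positivity⟩ j * (u j) ^ 2) L]
      rw [hφ0, hu0, hpmf0]
      rw [Finset.sum_congr rfl (fun j (_ : j ∈ Finset.range L) => by
        rw [hφpos (j + 1) (by omega)] :
        ∀ j ∈ Finset.range L,
          poissonPMFReal ⟨(n : ℝ) * urn i / k, by positivity⟩ (j + 1) * φ (j + 1) ^ 2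
          = poissonPMFReal ⟨(n : ℝ) * urn i / k, by positivity⟩ (j + 1) * u (j + 1) ^ 2)]
      ring
    -- per-color bounds
    have hrr_ge : ∀ i ∈ S', (n:ℝ) / k ≤ (n:ℝ) * urn i / k := by
      intro i hi
      rw [hS'def, Finset.mem_filter] at hi
      have h1 : (1:ℝ) ≤ urn i := by exact_mod_cast hi.2.1
      gcongr
      nlinarith
    have hb_bound : ∀ i ∈ S', |b i| ≤ Real.exp (-(n:ℝ)/k) * ε := by
      intro i hi
      have hi' := hi
      rw [hS'def, Finset.mem_filter] at hi'
      rw [hbeq i hi, abs_mul, Real.abs_exp]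
      apply mul_le_mul ?_ (hεle (urn i) hi'.2.1 hi'.2.2) (abs_nonneg _) (Real.exp_pos _).le
      apply Real.exp_le_exp.mpr
      rw [neg_div]
      have := hrr_ge i hi
      linarith
    have hd_bound : ∀ i ∈ S', d i ≤ Real.exp (-(n:ℝ)/k) + V := by
      intro i hi
      have hi' := hi
      rw [hS'def, Finset.mem_filter] at hi'
      rw [hdeq i hi]
      apply add_le_add
      · apply Real.exp_le_exp.mpr
        rw [neg_div]
        have := hrr_ge i hi
        linarith
      · exact hVle (urn i) hi'.2.1 hi'.2.2
    -- combine
    have hinner : ∀ i ∈ S', (∑ i' ∈ S', ∫ ω, φ (N i ω) * φ (N i' ω) ∂μ)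
        = (∑ i' ∈ S', b i * b i') + (d i - b i * b i) := by
      intro i hi
      rw [← Finset.add_sum_erase _ _ hi, ← Finset.add_sum_erase _ (fun i' => b i * b i') hi]
      rw [hdiag i]
      have : ∑ i' ∈ S'.erase i, ∫ ω, φ (N i ω) * φ (N i' ω) ∂μ
          = ∑ i' ∈ S'.erase i, b i * b i' := by
        apply Finset.sum_congr rfl
        intro i' hi'
        exact hoffdiag i i' (Ne.symm (Finset.ne_of_mem_erase hi'))
      rw [this]
      ring
    have hsum_b : ∑ i ∈ S', |b i| ≤ (k:ℝ) * (Real.exp (-(n:ℝ)/k) * ε) := by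
      calc ∑ i ∈ S', |b i| ≤ ∑ _i ∈ S', Real.exp (-(n:ℝ)/k) * ε :=
            Finset.sum_le_sum hb_bound
      _ = S'.card * (Real.exp (-(n:ℝ)/k) * ε) := by rw [Finset.sum_const, nsmul_eq_mul]
      _ ≤ (k:ℝ) * (Real.exp (-(n:ℝ)/k) * ε) := by
          apply mul_le_mul_of_nonneg_right ?_ (by positivity)
          exact_mod_cast hS'card
    have hsum_d : ∑ i ∈ S', d i ≤ (k:ℝ) * (Real.exp (-(n:ℝ)/k) + V) := by
      calc ∑ i ∈ S', d i ≤ ∑ _i ∈ S', (Real.exp (-(n:ℝ)/k) + V) :=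
            Finset.sum_le_sum hd_bound
      _ = S'.card * (Real.exp (-(n:ℝ)/k) + V) := by rw [Finset.sum_const, nsmul_eq_mul]
      _ ≤ (k:ℝ) * (Real.exp (-(n:ℝ)/k) + V) := by
          apply mul_le_mul_of_nonneg_right ?_ (by positivity)
          exact_mod_cast hS'card
    calc ∫ ω, X ω ^ 2 ∂μ
        = ∑ i ∈ S', ∑ i' ∈ S', ∫ ω, φ (N i ω) * φ (N i' ω) ∂μ := hexp
    _ = ∑ i ∈ S', ((∑ i' ∈ S', b i * b i') + (d i - b i * b i)) :=
        Finset.sum_congr rfl hinner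
    _ = (∑ i ∈ S', b i) * (∑ i' ∈ S', b i') + ∑ i ∈ S', (d i - b i * b i) := by
        rw [Finset.sum_mul_sum, Finset.sum_add_distrib]
    _ ≤ (∑ i ∈ S', |b i|) * (∑ i' ∈ S', |b i'|) + ∑ i ∈ S', d i := by
        apply add_le_add
        · calc (∑ i ∈ S', b i) * (∑ i' ∈ S', b i') ≤ |(∑ i ∈ S', b i) * (∑ i' ∈ S', b i')| :=
              le_abs_self _
          _ = |∑ i ∈ S', b i| * |∑ i' ∈ S', b i'| := abs_mul _ _
          _ ≤ (∑ i ∈ S', |b i|) * (∑ i' ∈ S', |b i'|) := by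
              apply mul_le_mul (Finset.abs_sum_le_sum_abs _ _) (Finset.abs_sum_le_sum_abs _ _)
                (abs_nonneg _) (Finset.sum_nonneg fun i _ => abs_nonneg _)
        · apply Finset.sum_le_sum
          intro i _
          nlinarith [sq_nonneg (b i)]
    _ ≤ ((k:ℝ) * (Real.exp (-(n:ℝ)/k) * ε)) * ((k:ℝ) * (Real.exp (-(n:ℝ)/k) * ε))
          + (k:ℝ) * (Real.exp (-(n:ℝ)/k) + V) := by
        apply add_le_add ?_ hsum_d
        apply mul_le_mul hsum_b hsum_b (Finset.sum_nonneg fun i _ => abs_nonneg _) (by positivity)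
    _ = (k:ℝ)^2 * Real.exp (-(2 * n / k)) * ε^2 + k * (Real.exp (-(n:ℝ)/k) + V) := by
        have hee : Real.exp (-(n:ℝ)/k) * Real.exp (-(n:ℝ)/k) = Real.exp (-(2 * (n:ℝ) / k)) := by
          rw [← Real.exp_add]
          congr 1
          ring
        calc ((k:ℝ) * (Real.exp (-(n:ℝ)/k) * ε)) * ((k:ℝ) * (Real.exp (-(n:ℝ)/k) * ε))
              + (k:ℝ) * (Real.exp (-(n:ℝ)/k) + V)
            = (k:ℝ)^2 * (Real.exp (-(n:ℝ)/k) * Real.exp (-(n:ℝ)/k)) * ε^2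
              + k * (Real.exp (-(n:ℝ)/k) + V) := by ring
        _ = _ := by rw [hee]
  -- tail bound
  have htail : (μ E2).toReal * (k:ℝ)^2
      ≤ (k : ℝ) ^ (-(β - α * Real.log (Real.exp 1 * β / α) - 3)) := by
    set lam0 : ℝ := β * Real.log k with hlam0def
    have hlam0pos : 0 < lam0 := by rw [hlam0def]; positivity
    have hLlam0 : (L:ℝ) ≤ lam0 := by
      rw [hLdef, hlam0def]
      nlinarith
    set Bd : ℝ := Real.exp (-lam0) * lam0 ^ L * (Real.exp 1 / L) ^ L with hBddef
    have hBd0 : 0 ≤ Bd := by rw [hBddef]; positivity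
    have hper : ∀ i ∈ H, μ {ω | N i ω ≤ L} ≤ ENNReal.ofReal Bd := by
      intro i hi
      rw [hHdef, Finset.mem_filter] at hi
      have hMlt : M < urn i := hi.2
      have hlam0rr : lam0 ≤ (n:ℝ) * urn i / k := by
        rw [← hnMk]
        have hMu : (M:ℝ) ≤ (urn i : ℝ) := by exact_mod_cast hMlt.le
        gcongr
      have hset : {ω | N i ω ≤ L} = N i ⁻¹' ↑(Finset.range (L+1)) := by
        ext ω
        simp [Nat.lt_succ_iff]
      have h1 : μ {ω | N i ω ≤ L}
          = (poissonMeasure ⟨(n : ℝ) * urn i / k, by positivity⟩) ↑(Finset.range (L+1)) := by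
        rw [hset, ← Measure.map_apply (hmeas i) (MeasurableSet.of_discrete), hdist i]
      rw [h1]
      rw [← MeasureTheory.sum_measure_singleton]
      have h0 : ∀ j, (poissonMeasure ⟨(n : ℝ) * urn i / k, by positivity⟩) {j}
          = poissonPMF ⟨(n : ℝ) * urn i / k, by positivity⟩ j := fun j => by
        exact (poissonMeasure_singleton _ _).trans rfl
      simp_rw [h0]
      have h2 : ∑ j ∈ Finset.range (L+1), poissonPMF ⟨(n : ℝ) * urn i / k, by positivity⟩ j
          = ENNReal.ofReal (∑ j ∈ Finset.range (L+1),
              poissonPMFReal ⟨(n : ℝ) * urn i / k, by positivity⟩ j) := by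
        exact (ENNReal.ofReal_sum_of_nonneg (fun j _ => poissonPMFReal_nonneg)).symm
      rw [h2]
      apply ENNReal.ofReal_le_ofReal
      have hcoe : (((⟨(n : ℝ) * urn i / k, by positivity⟩ : ℝ≥0)) : ℝ) = (n:ℝ) * urn i / k := rfl
      calc ∑ j ∈ Finset.range (L+1), poissonPMFReal ⟨(n : ℝ) * urn i / k, by positivity⟩ j
          ≤ Real.exp (-((n:ℝ) * urn i / k)) * ((n:ℝ) * urn i / k) ^ L * (Real.exp 1 / L) ^ L := by
            exact poisson_chernoff ⟨(n : ℝ) * urn i / k, by positivity⟩ L hL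
              (le_trans hLlam0 hlam0rr)
      _ ≤ Bd := by
          rw [hBddef]
          exact mul_le_mul_of_nonneg_right (exp_pow_anti L hLlam0 hlam0rr) (by positivity)
    have hE2le : μ E2 ≤ (k : ℝ≥0∞) * ENNReal.ofReal Bd := by
      calc μ E2 ≤ ∑ i ∈ H, μ {ω | N i ω ≤ L} := by
            rw [hE2def]
            exact measure_biUnion_finset_le _ _
      _ ≤ ∑ _i ∈ H, ENNReal.ofReal Bd := Finset.sum_le_sum hper
      _ = (H.card : ℝ≥0∞) * ENNReal.ofReal Bd := by rw [Finset.sum_const, nsmul_eq_mul]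
      _ ≤ (k : ℝ≥0∞) * ENNReal.ofReal Bd := by
          apply mul_le_mul_left ?_ _
          exact_mod_cast hHcard
    have htoReal : (μ E2).toReal ≤ (k:ℝ) * Bd := by
      have hne : ((k : ℝ≥0∞) * ENNReal.ofReal Bd) ≠ ⊤ :=
        ENNReal.mul_ne_top (by simp) ENNReal.ofReal_ne_top
      calc (μ E2).toReal ≤ ((k : ℝ≥0∞) * ENNReal.ofReal Bd).toReal :=
            ENNReal.toReal_mono hne hE2le
      _ = (k:ℝ) * Bd := by
          rw [ENNReal.toReal_mul, ENNReal.toReal_ofReal hBd0]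
          simp
    have hα' : α ≠ 0 := ne_of_gt hα
    have hlogk' : Real.log k ≠ 0 := ne_of_gt hlogk
    have hfinal : (k:ℝ) * Bd * (k:ℝ)^2
        = (k : ℝ) ^ (-(β - α * Real.log (Real.exp 1 * β / α) - 3)) := by
      rw [Real.rpow_def_of_pos hk0]
      have he1 : Real.exp (Real.log k * (-(β - α * Real.log (Real.exp 1 * β / α) - 3)))
          = Real.exp (3 * Real.log k) * Real.exp (-(β * Real.log k))
            * Real.exp ((α * Real.log k) * Real.log (Real.exp 1 * β / α)) := by
        rw [← Real.exp_add, ← Real.exp_add]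
        congr 1
        ring
      rw [he1]
      have h3 : Real.exp (3 * Real.log k) = (k:ℝ)^3 := by
        rw [show (3:ℝ) * Real.log k = Real.log k + (Real.log k + Real.log k) by ring,
          Real.exp_add, Real.exp_add, Real.exp_log hk0]
        ring
      have h4 : Real.exp ((α * Real.log k) * Real.log (Real.exp 1 * β / α))
          = (Real.exp 1 * β / α) ^ L := by
        rw [← hLdef, Real.exp_nat_mul, Real.exp_log (by positivity)]
      have h5 : lam0 ^ L * (Real.exp 1 / (L:ℝ)) ^ L = (Real.exp 1 * β / α) ^ L := by
        rw [← mul_pow]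
        congr 1
        rw [hlam0def, hLdef]
        field_simp
      rw [h3, h4, hBddef]
      calc (k:ℝ) * (Real.exp (-lam0) * lam0 ^ L * (Real.exp 1 / L) ^ L) * (k:ℝ)^2
          = (k:ℝ)^3 * Real.exp (-lam0) * (lam0 ^ L * (Real.exp 1 / (L:ℝ)) ^ L) := by ring
      _ = (k:ℝ)^3 * Real.exp (-(β * Real.log k)) * (Real.exp 1 * β / α) ^ L := by
          rw [h5, hlam0def]
      _ = _ := by ring
    calc (μ E2).toReal * (k:ℝ)^2 ≤ ((k:ℝ) * Bd) * (k:ℝ)^2 :=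
        mul_le_mul_of_nonneg_right htoReal (by positivity)
    _ = _ := hfinal
  calc ∫ ω, (Chat ω - C) ^ 2 ∂μ
      ≤ (∫ ω, X ω ^ 2 ∂μ) + (μ E2).toReal * (k:ℝ)^2 := hstep1
  _ ≤ ((k:ℝ)^2 * Real.exp (-(2 * n / k)) * ε^2 + k * (Real.exp (-(n:ℝ)/k) + V))
        + (k : ℝ) ^ (-(β - α * Real.log (Real.exp 1 * β / α) - 3)) :=
      add_le_add hsecond htail
  _ = (k : ℝ) ^ 2 * Real.exp (-(2 * n / k)) * ε ^ 2
        + k * Real.exp (-(n : ℝ) / k) + k * V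
        + (k : ℝ) ^ (-(β - α * Real.log (Real.exp 1 * β / α) - 3)) := by ring
end
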